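/- arXiv:2205.05315 — 7 statements merged into one kernel-verified Lean document; each statement's English description precedes it below -/
import Mathlib

section
/- Let X ⊆ ℝ be compact and let μ, ν be Borel probability measures on X with quantile functions F_μ^{-1} and F_ν^{-1} (defined with infimum over X). Then the Wasserstein-1 distance between μ and ν equals the L¹ distance between the quantile functions: W₁(μ, ν) = ∫₀¹ |F_μ^{-1}(t) − F_ν^{-1}(t)| dt. -/
open MeasureTheory Set ProbabilityTheory Filter
open scoped ENNReal

lemma meas_inter_Iic (X : Set ℝ) (μ : Measure ℝ) (hμ : μ Xᶜ = 0) (z : ℝ) :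
    μ (X ∩ Iic z) = μ (Iic z) := by
  refine le_antisymm (measure_mono inter_subset_right) ?_
  calc μ (Iic z) ≤ μ (X ∩ Iic z ∪ Xᶜ) := by
        refine measure_mono fun x hx => ?_
        by_cases h : x ∈ X
        · exact Or.inl ⟨h, hx⟩
        · exact Or.inr h
    _ ≤ μ (X ∩ Iic z) + μ Xᶜ := measure_union_le _ _
    _ = μ (X ∩ Iic z) := by rw [hμ, add_zero]

lemma F_eq_cdf (X : Set ℝ) (μ : Measure ℝ) [IsProbabilityMeasure μ] (hμ : μ Xᶜ = 0) (z : ℝ) :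
    (μ (X ∩ Iic z)).toReal = cdf μ z := by
  rw [meas_inter_Iic X μ hμ, cdf_eq_real, measureReal_def]

lemma quantile_spec (X : Set ℝ) (hX : IsCompact X) (hXne : X.Nonempty)
    (μ : Measure ℝ) [IsProbabilityMeasure μ] (hμ : μ Xᶜ = 0)
    {t : ℝ} (ht : t ∈ Ioc (0:ℝ) 1) :
    sInf {x | x ∈ X ∧ t ≤ (μ (X ∩ Iic x)).toReal} ∈
      {x | x ∈ X ∧ t ≤ (μ (X ∩ Iic x)).toReal} ∧
    ∀ z, sInf {x | x ∈ X ∧ t ≤ (μ (X ∩ Iic x)).toReal} ≤ z ↔ t ≤ (μ (X ∩ Iic z)).toReal := by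
  set S := {x | x ∈ X ∧ t ≤ (μ (X ∩ Iic x)).toReal} with hS
  have hSX : S ⊆ X := fun x hx => hx.1
  have hbdd : BddBelow S := hX.bddBelow.mono hSX
  have hμX : μ X = 1 := (prob_compl_eq_zero_iff hX.isClosed.measurableSet).mp hμ
  have hSne : S.Nonempty := by
    refine ⟨sSup X, hX.sSup_mem hXne, ?_⟩
    have hXb : X ∩ Iic (sSup X) = X := by
      apply inter_eq_left.mpr
      exact fun x hx => le_csSup hX.bddAbove hx
    rw [hXb, hμX]
    simpa using ht.2
  set m := sInf S with hm
  have hmX : m ∈ X := by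
    have := csInf_mem_closure hSne hbdd
    rw [← hX.isClosed.closure_eq]
    exact closure_mono hSX this
  have hmono : Monotone fun z => (μ (X ∩ Iic z)).toReal := by
    intro x y hxy
    simp only [F_eq_cdf X μ hμ]
    exact (cdf μ).mono hxy
  have htm : t ≤ (μ (X ∩ Iic m)).toReal := by
    rw [F_eq_cdf X μ hμ]
    have hcont : Tendsto (fun z => cdf μ z) (nhdsWithin m (Ioi m)) (nhds (cdf μ m)) :=
      ((cdf μ).right_continuous m).mono (Ioi_subset_Ici_self (a := m))
    refine ge_of_tendsto hcont ?_
    filter_upwards [eventually_mem_nhdsWithin] with y (hy : y ∈ Ioi m)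
    obtain ⟨x, hxS, hxy⟩ := exists_lt_of_csInf_lt hSne hy
    calc t ≤ (μ (X ∩ Iic x)).toReal := hxS.2
      _ = cdf μ x := F_eq_cdf X μ hμ x
      _ ≤ cdf μ y := (cdf μ).mono hxy.le
  refine ⟨⟨hmX, htm⟩, fun z => ⟨fun hz => le_trans htm (hmono hz), fun hz => ?_⟩⟩
  have hKne : (X ∩ Iic z).Nonempty := by
    by_contra h
    rw [not_nonempty_iff_eq_empty] at h
    rw [h] at hz
    simp at hz
    exact absurd (lt_of_lt_of_le ht.1 hz) (lt_irrefl 0)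
  have hK : IsCompact (X ∩ Iic z) := hX.inter_right isClosed_Iic
  set y := sSup (X ∩ Iic z) with hy
  have hyK : y ∈ X ∩ Iic z := hK.sSup_mem hKne
  have hsub : X ∩ Iic z ⊆ X ∩ Iic y := fun x hx =>
    ⟨hx.1, le_csSup hK.bddAbove hx⟩
  have : t ≤ (μ (X ∩ Iic y)).toReal :=
    le_trans hz (ENNReal.toReal_mono (measure_ne_top μ _) (measure_mono hsub))
  exact le_trans (csInf_le hbdd ⟨hyK.1, this⟩) hyK.2

lemma quantile_setX (X : Set ℝ) (μ : Measure ℝ) {t : ℝ} (ht : t ≤ 0) :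
    {x | x ∈ X ∧ t ≤ (μ (X ∩ Iic x)).toReal} = X := by
  ext x
  simp only [mem_setOf_eq, and_iff_left_iff_imp]
  exact fun _ => le_trans ht ENNReal.toReal_nonneg

lemma quantile_monoOn (X : Set ℝ) (hX : IsCompact X) (hXne : X.Nonempty)
    (μ : Measure ℝ) [IsProbabilityMeasure μ] (hμ : μ Xᶜ = 0)
    (Q : ℝ → ℝ) (hQ : ∀ t, Q t = sInf {x | x ∈ X ∧ t ≤ (μ (X ∩ Iic x)).toReal}) :
    MonotoneOn Q (Iic 1) := by
  intro t _ s hs hts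
  rw [hQ t, hQ s]
  have hsub : {x | x ∈ X ∧ s ≤ (μ (X ∩ Iic x)).toReal} ⊆
      {x | x ∈ X ∧ t ≤ (μ (X ∩ Iic x)).toReal} := fun x hx => ⟨hx.1, le_trans hts hx.2⟩
  have hne : {x | x ∈ X ∧ s ≤ (μ (X ∩ Iic x)).toReal}.Nonempty := by
    rcases le_or_gt s 0 with h0 | h0
    · rw [quantile_setX X μ h0]; exact hXne
    · exact ⟨_, (quantile_spec X hX hXne μ hμ ⟨h0, hs⟩).1⟩
  exact csInf_le_csInf (hX.bddBelow.mono fun x hx => hx.1) hne hsub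

lemma quantile_monotone (X : Set ℝ) (hX : IsCompact X) (hXne : X.Nonempty)
    (μ : Measure ℝ) [IsProbabilityMeasure μ] (hμ : μ Xᶜ = 0)
    (Q : ℝ → ℝ) (hQ : ∀ t, Q t = sInf {x | x ∈ X ∧ t ≤ (μ (X ∩ Iic x)).toReal}) :
    Monotone fun t => Q (min t 1) := by
  intro a b hab
  exact quantile_monoOn X hX hXne μ hμ Q hQ (min_le_right a 1) (min_le_right b 1)
    (min_le_min hab le_rfl)

lemma quantile_map (X : Set ℝ) (hX : IsCompact X) (hXne : X.Nonempty)
    (μ : Measure ℝ) [IsProbabilityMeasure μ] (hμ : μ Xᶜ = 0)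
    (Q : ℝ → ℝ) (hQ : ∀ t, Q t = sInf {x | x ∈ X ∧ t ≤ (μ (X ∩ Iic x)).toReal}) :
    Measure.map (fun t => Q (min t 1)) (volume.restrict (Ioc (0:ℝ) 1)) = μ := by
  have hg : Measurable fun t => Q (min t 1) :=
    (quantile_monotone X hX hXne μ hμ Q hQ).measurable
  refine Measure.ext_of_Iic _ μ fun a => ?_
  rw [Measure.map_apply hg measurableSet_Iic,
    Measure.restrict_apply (hg measurableSet_Iic)]
  have hF0 : 0 ≤ (μ (X ∩ Iic a)).toReal := ENNReal.toReal_nonneg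
  have hF1 : (μ (X ∩ Iic a)).toReal ≤ 1 := by
    have := measure_mono (subset_univ (X ∩ Iic a)) (μ := μ)
    calc (μ (X ∩ Iic a)).toReal ≤ (μ univ).toReal :=
        ENNReal.toReal_mono (measure_ne_top μ _) this
      _ = 1 := by simp
  have hset : (fun t => Q (min t 1)) ⁻¹' Iic a ∩ Ioc 0 1 = Ioc 0 ((μ (X ∩ Iic a)).toReal) := by
    ext t
    simp only [mem_inter_iff, mem_preimage, mem_Iic, mem_Ioc]
    constructor
    · rintro ⟨hQt, ht0, ht1⟩
      rw [min_eq_left ht1] at hQt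
      refine ⟨ht0, ?_⟩
      rw [hQ t] at hQt
      exact ((quantile_spec X hX hXne μ hμ ⟨ht0, ht1⟩).2 a).mp hQt
    · rintro ⟨ht0, htF⟩
      have ht1 : t ≤ 1 := le_trans htF hF1
      refine ⟨?_, ht0, ht1⟩
      rw [min_eq_left ht1, hQ t]
      exact ((quantile_spec X hX hXne μ hμ ⟨ht0, ht1⟩).2 a).mpr htF
  rw [hset, Real.volume_Ioc, sub_zero, ← meas_inter_Iic X μ hμ a,
    ENNReal.ofReal_toReal (measure_ne_top μ _)]

lemma xor_le_left (a b : ℝ) : {t : ℝ | ¬(t ≤ a ↔ t ≤ b)} = Ioc (min a b) (max a b) := by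
  have key : ∀ a b : ℝ, a ≤ b → {t : ℝ | ¬(t ≤ a ↔ t ≤ b)} = Ioc a b := by
    intro a b hab
    ext t
    simp only [mem_setOf_eq, mem_Ioc]
    constructor
    · intro h
      have hq : t ≤ b := by
        by_contra hq
        exact h ⟨fun hp => absurd (hp.trans hab) hq, fun hqq => absurd hqq hq⟩
      have hp : ¬ t ≤ a := fun hp => h ⟨fun _ => hp.trans hab, fun _ => hp⟩
      exact ⟨not_le.mp hp, hq⟩
    · rintro ⟨h1, h2⟩ hiff
      exact absurd (hiff.mpr h2) (not_le.mpr h1)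
  rcases le_total a b with h | h
  · rw [min_eq_left h, max_eq_right h]; exact key a b h
  · rw [min_eq_right h, max_eq_left h]
    rw [← key b a h]
    ext t
    simp only [mem_setOf_eq]
    exact ⟨fun hh hiff => hh hiff.symm, fun hh hiff => hh hiff.symm⟩

lemma xor_le_right (a b : ℝ) : {z : ℝ | ¬(a ≤ z ↔ b ≤ z)} = Ico (min a b) (max a b) := by
  have key : ∀ a b : ℝ, a ≤ b → {z : ℝ | ¬(a ≤ z ↔ b ≤ z)} = Ico a b := by
    intro a b hab
    ext z
    simp only [mem_setOf_eq, mem_Ico]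
    constructor
    · intro h
      have hq : a ≤ z := by
        by_contra hq
        exact h ⟨fun hp => absurd hp hq, fun hp => absurd (hab.trans hp) hq⟩
      have hp : ¬ b ≤ z := fun hp => h ⟨fun _ => hp, fun _ => hab.trans hp⟩
      exact ⟨hq, not_le.mp hp⟩
    · rintro ⟨h1, h2⟩ hiff
      exact absurd (hiff.mp h1) (not_le.mpr h2)
  rcases le_total a b with h | h
  · rw [min_eq_left h, max_eq_right h]; exact key a b h
  · rw [min_eq_right h, max_eq_left h]
    rw [← key b a h]
    ext z
    simp only [mem_setOf_eq]
    exact ⟨fun hh hiff => hh hiff.symm, fun hh hiff => hh hiff.symm⟩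

lemma area_swap (X : Set ℝ) (hX : IsCompact X) (hXne : X.Nonempty)
    (μ ν : Measure ℝ) [IsProbabilityMeasure μ] [IsProbabilityMeasure ν]
    (hμ : μ Xᶜ = 0) (hν : ν Xᶜ = 0)
    (Qμ Qν : ℝ → ℝ)
    (hQμ : ∀ t, Qμ t = sInf {x | x ∈ X ∧ t ≤ (μ (X ∩ Iic x)).toReal})
    (hQν : ∀ t, Qν t = sInf {x | x ∈ X ∧ t ≤ (ν (X ∩ Iic x)).toReal}) :
    ∫⁻ z, ENNReal.ofReal |(μ (X ∩ Iic z)).toReal - (ν (X ∩ Iic z)).toReal| =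
      ∫⁻ t in Ioc (0:ℝ) 1, ENNReal.ofReal |Qμ t - Qν t| := by
  have hFμm : Monotone fun z => (μ (X ∩ Iic z)).toReal := by
    intro x y hxy
    simp only [F_eq_cdf X μ hμ]
    exact (cdf μ).mono hxy
  have hFνm : Monotone fun z => (ν (X ∩ Iic z)).toReal := by
    intro x y hxy
    simp only [F_eq_cdf X ν hν]
    exact (cdf ν).mono hxy
  have hF0 : ∀ z, 0 ≤ (μ (X ∩ Iic z)).toReal := fun z => ENNReal.toReal_nonneg
  have hF1 : ∀ z, (μ (X ∩ Iic z)).toReal ≤ 1 := by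
    intro z
    calc (μ (X ∩ Iic z)).toReal ≤ (μ univ).toReal :=
        ENNReal.toReal_mono (measure_ne_top μ _) (measure_mono (subset_univ _))
      _ = 1 := by simp
  have hG0 : ∀ z, 0 ≤ (ν (X ∩ Iic z)).toReal := fun z => ENNReal.toReal_nonneg
  have hG1 : ∀ z, (ν (X ∩ Iic z)).toReal ≤ 1 := by
    intro z
    calc (ν (X ∩ Iic z)).toReal ≤ (ν univ).toReal :=
        ENNReal.toReal_mono (measure_ne_top ν _) (measure_mono (subset_univ _))
      _ = 1 := by simp
  set E : Set (ℝ × ℝ) :=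
    {q | q.2 ∈ Ioc (0:ℝ) 1 ∧ ¬(q.2 ≤ (μ (X ∩ Iic q.1)).toReal ↔ q.2 ≤ (ν (X ∩ Iic q.1)).toReal)}
    with hEdef
  have hA : MeasurableSet {q : ℝ × ℝ | q.2 ≤ (μ (X ∩ Iic q.1)).toReal} :=
    measurableSet_le measurable_snd (hFμm.measurable.comp measurable_fst)
  have hB : MeasurableSet {q : ℝ × ℝ | q.2 ≤ (ν (X ∩ Iic q.1)).toReal} :=
    measurableSet_le measurable_snd (hFνm.measurable.comp measurable_fst)
  have hEmeas : MeasurableSet E := by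
    have : E = (univ ×ˢ Ioc (0:ℝ) 1) ∩
        (({q : ℝ × ℝ | q.2 ≤ (μ (X ∩ Iic q.1)).toReal} ∩
          {q : ℝ × ℝ | q.2 ≤ (ν (X ∩ Iic q.1)).toReal}ᶜ) ∪
         ({q : ℝ × ℝ | q.2 ≤ (ν (X ∩ Iic q.1)).toReal} ∩
          {q : ℝ × ℝ | q.2 ≤ (μ (X ∩ Iic q.1)).toReal}ᶜ)) := by
      ext q
      simp only [hEdef, mem_setOf_eq, mem_inter_iff, mem_union, mem_compl_iff, mem_prod,
        mem_univ, true_and]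
      tauto
    rw [this]
    exact (MeasurableSet.univ.prod measurableSet_Ioc).inter
      ((hA.inter hB.compl).union (hB.inter hA.compl))
  have hswap : ∫⁻ z, ∫⁻ t, E.indicator 1 (z, t) = ∫⁻ t, ∫⁻ z, E.indicator 1 (z, t) := by
    exact lintegral_lintegral_swap ((measurable_one.indicator hEmeas).aemeasurable)
  have hLHS : ∀ z : ℝ, ∫⁻ t, E.indicator 1 (z, t) =
      ENNReal.ofReal |(μ (X ∩ Iic z)).toReal - (ν (X ∩ Iic z)).toReal| := by
    intro z
    have hsub : Ioc (min ((μ (X ∩ Iic z)).toReal) ((ν (X ∩ Iic z)).toReal))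
        (max ((μ (X ∩ Iic z)).toReal) ((ν (X ∩ Iic z)).toReal)) ⊆ Ioc (0:ℝ) 1 :=
      Ioc_subset_Ioc (le_min (hF0 z) (hG0 z)) (max_le (hF1 z) (hG1 z))
    have hset : (fun t => E.indicator 1 (z, t)) =
        (Ioc (min ((μ (X ∩ Iic z)).toReal) ((ν (X ∩ Iic z)).toReal))
          (max ((μ (X ∩ Iic z)).toReal) ((ν (X ∩ Iic z)).toReal))).indicator
          (1 : ℝ → ℝ≥0∞) := by
      funext t
      have hmem : (z, t) ∈ E ↔ t ∈ Ioc (min ((μ (X ∩ Iic z)).toReal) ((ν (X ∩ Iic z)).toReal))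
          (max ((μ (X ∩ Iic z)).toReal) ((ν (X ∩ Iic z)).toReal)) := by
        constructor
        · rintro ⟨_, hx⟩
          have : t ∈ {t : ℝ | ¬(t ≤ (μ (X ∩ Iic z)).toReal ↔ t ≤ (ν (X ∩ Iic z)).toReal)} := hx
          rwa [xor_le_left] at this
        · intro h
          refine ⟨hsub h, ?_⟩
          have := (xor_le_left ((μ (X ∩ Iic z)).toReal) ((ν (X ∩ Iic z)).toReal)) ▸ h
          exact this
      simp only [indicator_apply, hmem, Pi.one_apply]
    rw [hset, lintegral_indicator measurableSet_Ioc]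
    simp [Real.volume_Ioc, max_sub_min_eq_abs, abs_sub_comm]
  have hRHS : (fun t => ∫⁻ z, E.indicator 1 (z, t)) =
      (Ioc (0:ℝ) 1).indicator (fun t => ENNReal.ofReal |Qμ t - Qν t|) := by
    funext t
    by_cases ht : t ∈ Ioc (0:ℝ) 1
    · have hgal : ∀ z : ℝ, ((z, t) ∈ E) ↔ ¬(Qμ t ≤ z ↔ Qν t ≤ z) := by
        intro z
        have h1 : Qμ t ≤ z ↔ t ≤ (μ (X ∩ Iic z)).toReal := by
          rw [hQμ t]; exact (quantile_spec X hX hXne μ hμ ht).2 z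
        have h2 : Qν t ≤ z ↔ t ≤ (ν (X ∩ Iic z)).toReal := by
          rw [hQν t]; exact (quantile_spec X hX hXne ν hν ht).2 z
        simp only [hEdef, mem_setOf_eq, ht, true_and, h1, h2]
      have hset : (fun z => E.indicator 1 (z, t)) =
          (Ico (min (Qμ t) (Qν t)) (max (Qμ t) (Qν t))).indicator (1 : ℝ → ℝ≥0∞) := by
        funext z
        have hmem : (z, t) ∈ E ↔ z ∈ Ico (min (Qμ t) (Qν t)) (max (Qμ t) (Qν t)) := by
          rw [hgal z, ← xor_le_right]
          exact Iff.rfl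
        simp only [indicator_apply, hmem, Pi.one_apply]
      rw [hset, lintegral_indicator measurableSet_Ico, indicator_of_mem ht]
      simp [Real.volume_Ico, max_sub_min_eq_abs, abs_sub_comm]
    · have hset : (fun z => E.indicator 1 (z, t)) = fun _ => (0 : ℝ≥0∞) := by
        funext z
        have : (z, t) ∉ E := fun h => ht h.1
        simp [indicator_apply, this]
      rw [hset, indicator_of_notMem ht]
      simp
  calc ∫⁻ z, ENNReal.ofReal |(μ (X ∩ Iic z)).toReal - (ν (X ∩ Iic z)).toReal|
      = ∫⁻ z, ∫⁻ t, E.indicator 1 (z, t) := by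
        refine lintegral_congr fun z => (hLHS z).symm
    _ = ∫⁻ t, ∫⁻ z, E.indicator 1 (z, t) := hswap
    _ = ∫⁻ t, (Ioc (0:ℝ) 1).indicator (fun t => ENNReal.ofReal |Qμ t - Qν t|) t := by
        rw [hRHS]
    _ = ∫⁻ t in Ioc (0:ℝ) 1, ENNReal.ofReal |Qμ t - Qν t| :=
        lintegral_indicator measurableSet_Ioc _

lemma cost_ge (μ ν : Measure ℝ) [IsProbabilityMeasure μ] [IsProbabilityMeasure ν]
    (γ : Measure (ℝ × ℝ)) [IsProbabilityMeasure γ]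
    (h1 : γ.map Prod.fst = μ) (h2 : γ.map Prod.snd = ν) :
    ∫⁻ z, ENNReal.ofReal |(μ (Iic z)).toReal - (ν (Iic z)).toReal| ≤
      ∫⁻ p, ENNReal.ofReal |p.1 - p.2| ∂γ := by
  set E : Set ((ℝ × ℝ) × ℝ) := {q | ¬(q.1.1 ≤ q.2 ↔ q.1.2 ≤ q.2)} with hEdef
  have hA : MeasurableSet {q : (ℝ × ℝ) × ℝ | q.1.1 ≤ q.2} :=
    measurableSet_le (measurable_fst.comp measurable_fst) measurable_snd
  have hB : MeasurableSet {q : (ℝ × ℝ) × ℝ | q.1.2 ≤ q.2} :=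
    measurableSet_le (measurable_snd.comp measurable_fst) measurable_snd
  have hEmeas : MeasurableSet E := by
    have : E = ({q : (ℝ × ℝ) × ℝ | q.1.1 ≤ q.2} ∩ {q : (ℝ × ℝ) × ℝ | q.1.2 ≤ q.2}ᶜ) ∪
        ({q : (ℝ × ℝ) × ℝ | q.1.2 ≤ q.2} ∩ {q : (ℝ × ℝ) × ℝ | q.1.1 ≤ q.2}ᶜ) := by
      ext q
      simp only [hEdef, mem_setOf_eq, mem_inter_iff, mem_union, mem_compl_iff]
      tauto
    rw [this]
    exact (hA.inter hB.compl).union (hB.inter hA.compl)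
  have hstep1 : ∀ p : ℝ × ℝ, ∫⁻ z, E.indicator 1 (p, z) = ENNReal.ofReal |p.1 - p.2| := by
    intro p
    have hset : (fun z => E.indicator 1 (p, z)) =
        (Ico (min p.1 p.2) (max p.1 p.2)).indicator (1 : ℝ → ℝ≥0∞) := by
      funext z
      have hmem : (p, z) ∈ E ↔ z ∈ Ico (min p.1 p.2) (max p.1 p.2) := by
        rw [← xor_le_right]; exact Iff.rfl
      simp only [indicator_apply, hmem, Pi.one_apply]
    rw [hset, lintegral_indicator_one measurableSet_Ico, Real.volume_Ico, max_sub_min_eq_abs, abs_sub_comm]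
  have hswap : ∫⁻ p, ∫⁻ z, E.indicator 1 (p, z) ∂(volume) ∂γ =
      ∫⁻ z, ∫⁻ p, E.indicator 1 (p, z) ∂γ :=
    lintegral_lintegral_swap ((measurable_one.indicator hEmeas).aemeasurable)
  have hstep3 : ∀ z : ℝ, ENNReal.ofReal |(μ (Iic z)).toReal - (ν (Iic z)).toReal| ≤
      ∫⁻ p, E.indicator 1 (p, z) ∂γ := by
    intro z
    set S : Set (ℝ × ℝ) := {p | ¬(p.1 ≤ z ↔ p.2 ≤ z)} with hSdef
    have hAz : MeasurableSet {p : ℝ × ℝ | p.1 ≤ z} :=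
      measurableSet_le measurable_fst measurable_const
    have hBz : MeasurableSet {p : ℝ × ℝ | p.2 ≤ z} :=
      measurableSet_le measurable_snd measurable_const
    have hSmeas : MeasurableSet S := by
      have : S = ({p : ℝ × ℝ | p.1 ≤ z} ∩ {p : ℝ × ℝ | p.2 ≤ z}ᶜ) ∪
          ({p : ℝ × ℝ | p.2 ≤ z} ∩ {p : ℝ × ℝ | p.1 ≤ z}ᶜ) := by
        ext p
        simp only [hSdef, mem_setOf_eq, mem_inter_iff, mem_union, mem_compl_iff]
        tauto
      rw [this]
      exact (hAz.inter hBz.compl).union (hBz.inter hAz.compl)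
    have hint : ∫⁻ p, E.indicator 1 (p, z) ∂γ = γ S := by
      have hset : (fun p => E.indicator 1 (p, z)) = S.indicator (1 : ℝ × ℝ → ℝ≥0∞) := by
        funext p
        have hmem : (p, z) ∈ E ↔ p ∈ S := Iff.rfl
        simp only [indicator_apply, hmem, Pi.one_apply]
      rw [hset, lintegral_indicator_one hSmeas]
    rw [hint]
    have hγA : γ {p : ℝ × ℝ | p.1 ≤ z} = μ (Iic z) := by
      rw [← h1, Measure.map_apply measurable_fst measurableSet_Iic]
      rfl
    have hγB : γ {p : ℝ × ℝ | p.2 ≤ z} = ν (Iic z) := by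
      rw [← h2, Measure.map_apply measurable_snd measurableSet_Iic]
      rfl
    have hsub1 : {p : ℝ × ℝ | p.1 ≤ z} ⊆ S ∪ {p : ℝ × ℝ | p.2 ≤ z} := by
      intro p hp
      by_cases h : p.2 ≤ z
      · exact Or.inr h
      · exact Or.inl fun hiff => h (hiff.mp hp)
    have hsub2 : {p : ℝ × ℝ | p.2 ≤ z} ⊆ S ∪ {p : ℝ × ℝ | p.1 ≤ z} := by
      intro p hp
      by_cases h : p.1 ≤ z
      · exact Or.inr h
      · exact Or.inl fun hiff => h (hiff.mpr hp)
    have key1 : (μ (Iic z)).toReal ≤ (γ S).toReal + (ν (Iic z)).toReal := by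
      have h' : μ (Iic z) ≤ γ S + ν (Iic z) := by
        rw [← hγA, ← hγB]
        exact le_trans (measure_mono hsub1) (measure_union_le _ _)
      have := ENNReal.toReal_mono (by finiteness) h'
      rwa [ENNReal.toReal_add (measure_ne_top γ S) (measure_ne_top ν _)] at this
    have key2 : (ν (Iic z)).toReal ≤ (γ S).toReal + (μ (Iic z)).toReal := by
      have h' : ν (Iic z) ≤ γ S + μ (Iic z) := by
        rw [← hγA, ← hγB]
        exact le_trans (measure_mono hsub2) (measure_union_le _ _)
      have := ENNReal.toReal_mono (by finiteness) h'
      rwa [ENNReal.toReal_add (measure_ne_top γ S) (measure_ne_top μ _)] at this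
    have habs : |(μ (Iic z)).toReal - (ν (Iic z)).toReal| ≤ (γ S).toReal :=
      abs_sub_le_iff.mpr ⟨by linarith, by linarith⟩
    calc ENNReal.ofReal |(μ (Iic z)).toReal - (ν (Iic z)).toReal|
        ≤ ENNReal.ofReal (γ S).toReal := ENNReal.ofReal_le_ofReal habs
      _ = γ S := ENNReal.ofReal_toReal (measure_ne_top γ S)
  calc ∫⁻ z, ENNReal.ofReal |(μ (Iic z)).toReal - (ν (Iic z)).toReal|
      ≤ ∫⁻ z, ∫⁻ p, E.indicator 1 (p, z) ∂γ := lintegral_mono hstep3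
    _ = ∫⁻ p, ∫⁻ z, E.indicator 1 (p, z) ∂(volume) ∂γ := hswap.symm
    _ = ∫⁻ p, ENNReal.ofReal |p.1 - p.2| ∂γ := lintegral_congr hstep1

theorem stmt_2 (X : Set ℝ) (hX : IsCompact X) (hXne : X.Nonempty)
    (μ ν : Measure ℝ) [IsProbabilityMeasure μ] [IsProbabilityMeasure ν]
    (hμ : μ Xᶜ = 0) (hν : ν Xᶜ = 0)
    (Fμ Fν : ℝ → ℝ)
    (hFμ : ∀ z, Fμ z = (μ (X ∩ Iic z)).toReal)
    (hFν : ∀ z, Fν z = (ν (X ∩ Iic z)).toReal)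
    (Qμ Qν : ℝ → ℝ)
    (hQμ : ∀ t, Qμ t = sInf {x | x ∈ X ∧ t ≤ Fμ x})
    (hQν : ∀ t, Qν t = sInf {x | x ∈ X ∧ t ≤ Fν x}) :
    sInf {c | ∃ γ : Measure (ℝ × ℝ), IsProbabilityMeasure γ ∧
        γ.map Prod.fst = μ ∧ γ.map Prod.snd = ν ∧ c = ∫ p, |p.1 - p.2| ∂γ}
      = ∫ t in Icc (0:ℝ) 1, |Qμ t - Qν t| := by
  have hQμ' : ∀ t, Qμ t = sInf {x | x ∈ X ∧ t ≤ (μ (X ∩ Iic x)).toReal} := by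
    intro t; rw [hQμ t]; simp only [hFμ]
  have hQν' : ∀ t, Qν t = sInf {x | x ∈ X ∧ t ≤ (ν (X ∩ Iic x)).toReal} := by
    intro t; rw [hQν t]; simp only [hFν]
  have hXmeas : MeasurableSet X := hX.isClosed.measurableSet
  have hXsub : ∀ x ∈ X, sInf X ≤ x ∧ x ≤ sSup X := fun x hx =>
    ⟨csInf_le hX.bddBelow hx, le_csSup hX.bddAbove hx⟩
  set C : ℝ := sSup X - sInf X with hC
  have habsC : ∀ x ∈ X, ∀ y ∈ X, |x - y| ≤ C := by
    intro x hx y hy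
    obtain ⟨hx1, hx2⟩ := hXsub x hx
    obtain ⟨hy1, hy2⟩ := hXsub y hy
    exact abs_sub_le_iff.mpr ⟨by linarith, by linarith⟩
  -- the quantile coupling
  set gμ : ℝ → ℝ := fun t => Qμ (min t 1) with hgμdef
  set gν : ℝ → ℝ := fun t => Qν (min t 1) with hgνdef
  have hgmμ : Measurable gμ := (quantile_monotone X hX hXne μ hμ Qμ hQμ').measurable
  have hgmν : Measurable gν := (quantile_monotone X hX hXne ν hν Qν hQν').measurable
  have hgg : Measurable fun t => (gμ t, gν t) := hgmμ.prodMk hgmν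
  set R : Measure ℝ := volume.restrict (Ioc (0:ℝ) 1) with hRdef
  haveI hRprob : IsProbabilityMeasure R := ⟨by
    simp [hRdef, Real.volume_Ioc, Measure.restrict_apply MeasurableSet.univ]⟩
  set γ₀ : Measure (ℝ × ℝ) := R.map fun t => (gμ t, gν t) with hγ₀def
  haveI hγ₀prob : IsProbabilityMeasure γ₀ := Measure.isProbabilityMeasure_map hgg.aemeasurable
  have hmap1 : γ₀.map Prod.fst = μ := by
    rw [hγ₀def, Measure.map_map measurable_fst hgg]
    exact quantile_map X hX hXne μ hμ Qμ hQμ'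
  have hmap2 : γ₀.map Prod.snd = ν := by
    rw [hγ₀def, Measure.map_map measurable_snd hgg]
    exact quantile_map X hX hXne ν hν Qν hQν'
  have hgQ : ∀ t ∈ Ioc (0:ℝ) 1, gμ t = Qμ t ∧ gν t = Qν t := by
    intro t ht
    simp only [hgμdef, hgνdef, min_eq_left ht.2, and_self]
  have hcost : ∫ p, |p.1 - p.2| ∂γ₀ = ∫ t in Icc (0:ℝ) 1, |Qμ t - Qν t| := by
    rw [hγ₀def, integral_map hgg.aemeasurable (f := fun p : ℝ × ℝ => |p.1 - p.2|)
      (((continuous_fst.sub continuous_snd).abs).aestronglyMeasurable)]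
    rw [integral_Icc_eq_integral_Ioc]
    refine setIntegral_congr_fun measurableSet_Ioc fun t ht => ?_
    obtain ⟨e1, e2⟩ := hgQ t ht
    simp only [e1, e2]
  set c₀ : ℝ := ∫ t in Icc (0:ℝ) 1, |Qμ t - Qν t| with hc₀
  have hmem : c₀ ∈ {c | ∃ γ : Measure (ℝ × ℝ), IsProbabilityMeasure γ ∧
      γ.map Prod.fst = μ ∧ γ.map Prod.snd = ν ∧ c = ∫ p, |p.1 - p.2| ∂γ} :=
    ⟨γ₀, hγ₀prob, hmap1, hmap2, hcost.symm⟩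
  -- the value c₀ as an ENNReal lintegral
  have haeQg : (fun t => |Qμ t - Qν t|) =ᵐ[R] fun t => |gμ t - gν t| := by
    rw [hRdef]
    filter_upwards [ae_restrict_mem measurableSet_Ioc] with t ht
    obtain ⟨e1, e2⟩ := hgQ t ht
    rw [e1, e2]
  have haesm : AEStronglyMeasurable (fun t => |Qμ t - Qν t|) R :=
    ((hgmμ.sub hgmν).abs.aestronglyMeasurable).congr haeQg.symm
  have hc₀J : c₀ = (∫⁻ t in Ioc (0:ℝ) 1, ENNReal.ofReal |Qμ t - Qν t|).toReal := by
    rw [hc₀, integral_Icc_eq_integral_Ioc,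
      integral_eq_lintegral_of_nonneg_ae (Filter.Eventually.of_forall fun t => abs_nonneg _)
        haesm]
  have hlb : ∀ c ∈ {c | ∃ γ : Measure (ℝ × ℝ), IsProbabilityMeasure γ ∧
      γ.map Prod.fst = μ ∧ γ.map Prod.snd = ν ∧ c = ∫ p, |p.1 - p.2| ∂γ}, c₀ ≤ c := by
    rintro c ⟨γ, hγp, hγ1, hγ2, rfl⟩
    -- γ is concentrated on X × X
    have hae1 : ∀ᵐ p ∂γ, p.1 ∈ X := by
      rw [ae_iff]
      have : {p : ℝ × ℝ | ¬ p.1 ∈ X} = Prod.fst ⁻¹' Xᶜ := rfl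
      rw [this, ← Measure.map_apply measurable_fst hXmeas.compl, hγ1]
      exact hμ
    have hae2 : ∀ᵐ p ∂γ, p.2 ∈ X := by
      rw [ae_iff]
      have : {p : ℝ × ℝ | ¬ p.2 ∈ X} = Prod.snd ⁻¹' Xᶜ := rfl
      rw [this, ← Measure.map_apply measurable_snd hXmeas.compl, hγ2]
      exact hν
    have hbound : ∀ᵐ p ∂γ, ‖|p.1 - p.2|‖ ≤ C := by
      filter_upwards [hae1, hae2] with p h1 h2
      rw [Real.norm_eq_abs, abs_abs]
      exact habsC p.1 h1 p.2 h2
    have haesmγ : AEStronglyMeasurable (fun p : ℝ × ℝ => |p.1 - p.2|) γ :=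
      ((continuous_fst.sub continuous_snd).abs).aestronglyMeasurable
    have hint : Integrable (fun p : ℝ × ℝ => |p.1 - p.2|) γ :=
      ⟨haesmγ, HasFiniteIntegral.of_bounded hbound⟩
    have hlint_ne_top : ∫⁻ p, ENNReal.ofReal |p.1 - p.2| ∂γ ≠ ⊤ := by
      have := hint.2
      rw [HasFiniteIntegral] at this
      refine ne_of_lt (lt_of_le_of_lt (le_of_eq ?_) this)
      refine lintegral_congr fun p => ?_
      rw [← ofReal_norm, Real.norm_eq_abs, abs_abs]
    have hchain : ∫⁻ t in Ioc (0:ℝ) 1, ENNReal.ofReal |Qμ t - Qν t| ≤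
        ∫⁻ p, ENNReal.ofReal |p.1 - p.2| ∂γ := by
      calc ∫⁻ t in Ioc (0:ℝ) 1, ENNReal.ofReal |Qμ t - Qν t|
          = ∫⁻ z, ENNReal.ofReal |(μ (X ∩ Iic z)).toReal - (ν (X ∩ Iic z)).toReal| :=
            (area_swap X hX hXne μ ν hμ hν Qμ Qν hQμ' hQν').symm
        _ = ∫⁻ z, ENNReal.ofReal |(μ (Iic z)).toReal - (ν (Iic z)).toReal| := by
            refine lintegral_congr fun z => ?_
            rw [meas_inter_Iic X μ hμ, meas_inter_Iic X ν hν]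
        _ ≤ ∫⁻ p, ENNReal.ofReal |p.1 - p.2| ∂γ := cost_ge μ ν γ hγ1 hγ2
    rw [hc₀J, integral_eq_lintegral_of_nonneg_ae
      (Filter.Eventually.of_forall fun p => abs_nonneg _) haesmγ]
    exact ENNReal.toReal_mono hlint_ne_top hchain
  exact le_antisymm (csInf_le ⟨c₀, hlb⟩ hmem) (le_csInf ⟨c₀, hmem⟩ hlb)
end

section
/- Let X ⊆ ℝ be compact, μ, ν Borel probability measures on X, and U a uniform random variable on [0,1]. Define X₀ := F_μ^{-1}(U) and Y₀ := F_ν^{-1}(U) using the quantile functions of μ and ν. Then the law γ of the pair (X₀, Y₀) is a coupling of μ and ν, and this coupling attains the Wasserstein-1 distance: ∫ |x − y| γ(dx,dy) = W₁(μ, ν). -/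
open MeasureTheory Set ProbabilityTheory Filter
open scoped ENNReal

section Aux

variable {X : Set ℝ} {μ : Measure ℝ} {F Q : ℝ → ℝ}

lemma aux_F_eq (hμ : μ Xᶜ = 0) (hF : ∀ z, F z = (μ (X ∩ Iic z)).toReal) (z : ℝ) :
    F z = (μ (Iic z)).toReal := by
  rw [hF]
  congr 1
  refine le_antisymm (measure_mono inter_subset_right) ?_
  calc μ (Iic z) ≤ μ (X ∩ Iic z) + μ (Xᶜ) := by
        refine le_trans (measure_mono ?_) (measure_union_le _ _)
        intro x hx
        by_cases h : x ∈ X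
        · exact Or.inl ⟨h, hx⟩
        · exact Or.inr h
    _ = μ (X ∩ Iic z) := by rw [hμ, add_zero]

lemma aux_F_cdf [IsProbabilityMeasure μ] (hμ : μ Xᶜ = 0)
    (hF : ∀ z, F z = (μ (X ∩ Iic z)).toReal) (z : ℝ) : F z = cdf μ z := by
  rw [aux_F_eq hμ hF, cdf_eq_real, measureReal_def]

lemma aux_F_mono [IsProbabilityMeasure μ] (hμ : μ Xᶜ = 0)
    (hF : ∀ z, F z = (μ (X ∩ Iic z)).toReal) : Monotone F := by
  intro a b hab
  rw [aux_F_cdf hμ hF, aux_F_cdf hμ hF]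
  exact (cdf μ).mono hab

lemma aux_F_nonneg [IsProbabilityMeasure μ] (hμ : μ Xᶜ = 0)
    (hF : ∀ z, F z = (μ (X ∩ Iic z)).toReal) (z : ℝ) : 0 ≤ F z := by
  rw [hF]; exact ENNReal.toReal_nonneg

lemma aux_F_le_one [IsProbabilityMeasure μ] (hμ : μ Xᶜ = 0)
    (hF : ∀ z, F z = (μ (X ∩ Iic z)).toReal) (z : ℝ) : F z ≤ 1 := by
  rw [hF]
  have : μ (X ∩ Iic z) ≤ 1 := prob_le_one
  calc (μ (X ∩ Iic z)).toReal ≤ (1 : ℝ≥0∞).toReal :=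
        ENNReal.toReal_mono ENNReal.one_ne_top this
    _ = 1 := by simp

lemma aux_muX [IsProbabilityMeasure μ] (hX : IsCompact X) (hμ : μ Xᶜ = 0) : μ X = 1 :=
  (prob_compl_eq_zero_iff hX.isClosed.measurableSet).mp hμ

lemma aux_F_sSup [IsProbabilityMeasure μ] (hX : IsCompact X) (hXne : X.Nonempty)
    (hμ : μ Xᶜ = 0) (hF : ∀ z, F z = (μ (X ∩ Iic z)).toReal) : F (sSup X) = 1 := by
  rw [hF]
  have h1 : X ∩ Iic (sSup X) = X := by
    refine inter_eq_left.mpr (fun x hx => ?_)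
    exact le_csSup hX.bddAbove hx
  rw [h1, aux_muX hX hμ]; simp

/-- The quantile set is nonempty for `t ≤ 1`. -/
lemma aux_S_nonempty [IsProbabilityMeasure μ] (hX : IsCompact X) (hXne : X.Nonempty)
    (hμ : μ Xᶜ = 0) (hF : ∀ z, F z = (μ (X ∩ Iic z)).toReal) {t : ℝ} (ht : t ≤ 1) :
    {x | x ∈ X ∧ t ≤ F x}.Nonempty :=
  ⟨sSup X, hX.sSup_mem hXne, by rw [aux_F_sSup hX hXne hμ hF]; exact ht⟩

lemma aux_Q_mem [IsProbabilityMeasure μ] (hX : IsCompact X) (hXne : X.Nonempty)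
    (hμ : μ Xᶜ = 0) (hF : ∀ z, F z = (μ (X ∩ Iic z)).toReal)
    (hQ : ∀ t, Q t = sInf {x | x ∈ X ∧ t ≤ F x}) {t : ℝ} (ht : t ≤ 1) : Q t ∈ X := by
  rw [hQ]
  have hsub : {x | x ∈ X ∧ t ≤ F x} ⊆ X := fun x hx => hx.1
  have h := csInf_mem_closure (aux_S_nonempty hX hXne hμ hF ht) (hX.bddBelow.mono hsub)
  have := closure_mono hsub h
  rwa [hX.isClosed.closure_eq] at this

lemma aux_galois [IsProbabilityMeasure μ] (hX : IsCompact X) (hXne : X.Nonempty)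
    (hμ : μ Xᶜ = 0) (hF : ∀ z, F z = (μ (X ∩ Iic z)).toReal)
    (hQ : ∀ t, Q t = sInf {x | x ∈ X ∧ t ≤ F x}) {t : ℝ} (ht : t ∈ Ioc (0:ℝ) 1)
    (x : ℝ) : Q t ≤ x ↔ t ≤ F x := by
  have hSne := aux_S_nonempty hX hXne hμ hF ht.2
  have hsub : {x | x ∈ X ∧ t ≤ F x} ⊆ X := fun x hx => hx.1
  have hmono := aux_F_mono hμ hF
  constructor
  · intro h
    have h1 : t ≤ F (Q t) := by
      have hcd : ∀ z, F z = cdf μ z := aux_F_cdf hμ hF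
      have htd : Filter.Tendsto (cdf μ) (nhdsWithin (Q t) (Ioi (Q t))) (nhds (cdf μ (Q t))) :=
        ((cdf μ).right_continuous (Q t)).mono_left
          (nhdsWithin_mono _ Ioi_subset_Ici_self)
      have hev : ∀ᶠ y in nhdsWithin (Q t) (Ioi (Q t)), t ≤ cdf μ y := by
        refine eventually_nhdsWithin_of_forall (fun y hy => ?_)
        have : Q t < y := hy
        rw [hQ] at this
        obtain ⟨s, hs, hsy⟩ := exists_lt_of_csInf_lt hSne this
        rw [← hcd]
        exact le_trans hs.2 (hmono hsy.le)
      rw [hcd]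
      exact ge_of_tendsto htd hev
    exact le_trans h1 (hmono h)
  · intro h
    have hne : (X ∩ Iic x).Nonempty := by
      rw [nonempty_iff_ne_empty]
      intro he
      rw [hF, he] at h
      simp at h
      linarith [ht.1]
    have hcpt : IsCompact (X ∩ Iic x) := hX.inter_right isClosed_Iic
    have hx' : sSup (X ∩ Iic x) ∈ X ∩ Iic x := hcpt.sSup_mem hne
    have hFx' : F x ≤ F (sSup (X ∩ Iic x)) := by
      rw [hF, hF]
      refine ENNReal.toReal_mono (measure_ne_top _ _) (measure_mono ?_)
      intro y hy
      exact ⟨hy.1, le_csSup hcpt.bddAbove hy⟩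
    have hmem : sSup (X ∩ Iic x) ∈ {x | x ∈ X ∧ t ≤ F x} := ⟨hx'.1, le_trans h hFx'⟩
    rw [hQ]
    exact le_trans (csInf_le (hX.bddBelow.mono hsub) hmem) hx'.2

lemma aux_Q_monoOn [IsProbabilityMeasure μ] (hX : IsCompact X) (hXne : X.Nonempty)
    (hμ : μ Xᶜ = 0) (hF : ∀ z, F z = (μ (X ∩ Iic z)).toReal)
    (hQ : ∀ t, Q t = sInf {x | x ∈ X ∧ t ≤ F x}) {s t : ℝ} (hst : s ≤ t) (ht : t ≤ 1) :
    Q s ≤ Q t := by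
  rw [hQ, hQ]
  refine csInf_le_csInf (hX.bddBelow.mono (fun x hx => hx.1))
    (aux_S_nonempty hX hXne hμ hF ht) ?_
  intro x hx
  exact ⟨hx.1, le_trans hst hx.2⟩

end Aux
lemma aux_ico_iff (a b t : ℝ) :
    t ∈ Ico (a ⊓ b) (a ⊔ b) ↔ ((a ≤ t ∧ ¬ b ≤ t) ∨ (b ≤ t ∧ ¬ a ≤ t)) := by
  rcases le_total a b with h | h
  · simp only [inf_eq_left.mpr h, sup_eq_right.mpr h, mem_Ico]
    constructor
    · rintro ⟨h1, h2⟩; exact Or.inl ⟨h1, not_le.mpr h2⟩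
    · rintro (⟨h1, h2⟩ | ⟨h1, h2⟩)
      · exact ⟨h1, not_le.mp h2⟩
      · exact absurd (le_trans h h1) h2
  · simp only [inf_eq_right.mpr h, sup_eq_left.mpr h, mem_Ico]
    constructor
    · rintro ⟨h1, h2⟩; exact Or.inr ⟨h1, not_le.mpr h2⟩
    · rintro (⟨h1, h2⟩ | ⟨h1, h2⟩)
      · exact absurd (le_trans h h1) h2
      · exact ⟨h1, not_le.mp h2⟩

lemma aux_ioc_iff (c d u : ℝ) :
    u ∈ Ioc (c ⊓ d) (c ⊔ d) ↔ ((u ≤ c ∧ ¬ u ≤ d) ∨ (u ≤ d ∧ ¬ u ≤ c)) := by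
  rcases le_total c d with h | h
  · simp only [inf_eq_left.mpr h, sup_eq_right.mpr h, mem_Ioc]
    constructor
    · rintro ⟨h1, h2⟩; exact Or.inr ⟨h2, not_le.mpr h1⟩
    · rintro (⟨h1, h2⟩ | ⟨h1, h2⟩)
      · exact absurd (le_trans h1 h) h2
      · exact ⟨not_le.mp h2, h1⟩
  · simp only [inf_eq_right.mpr h, sup_eq_left.mpr h, mem_Ioc]
    constructor
    · rintro ⟨h1, h2⟩; exact Or.inl ⟨h2, not_le.mpr h1⟩
    · rintro (⟨h1, h2⟩ | ⟨h1, h2⟩)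
      · exact ⟨not_le.mp h2, h1⟩
      · exact absurd (le_trans h1 h) h2

section Aux2

variable {X : Set ℝ} {μ : Measure ℝ} {F Q : ℝ → ℝ}

/-- The law of the (truncated) quantile function under the uniform distribution is `μ`. -/
lemma aux_law [IsProbabilityMeasure μ] (hX : IsCompact X) (hXne : X.Nonempty)
    (hμ : μ Xᶜ = 0) (hF : ∀ z, F z = (μ (X ∩ Iic z)).toReal)
    (hQ : ∀ t, Q t = sInf {x | x ∈ X ∧ t ≤ F x}) :
    (volume.restrict (Icc (0:ℝ) 1)).map (fun u => Q (min u 1)) = μ := by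
  have hmono : Monotone (fun u => Q (min u 1)) := by
    intro a b hab
    exact aux_Q_monoOn hX hXne hμ hF hQ (min_le_min_right 1 hab) (min_le_right b 1)
  have hmeas := hmono.measurable
  refine Measure.ext_of_Iic _ _ (fun x => ?_)
  rw [Measure.map_apply hmeas measurableSet_Iic, Measure.restrict_apply (hmeas measurableSet_Iic)]
  have hμx : μ (Iic x) = ENNReal.ofReal (F x) := by
    rw [aux_F_eq hμ hF, ENNReal.ofReal_toReal (measure_ne_top μ _)]
  rw [hμx]
  set A := (fun u => Q (min u 1)) ⁻¹' Iic x with hA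
  have hionull : volume (A ∩ Icc (0:ℝ) 1) = volume (A ∩ Ioc (0:ℝ) 1) := by
    refine le_antisymm ?_ (measure_mono (inter_subset_inter_right _ Ioc_subset_Icc_self))
    have hsub : A ∩ Icc (0:ℝ) 1 ⊆ (A ∩ Ioc (0:ℝ) 1) ∪ {0} := by
      rintro u ⟨hu, h0, h1⟩
      rcases eq_or_lt_of_le h0 with h | h
      · exact Or.inr (by simp [← h])
      · exact Or.inl ⟨hu, h, h1⟩
    calc volume (A ∩ Icc (0:ℝ) 1) ≤ volume ((A ∩ Ioc (0:ℝ) 1) ∪ {0}) := measure_mono hsub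
      _ ≤ volume (A ∩ Ioc (0:ℝ) 1) + volume ({0} : Set ℝ) := measure_union_le _ _
      _ = volume (A ∩ Ioc (0:ℝ) 1) := by simp
  rw [hionull]
  have hkey : A ∩ Ioc (0:ℝ) 1 = Ioc 0 (F x) := by
    ext u
    simp only [hA, mem_inter_iff, mem_preimage, mem_Iic, mem_Ioc]
    constructor
    · rintro ⟨hQu, h0, h1⟩
      rw [min_eq_left h1] at hQu
      exact ⟨h0, (aux_galois hX hXne hμ hF hQ ⟨h0, h1⟩ x).mp hQu⟩
    · rintro ⟨h0, hu⟩
      have h1 : u ≤ 1 := le_trans hu (aux_F_le_one hμ hF x)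
      refine ⟨?_, h0, h1⟩
      rw [min_eq_left h1]
      exact (aux_galois hX hXne hμ hF hQ ⟨h0, h1⟩ x).mpr hu
  rw [hkey, Real.volume_Ioc, sub_zero]

end Aux2
lemma aux_abs_repr (a b : ℝ) :
    ENNReal.ofReal |a - b| = volume (Ico (a ⊓ b) (a ⊔ b)) := by
  rw [Real.volume_Ico, max_sub_min_eq_abs, abs_sub_comm]

section Aux3

variable {X : Set ℝ} {μ ν : Measure ℝ} {Fμ Fν Qμ Qν : ℝ → ℝ}

/-- The comonotone identity. -/
lemma aux_eq [IsProbabilityMeasure μ] [IsProbabilityMeasure ν]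
    (hX : IsCompact X) (hXne : X.Nonempty)
    (hμ : μ Xᶜ = 0) (hν : ν Xᶜ = 0)
    (hFμ : ∀ z, Fμ z = (μ (X ∩ Iic z)).toReal)
    (hFν : ∀ z, Fν z = (ν (X ∩ Iic z)).toReal)
    (hQμ : ∀ t, Qμ t = sInf {x | x ∈ X ∧ t ≤ Fμ x})
    (hQν : ∀ t, Qν t = sInf {x | x ∈ X ∧ t ≤ Fν x}) :
    ∫⁻ u in Ioc (0:ℝ) 1, ENNReal.ofReal |Qμ u - Qν u| ∂volume
      = ∫⁻ t, ENNReal.ofReal |Fμ t - Fν t| ∂volume := by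
  have hFμm : Measurable Fμ := (aux_F_mono hμ hFμ).measurable
  have hFνm : Measurable Fν := (aux_F_mono hν hFν).measurable
  have step1 : ∫⁻ u in Ioc (0:ℝ) 1, ENNReal.ofReal |Qμ u - Qν u| ∂volume
      = ∫⁻ u in Ioc (0:ℝ) 1, ∫⁻ t, (Ioc (Fμ t ⊓ Fν t) (Fμ t ⊔ Fν t)).indicator 1 u ∂volume ∂volume := by
    refine setLIntegral_congr_fun measurableSet_Ioc (fun u hu => ?_)
    have key : ∀ t, (t ∈ Ico (Qμ u ⊓ Qν u) (Qμ u ⊔ Qν u))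
        ↔ (u ∈ Ioc (Fμ t ⊓ Fν t) (Fμ t ⊔ Fν t)) := by
      intro t
      rw [aux_ico_iff, aux_ioc_iff, aux_galois hX hXne hμ hFμ hQμ hu t,
        aux_galois hX hXne hν hFν hQν hu t]
    calc ENNReal.ofReal |Qμ u - Qν u|
        = volume (Ico (Qμ u ⊓ Qν u) (Qμ u ⊔ Qν u)) := aux_abs_repr _ _
      _ = ∫⁻ t, (Ico (Qμ u ⊓ Qν u) (Qμ u ⊔ Qν u)).indicator 1 t ∂volume :=
          (lintegral_indicator_one measurableSet_Ico).symm
      _ = ∫⁻ t, (Ioc (Fμ t ⊓ Fν t) (Fμ t ⊔ Fν t)).indicator 1 u ∂volume := by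
          refine lintegral_congr fun t => ?_
          simp only [indicator_apply, Pi.one_apply]
          exact if_congr (key t) rfl rfl
  rw [step1]
  have hswap : ∫⁻ u in Ioc (0:ℝ) 1, ∫⁻ t, (Ioc (Fμ t ⊓ Fν t) (Fμ t ⊔ Fν t)).indicator 1 u ∂volume ∂volume
      = ∫⁻ t, ∫⁻ u in Ioc (0:ℝ) 1, (Ioc (Fμ t ⊓ Fν t) (Fμ t ⊔ Fν t)).indicator 1 u ∂volume ∂volume := by
    refine lintegral_lintegral_swap ?_
    have heq : (Function.uncurry fun u t => (Ioc (Fμ t ⊓ Fν t) (Fμ t ⊔ Fν t)).indicator (1 : ℝ → ℝ≥0∞) u)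
        = fun p : ℝ × ℝ => if Fμ p.2 ⊓ Fν p.2 < p.1 ∧ p.1 ≤ Fμ p.2 ⊔ Fν p.2 then 1 else 0 := by
      funext p
      simp [Function.uncurry, indicator_apply, mem_Ioc]
    rw [heq]
    refine (Measurable.ite ?_ measurable_const measurable_const).aemeasurable
    exact (measurableSet_lt ((hFμm.comp measurable_snd).inf (hFνm.comp measurable_snd))
      measurable_fst).inter (measurableSet_le measurable_fst
      ((hFμm.comp measurable_snd).sup (hFνm.comp measurable_snd)))
  rw [hswap]
  refine lintegral_congr fun t => ?_
  have h1 : (0:ℝ) ≤ Fμ t ⊓ Fν t := le_min (aux_F_nonneg hμ hFμ t) (aux_F_nonneg hν hFν t)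
  have h2 : Fμ t ⊔ Fν t ≤ 1 := max_le (aux_F_le_one hμ hFμ t) (aux_F_le_one hν hFν t)
  rw [lintegral_indicator_one measurableSet_Ioc, Measure.restrict_apply measurableSet_Ioc,
    inter_eq_left.mpr (Ioc_subset_Ioc h1 h2), Real.volume_Ioc, max_sub_min_eq_abs, abs_sub_comm]

/-- Lower bound for an arbitrary coupling. -/
lemma aux_lb [IsProbabilityMeasure μ] [IsProbabilityMeasure ν]
    (hμ : μ Xᶜ = 0) (hν : ν Xᶜ = 0)
    (hFμ : ∀ z, Fμ z = (μ (X ∩ Iic z)).toReal)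
    (hFν : ∀ z, Fν z = (ν (X ∩ Iic z)).toReal)
    (γ' : Measure (ℝ × ℝ)) [IsProbabilityMeasure γ']
    (h1 : γ'.map Prod.fst = μ) (h2 : γ'.map Prod.snd = ν) :
    ∫⁻ t, ENNReal.ofReal |Fμ t - Fν t| ∂volume ≤ ∫⁻ p, ENNReal.ofReal |p.1 - p.2| ∂γ' := by
  have hEmeas : ∀ t : ℝ, MeasurableSet {p : ℝ × ℝ | p.1 ⊓ p.2 ≤ t ∧ t < p.1 ⊔ p.2} := by
    intro t
    exact (measurableSet_le (measurable_fst.inf measurable_snd) measurable_const).inter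
      (measurableSet_lt measurable_const (measurable_fst.sup measurable_snd))
  have hms : ∀ t : ℝ, ENNReal.ofReal |Fμ t - Fν t|
      ≤ γ' {p : ℝ × ℝ | p.1 ⊓ p.2 ≤ t ∧ t < p.1 ⊔ p.2} := by
    intro t
    set E := {p : ℝ × ℝ | p.1 ⊓ p.2 ≤ t ∧ t < p.1 ⊔ p.2} with hE
    have hAE : Prod.fst ⁻¹' (Iic t) ⊆ (Prod.snd ⁻¹' (Iic t)) ∪ E := by
      rintro ⟨x, y⟩ hx
      by_cases hy : y ≤ t
      · exact Or.inl hy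
      · exact Or.inr ⟨le_trans inf_le_left hx, lt_of_lt_of_le (not_le.mp hy) le_sup_right⟩
    have hBE : Prod.snd ⁻¹' (Iic t) ⊆ (Prod.fst ⁻¹' (Iic t)) ∪ E := by
      rintro ⟨x, y⟩ hy
      by_cases hx : x ≤ t
      · exact Or.inl hx
      · exact Or.inr ⟨le_trans inf_le_right hy, lt_of_lt_of_le (not_le.mp hx) le_sup_left⟩
    have ha : γ' (Prod.fst ⁻¹' (Iic t)) = μ (Iic t) := by
      rw [← h1, Measure.map_apply measurable_fst measurableSet_Iic]
    have hb : γ' (Prod.snd ⁻¹' (Iic t)) = ν (Iic t) := by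
      rw [← h2, Measure.map_apply measurable_snd measurableSet_Iic]
    have hab : μ (Iic t) ≤ ν (Iic t) + γ' E := by
      rw [← ha, ← hb]; exact le_trans (measure_mono hAE) (measure_union_le _ _)
    have hba : ν (Iic t) ≤ μ (Iic t) + γ' E := by
      rw [← ha, ← hb]; exact le_trans (measure_mono hBE) (measure_union_le _ _)
    have hFμt : ENNReal.ofReal (Fμ t) = μ (Iic t) := by
      rw [aux_F_eq hμ hFμ, ENNReal.ofReal_toReal (measure_ne_top _ _)]
    have hFνt : ENNReal.ofReal (Fν t) = ν (Iic t) := by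
      rw [aux_F_eq hν hFν, ENNReal.ofReal_toReal (measure_ne_top _ _)]
    rcases le_total (Fμ t) (Fν t) with h | h
    · rw [abs_sub_comm, abs_of_nonneg (sub_nonneg.mpr h),
        ENNReal.ofReal_sub _ (aux_F_nonneg hμ hFμ t), hFμt, hFνt]
      exact tsub_le_iff_right.mpr (by rwa [add_comm])
    · rw [abs_of_nonneg (sub_nonneg.mpr h),
        ENNReal.ofReal_sub _ (aux_F_nonneg hν hFν t), hFμt, hFνt]
      exact tsub_le_iff_right.mpr (by rwa [add_comm])
  calc ∫⁻ t, ENNReal.ofReal |Fμ t - Fν t| ∂volume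
      ≤ ∫⁻ t, γ' {p : ℝ × ℝ | p.1 ⊓ p.2 ≤ t ∧ t < p.1 ⊔ p.2} ∂volume := lintegral_mono hms
    _ = ∫⁻ t, ∫⁻ p, {p : ℝ × ℝ | p.1 ⊓ p.2 ≤ t ∧ t < p.1 ⊔ p.2}.indicator 1 p ∂γ' ∂volume := by
        refine lintegral_congr fun t => ?_
        rw [lintegral_indicator_one (hEmeas t)]
    _ = ∫⁻ p, ∫⁻ t, {p : ℝ × ℝ | p.1 ⊓ p.2 ≤ t ∧ t < p.1 ⊔ p.2}.indicator 1 p ∂volume ∂γ' := by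
        refine lintegral_lintegral_swap ?_
        have heq : (Function.uncurry fun t (p : ℝ × ℝ) =>
            ({p : ℝ × ℝ | p.1 ⊓ p.2 ≤ t ∧ t < p.1 ⊔ p.2}).indicator (1 : (ℝ × ℝ) → ℝ≥0∞) p)
            = fun z : ℝ × (ℝ × ℝ) => if z.2.1 ⊓ z.2.2 ≤ z.1 ∧ z.1 < z.2.1 ⊔ z.2.2 then 1 else 0 := by
          funext z
          simp [Function.uncurry, indicator_apply]
        rw [heq]
        refine (Measurable.ite ?_ measurable_const measurable_const).aemeasurable
        exact (measurableSet_le (measurable_snd.fst.inf measurable_snd.snd)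
          measurable_fst).inter (measurableSet_lt measurable_fst
          (measurable_snd.fst.sup measurable_snd.snd))
    _ = ∫⁻ p, ENNReal.ofReal |p.1 - p.2| ∂γ' := by
        refine lintegral_congr fun p => ?_
        have : (fun t => ({q : ℝ × ℝ | q.1 ⊓ q.2 ≤ t ∧ t < q.1 ⊔ q.2}).indicator (1 : (ℝ × ℝ) → ℝ≥0∞) p)
            = fun t => (Ico (p.1 ⊓ p.2) (p.1 ⊔ p.2)).indicator (1 : ℝ → ℝ≥0∞) t := by
          funext t
          simp [indicator_apply, mem_Ico]
        rw [this, lintegral_indicator_one measurableSet_Ico, ← aux_abs_repr]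

/-- A coupling of measures supported on `X` is supported on `X ×ˢ X`. -/
lemma aux_supp [IsProbabilityMeasure μ] [IsProbabilityMeasure ν]
    (hX : IsCompact X)
    (hμ : μ Xᶜ = 0) (hν : ν Xᶜ = 0)
    (γ' : Measure (ℝ × ℝ))
    (h1 : γ'.map Prod.fst = μ) (h2 : γ'.map Prod.snd = ν) :
    γ' ((X ×ˢ X)ᶜ) = 0 := by
  have hXm : MeasurableSet Xᶜ := hX.isClosed.measurableSet.compl
  have hsub : (X ×ˢ X)ᶜ ⊆ (Prod.fst ⁻¹' Xᶜ) ∪ (Prod.snd ⁻¹' Xᶜ) := by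
    rintro ⟨x, y⟩ hp
    rw [mem_compl_iff, mem_prod] at hp
    rcases not_and_or.mp hp with h | h
    · exact Or.inl h
    · exact Or.inr h
  refine le_antisymm ?_ (zero_le)
  calc γ' ((X ×ˢ X)ᶜ) ≤ γ' (Prod.fst ⁻¹' Xᶜ) + γ' (Prod.snd ⁻¹' Xᶜ) :=
        le_trans (measure_mono hsub) (measure_union_le _ _)
    _ = μ Xᶜ + ν Xᶜ := by
        rw [← h1, ← h2, Measure.map_apply measurable_fst hXm, Measure.map_apply measurable_snd hXm]
    _ = 0 := by rw [hμ, hν, add_zero]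

/-- Finiteness of the transport cost. -/
lemma aux_fin [IsProbabilityMeasure μ] [IsProbabilityMeasure ν]
    (hX : IsCompact X)
    (hμ : μ Xᶜ = 0) (hν : ν Xᶜ = 0)
    (γ' : Measure (ℝ × ℝ)) [IsProbabilityMeasure γ']
    (h1 : γ'.map Prod.fst = μ) (h2 : γ'.map Prod.snd = ν) :
    ∫⁻ p, ENNReal.ofReal |p.1 - p.2| ∂γ' ≤ ENNReal.ofReal (sSup X - sInf X) := by
  have h0 := aux_supp hX hμ hν γ' h1 h2
  have hae : ∀ᵐ p ∂γ', ENNReal.ofReal |p.1 - p.2| ≤ ENNReal.ofReal (sSup X - sInf X) := by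
    rw [ae_iff]
    refine measure_mono_null (fun p hp => ?_) h0
    simp only [mem_setOf_eq, not_le] at hp
    rw [mem_compl_iff, mem_prod]
    intro hmem
    have hb1 : sInf X ≤ p.1 := csInf_le hX.bddBelow hmem.1
    have hb2 : p.1 ≤ sSup X := le_csSup hX.bddAbove hmem.1
    have hb3 : sInf X ≤ p.2 := csInf_le hX.bddBelow hmem.2
    have hb4 : p.2 ≤ sSup X := le_csSup hX.bddAbove hmem.2
    have habs : |p.1 - p.2| ≤ sSup X - sInf X :=
      abs_sub_le_iff.mpr ⟨by linarith, by linarith⟩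
    exact absurd (ENNReal.ofReal_le_ofReal habs) (not_le.mpr hp)
  calc ∫⁻ p, ENNReal.ofReal |p.1 - p.2| ∂γ'
      ≤ ∫⁻ _, ENNReal.ofReal (sSup X - sInf X) ∂γ' := lintegral_mono_ae hae
    _ = ENNReal.ofReal (sSup X - sInf X) := by rw [lintegral_const, measure_univ, mul_one]

end Aux3
theorem stmt_3 (X : Set ℝ) (hX : IsCompact X) (hXne : X.Nonempty)
    (μ ν : Measure ℝ) [IsProbabilityMeasure μ] [IsProbabilityMeasure ν]
    (hμ : μ Xᶜ = 0) (hν : ν Xᶜ = 0)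
    (Fμ Fν : ℝ → ℝ)
    (hFμ : ∀ z, Fμ z = (μ (X ∩ Iic z)).toReal)
    (hFν : ∀ z, Fν z = (ν (X ∩ Iic z)).toReal)
    (Qμ Qν : ℝ → ℝ)
    (hQμ : ∀ t, Qμ t = sInf {x | x ∈ X ∧ t ≤ Fμ x})
    (hQν : ∀ t, Qν t = sInf {x | x ∈ X ∧ t ≤ Fν x})
    (Ω : Type*) [MeasurableSpace Ω] (P : Measure Ω) [IsProbabilityMeasure P]
    (U : Ω → ℝ) (hU : Measurable U)
    (hUnif : P.map U = volume.restrict (Icc (0:ℝ) 1))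
    (γ : Measure (ℝ × ℝ)) (hγ : γ = P.map (fun ω => (Qμ (U ω), Qν (U ω)))) :
    γ.map Prod.fst = μ ∧ γ.map Prod.snd = ν ∧
      ∫ p, |p.1 - p.2| ∂γ
        = sInf {c | ∃ γ' : Measure (ℝ × ℝ), IsProbabilityMeasure γ' ∧
            γ'.map Prod.fst = μ ∧ γ'.map Prod.snd = ν ∧ c = ∫ p, |p.1 - p.2| ∂γ'} := by
  set Rμ : ℝ → ℝ := fun u => Qμ (min u 1) with hRμdef
  set Rν : ℝ → ℝ := fun u => Qν (min u 1) with hRνdef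
  have hRμmono : Monotone Rμ := fun a b hab =>
    aux_Q_monoOn hX hXne hμ hFμ hQμ (min_le_min_right 1 hab) (min_le_right b 1)
  have hRνmono : Monotone Rν := fun a b hab =>
    aux_Q_monoOn hX hXne hν hFν hQν (min_le_min_right 1 hab) (min_le_right b 1)
  have hRμm : Measurable Rμ := hRμmono.measurable
  have hRνm : Measurable Rν := hRνmono.measurable
  have hU1 : ∀ᵐ ω ∂P, U ω ≤ 1 := by
    rw [ae_iff]
    have he : {ω | ¬ U ω ≤ 1} = U ⁻¹' (Ioi 1) := by ext ω; simp [not_le]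
    rw [he, ← Measure.map_apply hU measurableSet_Ioi, hUnif,
      Measure.restrict_apply measurableSet_Ioi]
    have : Ioi (1:ℝ) ∩ Icc 0 1 = ∅ := by
      ext u; simp only [mem_inter_iff, mem_Ioi, mem_Icc, mem_empty_iff_false, iff_false]
      rintro ⟨h1, _, h2⟩; linarith
    rw [this, measure_empty]
  have hae : (fun ω => (Qμ (U ω), Qν (U ω))) =ᵐ[P] (fun ω => (Rμ (U ω), Rν (U ω))) := by
    filter_upwards [hU1] with ω h
    simp only [hRμdef, hRνdef, min_eq_left h]
  have hpairR : Measurable (fun ω => (Rμ (U ω), Rν (U ω))) :=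
    (hRμm.comp hU).prodMk (hRνm.comp hU)
  have hγ' : γ = P.map (fun ω => (Rμ (U ω), Rν (U ω))) := by
    rw [hγ]; exact Measure.map_congr hae
  have hlawμ : γ.map Prod.fst = μ := by
    rw [hγ', Measure.map_map measurable_fst hpairR]
    have h0 : (Prod.fst ∘ fun ω => (Rμ (U ω), Rν (U ω))) = fun ω => Rμ (U ω) := rfl
    rw [h0, show (fun ω => Rμ (U ω)) = Rμ ∘ U from rfl, ← Measure.map_map hRμm hU, hUnif]
    exact aux_law hX hXne hμ hFμ hQμ
  have hlawν : γ.map Prod.snd = ν := by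
    rw [hγ', Measure.map_map measurable_snd hpairR]
    have h0 : (Prod.snd ∘ fun ω => (Rμ (U ω), Rν (U ω))) = fun ω => Rν (U ω) := rfl
    rw [h0, show (fun ω => Rν (U ω)) = Rν ∘ U from rfl, ← Measure.map_map hRνm hU, hUnif]
    exact aux_law hX hXne hν hFν hQν
  haveI instγ : IsProbabilityMeasure γ := by
    rw [hγ']; exact Measure.isProbabilityMeasure_map hpairR.aemeasurable
  have habs_cont : Continuous (fun p : ℝ × ℝ => |p.1 - p.2|) :=
    (continuous_fst.sub continuous_snd).abs
  have hIγ : ∫ p, |p.1 - p.2| ∂γ = ∫ u in Icc (0:ℝ) 1, |Rμ u - Rν u| := by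
    rw [hγ', integral_map hpairR.aemeasurable habs_cont.aestronglyMeasurable]
    have h0 : ∫ ω, |Rμ (U ω) - Rν (U ω)| ∂P = ∫ u, |Rμ u - Rν u| ∂(P.map U) :=
      (integral_map hU.aemeasurable ((hRμm.sub hRνm).abs.aestronglyMeasurable)).symm
    rw [h0, hUnif]
  set L := ∫⁻ u in Icc (0:ℝ) 1, ENNReal.ofReal |Rμ u - Rν u| ∂volume with hL
  have hIL : ∫ u in Icc (0:ℝ) 1, |Rμ u - Rν u| = L.toReal := by
    rw [hL]
    exact integral_eq_lintegral_of_nonneg_ae (ae_of_all _ fun u => abs_nonneg _)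
      ((hRμm.sub hRνm).abs.aestronglyMeasurable)
  have hL2 : L = ∫⁻ u in Ioc (0:ℝ) 1, ENNReal.ofReal |Qμ u - Qν u| ∂volume := by
    rw [hL, show volume.restrict (Icc (0:ℝ) 1) = volume.restrict (Ioc (0:ℝ) 1) from
      (Measure.restrict_congr_set Ioc_ae_eq_Icc).symm]
    refine setLIntegral_congr_fun measurableSet_Ioc (fun u hu => ?_)
    rw [hRμdef, hRνdef]
    simp only [min_eq_left hu.2]
  set B := ∫⁻ t, ENNReal.ofReal |Fμ t - Fν t| ∂volume with hB
  have hLB : L = B := by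
    rw [hL2, hB]; exact aux_eq hX hXne hμ hν hFμ hFν hQμ hQν
  have hmainγ : ∫ p, |p.1 - p.2| ∂γ = B.toReal := by rw [hIγ, hIL, hLB]
  have hgen : ∀ γ' : Measure (ℝ × ℝ), IsProbabilityMeasure γ' → γ'.map Prod.fst = μ →
      γ'.map Prod.snd = ν → B.toReal ≤ ∫ p, |p.1 - p.2| ∂γ' := by
    intro γ' hinst h1 h2
    haveI := hinst
    have hJ := aux_fin hX hμ hν γ' h1 h2
    have hJfin : ∫⁻ p, ENNReal.ofReal |p.1 - p.2| ∂γ' ≠ ⊤ :=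
      ne_top_of_le_ne_top ENNReal.ofReal_ne_top hJ
    have hI : ∫ p, |p.1 - p.2| ∂γ' = (∫⁻ p, ENNReal.ofReal |p.1 - p.2| ∂γ').toReal :=
      integral_eq_lintegral_of_nonneg_ae (ae_of_all _ fun p => abs_nonneg _)
        habs_cont.aestronglyMeasurable
    rw [hI]
    exact ENNReal.toReal_mono hJfin (aux_lb hμ hν hFμ hFν γ' h1 h2)
  refine ⟨hlawμ, hlawν, ?_⟩
  have hmem : ∫ p, |p.1 - p.2| ∂γ ∈ {c | ∃ γ' : Measure (ℝ × ℝ), IsProbabilityMeasure γ' ∧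
      γ'.map Prod.fst = μ ∧ γ'.map Prod.snd = ν ∧ c = ∫ p, |p.1 - p.2| ∂γ'} :=
    ⟨γ, instγ, hlawμ, hlawν, rfl⟩
  refine le_antisymm (le_csInf ⟨_, hmem⟩ ?_) (csInf_le ⟨0, ?_⟩ hmem)
  · rintro c ⟨γ', hinst, h1, h2, rfl⟩
    rw [hmainγ]
    exact hgen γ' hinst h1 h2
  · rintro c ⟨γ', hinst, -, -, rfl⟩
    exact integral_nonneg fun p => abs_nonneg _
end

section
/- Let X = ⋃_{l=1}^{k} [κ̲_l, κ̄_l] be a finite union of disjoint compact intervals with knots κ₀ < κ₁ < ⋯ < κ_m chosen so that κ₀ = min X, κ_m = max X, and every interval endpoint is a knot. Let g₀, g₁, …, g_m be the associated CPWA hat functions on X (g_j is the piecewise affine function equal to 1 at κ_j, 0 at all other knots, affine on X ∩ [κ_{i−1},κ_i] for each i). Then the convex hull of the image set {(g₁(x), …, g_m(x)) : x ∈ X} ⊆ ℝ^m equals the standard simplex {(v₁,…,v_m) : v_j ≥ 0 for all j, ∑_{j=1}^m v_j ≤ 1}. -/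
open Set

private lemma sum_ind (m t : ℕ) (c : ℝ) (hc : 0 ≤ c) :
    ∑ j : Fin m, (if (j : ℕ) + 1 = t then c else 0) ≤ c := by
  by_cases h : 1 ≤ t ∧ t ≤ m
  · have key : ∀ j : Fin m, ((j : ℕ) + 1 = t) = (j = (⟨t - 1, by omega⟩ : Fin m)) := by
      intro j
      rw [eq_iff_iff, Fin.ext_iff]
      simp only []
      omega
    simp only [key]
    rw [Finset.sum_ite_eq']
    simp
  · have h2 : ∀ j : Fin m, ¬((j : ℕ) + 1 = t) := fun j => by have := j.isLt; omega
    simp only [h2, if_false]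
    simpa using hc

theorem stmt_4 (m : ℕ) (hm : 1 ≤ m) (κ : ℕ → ℝ)
    (hκ : ∀ i < m, κ i < κ (i + 1))
    (X : Set ℝ)
    (hknots : ∀ i ≤ m, κ i ∈ X)
    (hsub : X ⊆ Icc (κ 0) (κ m))
    (hpieces : ∀ i, 1 ≤ i → i ≤ m →
      X ∩ Icc (κ (i - 1)) (κ i) = Icc (κ (i - 1)) (κ i) ∨
      X ∩ Icc (κ (i - 1)) (κ i) = {κ (i - 1), κ i})
    (g : ℕ → ℝ → ℝ)
    (hg0 : ∀ x, g 0 x = max (κ 1 - x) 0 / (κ 1 - κ 0))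
    (hgj : ∀ j, 1 ≤ j → j < m → ∀ x,
      g j x = min (max (x - κ (j - 1)) 0 / (κ j - κ (j - 1)))
        (max (κ (j + 1) - x) 0 / (κ (j + 1) - κ j)))
    (hgm : ∀ x, g m x = max (x - κ (m - 1)) 0 / (κ m - κ (m - 1))) :
    convexHull ℝ ((fun x => fun j : Fin m => g (j.val + 1) x) '' X)
      = {v : Fin m → ℝ | (∀ j, 0 ≤ v j) ∧ ∑ j, v j ≤ 1} := by
  classical
  -- monotonicity of κ
  have hmono : ∀ j, j ≤ m → ∀ i, i ≤ j → κ i ≤ κ j := by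
    intro j hj
    induction j with
    | zero => intro i hi; rw [Nat.le_zero.mp hi]
    | succ n ih =>
      intro i hi
      rcases Nat.eq_or_lt_of_le hi with h | h
      · exact le_of_eq (by rw [h])
      · exact (ih (by omega) i (by omega)).trans (hκ n (by omega)).le
  have hpos' : ∀ i < m, 0 < κ (i + 1) - κ i := fun i h => by linarith [hκ i h]
  -- nonnegativity of g j for j ≤ m
  have hnn : ∀ j, j ≤ m → ∀ x, 0 ≤ g j x := by
    intro j hj x
    rcases Nat.eq_zero_or_pos j with h0 | h1
    · subst h0
      rw [hg0]
      exact div_nonneg (le_max_right _ _) (hpos' 0 (by omega)).le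
    · rcases Nat.lt_or_ge j m with hlt | hge
      · rw [hgj j h1 hlt]
        have d1 : 0 < κ j - κ (j - 1) := by
          have := hpos' (j - 1) (by omega)
          have e : j - 1 + 1 = j := by omega
          rwa [e] at this
        exact le_min (div_nonneg (le_max_right _ _) d1.le)
          (div_nonneg (le_max_right _ _) (hpos' j hlt).le)
      · have hjm : j = m := le_antisymm hj hge
        rw [hjm, hgm]
        have d1 : 0 < κ m - κ (m - 1) := by
          have := hpos' (m - 1) (by omega)
          have e : m - 1 + 1 = m := by omega
          rwa [e] at this
        exact div_nonneg (le_max_right _ _) d1.le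
  -- evaluation at knots
  have heval : ∀ i, i ≤ m → ∀ j, j ≤ m → g j (κ i) = if i = j then 1 else 0 := by
    intro i hi j hj
    rcases Nat.eq_zero_or_pos j with hj0 | hj1
    · subst hj0
      have hd : 0 < κ 1 - κ 0 := hpos' 0 (by omega)
      rcases Nat.eq_zero_or_pos i with hi0 | hi1
      · subst hi0
        rw [hg0, if_pos rfl, max_eq_left hd.le]
        exact div_self hd.ne'
      · have h1i : κ 1 ≤ κ i := hmono i hi 1 hi1
        rw [hg0, if_neg (by omega), max_eq_right (by linarith), zero_div]
    · rcases Nat.lt_or_ge j m with hlt | hge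
      · have e : j - 1 + 1 = j := by omega
        have d1 : 0 < κ j - κ (j - 1) := by have := hpos' (j - 1) (by omega); rwa [e] at this
        have d2 : 0 < κ (j + 1) - κ j := hpos' j hlt
        rw [hgj j hj1 hlt]
        rcases lt_trichotomy i j with hij | hij | hij
        · have : κ i ≤ κ (j - 1) := hmono (j - 1) (by omega) i (by omega)
          rw [if_neg (by omega), max_eq_right (by linarith), zero_div,
            min_eq_left (div_nonneg (le_max_right _ _) d2.le)]
        · subst hij
          rw [if_pos rfl, max_eq_left (by linarith), max_eq_left (by linarith),
            div_self d1.ne', div_self d2.ne', min_self]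
        · have : κ (j + 1) ≤ κ i := hmono i hi (j + 1) (by omega)
          rw [if_neg (by omega),
            show max (κ (j + 1) - κ i) 0 = 0 from max_eq_right (by linarith), zero_div,
            min_eq_right (div_nonneg (le_max_right _ _) d1.le)]
      · have hjm : j = m := le_antisymm hj hge
        have e : m - 1 + 1 = m := by omega
        have d1 : 0 < κ m - κ (m - 1) := by have := hpos' (m - 1) (by omega); rwa [e] at this
        rw [hjm, hgm]
        rcases Nat.eq_or_lt_of_le hi with him | him
        · rw [him, if_pos rfl, max_eq_left (by linarith)]
          exact div_self d1.ne'
        · have : κ i ≤ κ (m - 1) := hmono (m - 1) (by omega) i (by omega)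
          rw [if_neg (by omega), max_eq_right (by linarith), zero_div]
  -- each x ∈ X lies in some piece
  have hfind : ∀ x ∈ X, ∃ i, 1 ≤ i ∧ i ≤ m ∧ κ (i - 1) ≤ x ∧ x ≤ κ i := by
    intro x hx
    obtain ⟨hx0, hxm⟩ := hsub hx
    have hP : ∃ n, x ≤ κ n := ⟨m, hxm⟩
    set i := Nat.find hP with hidef
    have hxi : x ≤ κ i := Nat.find_spec hP
    have him : i ≤ m := Nat.find_le hxm
    rcases Nat.eq_zero_or_pos i with h0 | h1
    · refine ⟨1, le_rfl, hm, by simpa using hx0, ?_⟩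
      rw [h0] at hxi
      exact hxi.trans (hmono 1 hm 0 (by omega))
    · have hnot : ¬ x ≤ κ (i - 1) := Nat.find_min hP (by omega)
      exact ⟨i, h1, him, (not_le.mp hnot).le, hxi⟩
  -- sum bound
  have hsum : ∀ x ∈ X, ∑ j : Fin m, g ((j : ℕ) + 1) x ≤ 1 := by
    intro x hx
    obtain ⟨i, hi1, him, hxl, hxr⟩ := hfind x hx
    have e1 : i - 1 + 1 = i := by omega
    have hd : 0 < κ i - κ (i - 1) := by have := hpos' (i - 1) (by omega); rwa [e1] at this
    set c1 : ℝ := (κ i - x) / (κ i - κ (i - 1)) with hc1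
    set c2 : ℝ := (x - κ (i - 1)) / (κ i - κ (i - 1)) with hc2
    have hc1nn : 0 ≤ c1 := div_nonneg (by linarith) hd.le
    have hc2nn : 0 ≤ c2 := div_nonneg (by linarith) hd.le
    have hbound : ∀ j : Fin m, g ((j : ℕ) + 1) x ≤
        (if (j : ℕ) + 1 = i - 1 then c1 else 0) + (if (j : ℕ) + 1 = i then c2 else 0) := by
      intro j
      have hjlt := j.isLt
      by_cases h1 : (j : ℕ) + 1 = i - 1
      · rw [if_pos h1, if_neg (by omega), add_zero, h1]
        rw [hgj (i - 1) (by omega) (by omega), e1]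
        refine (min_le_right _ _).trans ?_
        rw [hc1, max_eq_left (by linarith)]
      · by_cases h2 : (j : ℕ) + 1 = i
        · rw [if_neg h1, if_pos h2, zero_add, h2, hc2]
          rcases Nat.lt_or_ge i m with hlt | hge
          · rw [hgj i hi1 hlt]
            refine (min_le_left _ _).trans ?_
            rw [max_eq_left (by linarith)]
          · have him' : i = m := le_antisymm him hge
            rw [him'] at hxl hxr hd ⊢
            rw [hgm, max_eq_left (by linarith)]
        · rw [if_neg h1, if_neg h2, add_zero]
          rcases Nat.lt_or_ge ((j : ℕ) + 1) i with hlt | hge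
          · have hjm' : (j : ℕ) + 1 < m := by omega
            rw [hgj ((j : ℕ) + 1) (by omega) hjm']
            have hk : κ ((j : ℕ) + 1 + 1) ≤ κ (i - 1) := hmono (i - 1) (by omega) _ (by omega)
            refine (min_le_right _ _).trans ?_
            rw [max_eq_right (by linarith), zero_div]
          · have hge' : i + 1 ≤ (j : ℕ) + 1 := by omega
            have hk : x ≤ κ ((j : ℕ)) := hxr.trans (hmono (j : ℕ) (by omega) i (by omega))
            rcases Nat.lt_or_ge ((j : ℕ) + 1) m with hlt2 | hge2
            · rw [hgj ((j : ℕ) + 1) (by omega) hlt2]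
              refine (min_le_left _ _).trans ?_
              simp only [Nat.add_sub_cancel]
              rw [max_eq_right (by linarith), zero_div]
            · have hEq : (j : ℕ) + 1 = m := by omega
              have hEq2 : m - 1 = (j : ℕ) := by omega
              rw [hEq, hgm, hEq2, max_eq_right (by linarith), zero_div]
    calc ∑ j : Fin m, g ((j : ℕ) + 1) x
        ≤ ∑ j : Fin m, ((if (j : ℕ) + 1 = i - 1 then c1 else 0)
            + (if (j : ℕ) + 1 = i then c2 else 0)) :=
          Finset.sum_le_sum (fun j _ => hbound j)
      _ = (∑ j : Fin m, if (j : ℕ) + 1 = i - 1 then c1 else 0)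
            + (∑ j : Fin m, if (j : ℕ) + 1 = i then c2 else 0) := Finset.sum_add_distrib
      _ ≤ c1 + c2 := add_le_add (sum_ind m (i - 1) c1 hc1nn) (sum_ind m i c2 hc2nn)
      _ = 1 := by
          rw [hc1, hc2, ← add_div,
            show κ i - x + (x - κ (i - 1)) = κ i - κ (i - 1) by ring]
          exact div_self hd.ne'
  apply Subset.antisymm
  · apply convexHull_min
    · rintro _ ⟨x, hx, rfl⟩
      exact ⟨fun j => hnn ((j : ℕ) + 1) j.isLt x, hsum x hx⟩
    · intro u hu v hv a b ha hb hab
      refine ⟨fun j => ?_, ?_⟩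
      · have h1 : (a • u + b • v) j = a * u j + b * v j := rfl
        rw [h1]
        have := hu.1 j
        have := hv.1 j
        nlinarith
      · have h1 : ∑ j, (a • u + b • v) j = a * ∑ j, u j + b * ∑ j, v j := by
          simp only [Pi.add_apply, Pi.smul_apply, smul_eq_mul, Finset.sum_add_distrib,
            Finset.mul_sum]
        rw [h1]
        nlinarith [hu.2, hv.2]
  · intro v hv
    obtain ⟨hv1, hv2⟩ := hv
    set w : Fin (m + 1) → ℝ := Fin.cons (1 - ∑ j, v j) v with hw
    set z : Fin (m + 1) → (Fin m → ℝ) := fun i => fun j : Fin m => g ((j : ℕ) + 1) (κ (i : ℕ))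
      with hz
    have hwnn : ∀ i ∈ Finset.univ, 0 ≤ w i := by
      intro i _
      refine Fin.cases ?_ ?_ i
      · rw [hw, Fin.cons_zero]; linarith
      · intro j; rw [hw, Fin.cons_succ]; exact hv1 j
    have hwsum : ∑ i, w i = 1 := by rw [hw, Fin.sum_cons]; ring
    have hzmem : ∀ i ∈ Finset.univ,
        z i ∈ ((fun x => fun j : Fin m => g ((j : ℕ) + 1) x) '' X) := by
      intro i _
      exact ⟨κ (i : ℕ), hknots (i : ℕ) (Nat.lt_succ_iff.mp i.isLt), rfl⟩
    have hcm := Finset.centerMass_mem_convexHull Finset.univ hwnn (by rw [hwsum]; norm_num) hzmem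
    have hveq : Finset.univ.centerMass w z = v := by
      rw [Finset.centerMass_eq_of_sum_1 _ _ hwsum]
      funext j
      rw [Finset.sum_apply]
      have hterm : ∀ i : Fin (m + 1), (w i • z i) j = if i = Fin.succ j then v j else 0 := by
        intro i
        by_cases hij : i = Fin.succ j
        · subst hij
          rw [if_pos rfl]
          have h1 : z (Fin.succ j) j = 1 := by
            simp only [hz]
            simp only [Fin.val_succ]
            rw [heval ((j : ℕ) + 1) j.isLt ((j : ℕ) + 1) j.isLt, if_pos rfl]
          have h2 : w (Fin.succ j) = v j := by
            rw [hw]; exact Fin.cons_succ _ _ _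
          rw [Pi.smul_apply, h1, h2, smul_eq_mul, mul_one]
        · rw [if_neg hij]
          have h1 : z i j = 0 := by
            simp only [hz]
            rw [heval (i : ℕ) (Nat.lt_succ_iff.mp i.isLt) ((j : ℕ) + 1) j.isLt,
              if_neg (fun hc => hij (Fin.ext (by rw [Fin.val_succ]; exact hc)))]
          rw [Pi.smul_apply, h1, smul_zero]
      simp only [hterm]
      rw [Finset.sum_ite_eq']
      simp
    rw [← hveq]
    exact hcm
end

section
/- Let X ⊆ ℝ be a finite union of compact intervals ⋃_{l=1}^{k} [κ̲_l, κ̄_l], μ a Borel probability measure on X, and let 𝒢 be the collection of CPWA hat functions associated with knots κ_{l,1} < ⋯ < κ_{l,m_l} within each interval (with κ_{l,1} = κ̲_l, κ_{l,m_l} = κ̄_l when the interval is nondegenerate). Let [μ]_𝒢 be the set of Borel probability measures ν on X such that ∫ g dν = ∫ g dμ for every g ∈ 𝒢. Then sup_{ν ∈ [μ]_𝒢} W₁(μ, ν) ≤ ∑_{l=1}^{k} μ([κ̲_l, κ̄_l]) · max_{1 ≤ j ≤ m_l} (κ_{l,(j+1)∧m_l} − κ_{l,(j−1)∨1}). -/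
open MeasureTheory Set
open scoped ENNReal

private lemma map_finset_sum_aux {α β ι : Type*} [MeasurableSpace α] [MeasurableSpace β]
    {f : α → β} (hf : Measurable f) (s : Finset ι) (μ : ι → Measure α) :
    (∑ i ∈ s, μ i).map f = ∑ i ∈ s, (μ i).map f := by
  classical
  induction s using Finset.induction with
  | empty => simp
  | insert _ _ h ih =>
      rw [Finset.sum_insert h, Finset.sum_insert h, Measure.map_add _ _ hf, ih]

private lemma aux_regroup {β : Type*} [AddCommMonoid β] {k M : ℕ} (hk : 1 ≤ k)
    {s e : ℕ → ℕ} (hs0 : s 0 = 0) (heM : e (k - 1) = M)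
    (hse : ∀ l < k, s l ≤ e l)
    (hnext : ∀ l, l + 1 < k → s (l + 1) = e l + 1)
    (f : ℕ → β) :
    ∑ j ∈ Finset.range (M + 1), f j
      = ∑ l ∈ Finset.range k, ∑ j ∈ Finset.Icc (s l) (e l), f j := by
  have key : ∀ n, 1 ≤ n → n ≤ k →
      ∑ l ∈ Finset.range n, ∑ j ∈ Finset.Icc (s l) (e l), f j
        = ∑ j ∈ Finset.range (e (n - 1) + 1), f j := by
    intro n
    induction n with
    | zero => omega
    | succ m ih =>
        intro _ hnk
        rcases Nat.eq_zero_or_pos m with hm | hm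
        · subst hm
          rw [Finset.sum_range_one, hs0]
          rw [Finset.range_eq_Ico, Finset.Ico_add_one_right_eq_Icc]
        · have hmk : m < k := by omega
          rw [Finset.sum_range_succ, ih hm (le_of_lt hmk)]
          have hsm : s m = e (m - 1) + 1 := by
            have h := hnext (m - 1) (by omega)
            have h2 : m - 1 + 1 = m := by omega
            rwa [h2] at h
          have h1 : m + 1 - 1 = m := by omega
          rw [h1, Finset.range_eq_Ico, ← Finset.Ico_add_one_right_eq_Icc (s m) (e m), ← hsm, Finset.range_eq_Ico]
          exact Finset.sum_Ico_consecutive f (m := 0) (n := s m) (k := e m + 1) (by omega)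
            (by rw [hsm]; have := hse m hmk; omega)
  have h := key k hk le_rfl
  rw [heM] at h
  exact h.symm

/-- the supremum Wasserstein-1 distance between `μ` and any member `ν` of the
moment set matching the integrals of the CPWA hat functions is bounded by
`∑ l, μ(I_l) · max_j (κ_{l,(j+1)∧m_l} − κ_{l,(j−1)∨1})`.  The global knots are
`c 0 < c 1 < ⋯ < c M`, and interval `l` (for `l < k`) consists of the knots with indices
`s l, …, e l`. -/
theorem stmt_5
    (k : ℕ) (hk : 1 ≤ k) (M : ℕ) (hM : 1 ≤ M)
    (c : ℕ → ℝ) (hc : ∀ i < M, c i < c (i + 1))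
    (s e : ℕ → ℕ)
    (hs0 : s 0 = 0) (heM : e (k - 1) = M)
    (hse : ∀ l < k, s l ≤ e l)
    (hnext : ∀ l, l + 1 < k → s (l + 1) = e l + 1)
    (X : Set ℝ) (hXdef : X = ⋃ l ∈ Finset.range k, Icc (c (s l)) (c (e l)))
    (μ : Measure ℝ) [IsProbabilityMeasure μ] (hμ : μ Xᶜ = 0)
    (g : ℕ → ℝ → ℝ)
    (hg0 : ∀ x, g 0 x = max (c 1 - x) 0 / (c 1 - c 0))
    (hgj : ∀ j, 1 ≤ j → j < M → ∀ x,
      g j x = min (max (x - c (j - 1)) 0 / (c j - c (j - 1)))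
        (max (c (j + 1) - x) 0 / (c (j + 1) - c j)))
    (hgM : ∀ x, g M x = max (x - c (M - 1)) 0 / (c M - c (M - 1)))
    (ν : Measure ℝ) [IsProbabilityMeasure ν] (hν : ν Xᶜ = 0)
    (hmom : ∀ j, 1 ≤ j → j ≤ M → ∫ x, g j x ∂ν = ∫ x, g j x ∂μ) :
    sInf {r | ∃ γ : Measure (ℝ × ℝ), IsProbabilityMeasure γ ∧
        γ.map Prod.fst = μ ∧ γ.map Prod.snd = ν ∧ r = ∫ p, |p.1 - p.2| ∂γ}
      ≤ ∑ l ∈ Finset.range k, (μ (Icc (c (s l)) (c (e l)))).toReal *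
          sSup {r | ∃ j, s l ≤ j ∧ j ≤ e l ∧
            r = c (min (j + 1) (e l)) - c (max (j - 1) (s l))} := by
  classical
  -- ## Structural facts
  have cmono : ∀ {i j : ℕ}, i ≤ j → j ≤ M → c i ≤ c j := by
    intro i j hij hjM
    induction j with
    | zero => have : i = 0 := by omega
              rw [this]
    | succ n ih =>
        rcases Nat.eq_or_lt_of_le hij with h | h
        · rw [h]
        · exact le_trans (ih (by omega) (by omega)) (le_of_lt (hc n (by omega)))
  have cpos : ∀ i < M, 0 < c (i + 1) - c i := fun i h => sub_pos.2 (hc i h)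
  have helee : ∀ l d, l + d < k → e l ≤ e (l + d) := by
    intro l d
    induction d with
    | zero => intro _; exact le_rfl
    | succ n ih =>
        intro h
        have h1 : l + n < k := by omega
        have h2 := hnext (l + n) (by omega)
        have h3 := hse (l + n + 1) (by omega)
        have h4 : e l ≤ e (l + n) := ih h1
        show e l ≤ e (l + n + 1)
        omega
  have heleM : ∀ l < k, e l ≤ M := by
    intro l hl
    have h1 : l + (k - 1 - l) = k - 1 := by omega
    have := helee l (k - 1 - l) (by omega)
    rw [h1, heM] at this
    exact this
  have hsleM : ∀ l < k, s l ≤ M := fun l h => le_trans (hse l h) (heleM l h)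
  have hchain : ∀ l l', l < l' → l' < k → e l + 1 ≤ s l' := by
    intro l l' hll hl'
    have key : ∀ d, l + d + 1 < k → e l + 1 ≤ s (l + d + 1) := by
      intro d
      induction d with
      | zero => intro h; rw [hnext l h]
      | succ n ih =>
          intro h
          have h1 : l + n + 1 < k := by omega
          have h2 := ih h1
          have h3 := hse (l + n + 1) h1
          have h4 := hnext (l + n + 1) (by omega)
          have h5 : l + (n + 1) + 1 = l + n + 1 + 1 := by omega
          rw [h5, h4]
          omega
    have h1 : l + (l' - l - 1) + 1 = l' := by omega
    have := key (l' - l - 1) (by omega)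
    rwa [h1] at this
  -- ## Pointwise facts about the hat functions
  have gmeas : ∀ j ≤ M, Measurable (g j) := by
    intro j hj
    rcases Nat.eq_zero_or_pos j with h0 | h1
    · subst h0
      have : g 0 = fun x => max (c 1 - x) 0 / (c 1 - c 0) := funext hg0
      rw [this]
      exact (((measurable_const.sub measurable_id).max measurable_const).div
        measurable_const)
    · rcases Nat.eq_or_lt_of_le hj with hjM | hjM
      · subst hjM
        have : g j = fun x => max (x - c (j - 1)) 0 / (c j - c (j - 1)) := funext (hgM)
        rw [this]
        exact (((measurable_id.sub measurable_const).max measurable_const).div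
          measurable_const)
      · have : g j = fun x => min (max (x - c (j - 1)) 0 / (c j - c (j - 1)))
            (max (c (j + 1) - x) 0 / (c (j + 1) - c j)) := funext (hgj j h1 hjM)
        rw [this]
        exact (((measurable_id.sub measurable_const).max measurable_const).div
          measurable_const).min
          (((measurable_const.sub measurable_id).max measurable_const).div
            measurable_const)
  have gnn : ∀ j ≤ M, ∀ x, 0 ≤ g j x := by
    intro j hj x
    rcases Nat.eq_zero_or_pos j with h0 | h1
    · subst h0
      rw [hg0]
      exact div_nonneg (le_max_right _ _) (le_of_lt (cpos 0 (by omega)))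
    · rcases Nat.eq_or_lt_of_le hj with hjM | hjM
      · subst hjM
        rw [hgM]
        have := cpos (j - 1) (by omega)
        have h2 : j - 1 + 1 = j := by omega
        rw [h2] at this
        exact div_nonneg (le_max_right _ _) (le_of_lt this)
      · rw [hgj j h1 hjM]
        have hd1 := cpos (j - 1) (by omega)
        have h2 : j - 1 + 1 = j := by omega
        rw [h2] at hd1
        exact le_min (div_nonneg (le_max_right _ _) (le_of_lt hd1))
          (div_nonneg (le_max_right _ _) (le_of_lt (cpos j hjM)))
  have gle1 : ∀ j ≤ M, ∀ x, c 0 ≤ x → x ≤ c M → g j x ≤ 1 := by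
    intro j hj x hx0 hxM
    rcases Nat.eq_zero_or_pos j with h0 | h1
    · subst h0
      rw [hg0, div_le_one (cpos 0 (by omega))]
      rcases le_total (c 1 - x) 0 with h | h
      · rw [max_eq_right h]; linarith [cpos 0 (by omega)]
      · rw [max_eq_left h]; linarith
    · rcases Nat.eq_or_lt_of_le hj with hjM | hjM
      · subst hjM
        have hd := cpos (j - 1) (by omega)
        have h2 : j - 1 + 1 = j := by omega
        rw [h2] at hd
        rw [hgM, div_le_one hd]
        rcases le_total (x - c (j - 1)) 0 with h | h
        · rw [max_eq_right h]; linarith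
        · rw [max_eq_left h]; linarith
      · have hd1 := cpos (j - 1) (by omega)
        have h2 : j - 1 + 1 = j := by omega
        rw [h2] at hd1
        have hd2 := cpos j hjM
        rw [hgj j h1 hjM]
        rcases le_total x (c j) with h | h
        · refine le_trans (min_le_left _ _) ?_
          rw [div_le_one hd1]
          rcases le_total (x - c (j - 1)) 0 with h' | h'
          · rw [max_eq_right h']; linarith
          · rw [max_eq_left h']; linarith
        · refine le_trans (min_le_right _ _) ?_
          rw [div_le_one hd2]
          rcases le_total (c (j + 1) - x) 0 with h' | h'
          · rw [max_eq_right h']; linarith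
          · rw [max_eq_left h']; linarith
  have hXmeas : MeasurableSet X := by
    rw [hXdef]
    exact MeasurableSet.biUnion (Finset.range k).countable_toSet
      (fun l _ => measurableSet_Icc)
  have hXsub : X ⊆ Icc (c 0) (c M) := by
    intro x hx
    rw [hXdef] at hx
    simp only [Set.mem_iUnion, Finset.mem_range, Set.mem_Icc] at hx
    obtain ⟨l, hl, hx1, hx2⟩ := hx
    exact ⟨le_trans (cmono (Nat.zero_le _) (hsleM l hl)) hx1,
      le_trans hx2 (cmono (heleM l hl) le_rfl)⟩
  -- partition of unity
  have PoU : ∀ x, c 0 ≤ x → x ≤ c M → ∑ j ∈ Finset.range (M + 1), g j x = 1 := by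
    intro x hx0 hxM
    obtain ⟨i, hiM, hix, hxi⟩ : ∃ i, i < M ∧ c i ≤ x ∧ x ≤ c (i + 1) := by
      by_cases hP : c (M - 1) ≤ x
      · refine ⟨M - 1, by omega, hP, ?_⟩
        have h2 : M - 1 + 1 = M := by omega
        rw [h2]; exact hxM
      · push_neg at hP
        set i := Nat.findGreatest (fun i => c i ≤ x) (M - 1) with hi
        have hile : i ≤ M - 1 := Nat.findGreatest_le _
        have hPi : c i ≤ x :=
          Nat.findGreatest_spec (P := fun i => c i ≤ x) (m := 0) (Nat.zero_le _) hx0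
        have hine : i ≠ M - 1 := by
          intro h; rw [h] at hPi; linarith
        refine ⟨i, by omega, hPi, ?_⟩
        have hgr := Nat.findGreatest_is_greatest (P := fun i => c i ≤ x)
          (n := M - 1) (k := i + 1) (by omega) (by omega)
        exact le_of_not_ge hgr
    have hsub : ({i, i + 1} : Finset ℕ) ⊆ Finset.range (M + 1) := by
      intro j hj
      simp only [Finset.mem_insert, Finset.mem_singleton] at hj
      rcases hj with h | h <;> simp [Finset.mem_range] <;> omega
    have hzero : ∀ j ∈ Finset.range (M + 1), j ∉ ({i, i + 1} : Finset ℕ) → g j x = 0 := by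
      intro j hj hne
      simp only [Finset.mem_insert, Finset.mem_singleton, not_or] at hne
      rw [Finset.mem_range, Nat.lt_succ_iff] at hj
      rcases Nat.lt_or_ge j (i + 1) with hlt | hge
      · have hji : j < i := by omega
        have hcx : c (j + 1) ≤ x := le_trans (cmono (by omega) (by omega)) hix
        rcases Nat.eq_zero_or_pos j with h0 | hj1
        · subst h0
          have hcx' : c 1 ≤ x := by simpa using hcx
          rw [hg0, max_eq_right (show c 1 - x ≤ 0 by linarith), zero_div]
        · have hjM : j < M := by omega
          have hd1 : 0 < c j - c (j - 1) := by
            have := cpos (j - 1) (by omega)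
            have h2 : j - 1 + 1 = j := by omega
            rwa [h2] at this
          rw [hgj j hj1 hjM, max_eq_right (show c (j + 1) - x ≤ 0 by linarith),
            zero_div]
          exact min_eq_right (div_nonneg (le_max_right _ _) (le_of_lt hd1))
      · have hji : i + 2 ≤ j := by omega
        have hcx : x ≤ c (j - 1) := le_trans hxi (cmono (by omega) (by omega))
        rcases Nat.eq_or_lt_of_le hj with hjM | hjM
        · rw [hjM, hgM]
          have h2 : c M = c j := by rw [hjM]
          have h3 : x - c (M - 1) ≤ 0 := by
            have : c (j - 1) = c (M - 1) := by rw [hjM]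
            linarith
          rw [max_eq_right h3, zero_div]
        · rw [hgj j (by omega) hjM,
            max_eq_right (show x - c (j - 1) ≤ 0 by linarith), zero_div]
          exact min_eq_left (div_nonneg (le_max_right _ _) (le_of_lt (cpos j hjM)))
    have hΔ : 0 < c (i + 1) - c i := cpos i hiM
    have hgi : g i x = (c (i + 1) - x) / (c (i + 1) - c i) := by
      rcases Nat.eq_zero_or_pos i with h0 | h1
      · subst h0
        rw [hg0, max_eq_left (by linarith)]
      · have hd' := cpos (i - 1) (by omega)
        have h2 : i - 1 + 1 = i := by omega
        rw [h2] at hd'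
        have hci : c (i - 1) ≤ c i := le_of_lt (by linarith)
        rw [hgj i h1 hiM, max_eq_left (by linarith), max_eq_left (by linarith)]
        apply min_eq_right
        calc (c (i + 1) - x) / (c (i + 1) - c i) ≤ 1 := by
              rw [div_le_one hΔ]; linarith
          _ ≤ (x - c (i - 1)) / (c i - c (i - 1)) := by
              rw [le_div_iff₀ hd']; linarith
    have hgi1 : g (i + 1) x = (x - c i) / (c (i + 1) - c i) := by
      rcases Nat.eq_or_lt_of_le (show i + 1 ≤ M by omega) with hiM1 | hiM1
      · have h := hgM x
        rw [← hiM1] at h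
        simp only [Nat.add_sub_cancel] at h
        rw [h, max_eq_left (by linarith)]
      · have hd2 := cpos (i + 1) hiM1
        rw [hgj (i + 1) (by omega) hiM1]
        simp only [Nat.add_sub_cancel]
        rw [max_eq_left (by linarith)]
        have hle : x ≤ c (i + 1 + 1) := le_trans hxi (cmono (by omega) (by omega))
        rw [max_eq_left (by linarith)]
        apply min_eq_left
        calc (x - c i) / (c (i + 1) - c i) ≤ 1 := by
              rw [div_le_one hΔ]; linarith
          _ ≤ (c (i + 1 + 1) - x) / (c (i + 1 + 1) - c (i + 1)) := by
              rw [le_div_iff₀ hd2]; linarith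
    calc ∑ j ∈ Finset.range (M + 1), g j x
        = ∑ j ∈ ({i, i + 1} : Finset ℕ), g j x := (Finset.sum_subset hsub hzero).symm
      _ = g i x + g (i + 1) x := Finset.sum_pair (by omega)
      _ = 1 := by
          rw [hgi, hgi1, ← add_div, div_eq_one_iff_eq (ne_of_gt hΔ)]
          ring
  -- positivity implies location
  have gpos_lt : ∀ j ≤ M, ∀ x, 0 < g j x →
      (1 ≤ j → c (j - 1) < x) ∧ (j < M → x < c (j + 1)) := by
    intro j hj x hx
    rcases Nat.eq_zero_or_pos j with h0 | h1
    · subst h0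
      refine ⟨by omega, fun _ => ?_⟩
      rw [hg0] at hx
      by_contra h
      push_neg at h
      rw [max_eq_right (by linarith), zero_div] at hx
      exact lt_irrefl 0 hx
    · rcases Nat.eq_or_lt_of_le hj with hjM | hjM
      · refine ⟨fun _ => ?_, by omega⟩
        rw [hjM, hgM] at hx
        by_contra h
        push_neg at h
        have h2 : c (M - 1) = c (j - 1) := by rw [hjM]
        rw [max_eq_right (by linarith), zero_div] at hx
        exact lt_irrefl 0 hx
      · rw [hgj j h1 hjM] at hx
        have hd1 := cpos (j - 1) (by omega)
        have h2 : j - 1 + 1 = j := by omega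
        rw [h2] at hd1
        have hd2 := cpos j hjM
        constructor
        · intro _
          by_contra h
          push_neg at h
          rw [max_eq_right (show x - c (j - 1) ≤ 0 by linarith), zero_div,
            min_eq_left (div_nonneg (le_max_right _ _) (le_of_lt hd2))] at hx
          exact lt_irrefl 0 hx
        · intro _
          by_contra h
          push_neg at h
          rw [max_eq_right (show c (j + 1) - x ≤ 0 by linarith), zero_div,
            min_eq_right (div_nonneg (le_max_right _ _) (le_of_lt hd1))] at hx
          exact lt_irrefl 0 hx
  -- support of hat j (for j in block l) inside the local cell
  have supp : ∀ l < k, ∀ j, s l ≤ j → j ≤ e l → ∀ x ∈ X, 0 < g j x →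
      c (max (j - 1) (s l)) ≤ x ∧ x ≤ c (min (j + 1) (e l)) := by
    intro l hl j hsj hje x hxX hg
    have hjM : j ≤ M := le_trans hje (heleM l hl)
    obtain ⟨hA, hB⟩ := gpos_lt j hjM x hg
    rw [hXdef] at hxX
    simp only [Set.mem_iUnion, Finset.mem_range, Set.mem_Icc] at hxX
    obtain ⟨l', hl', hx1, hx2⟩ := hxX
    have hll : l' = l := by
      rcases lt_trichotomy l' l with h | h | h
      · exfalso
        have h1 : e l' + 1 ≤ s l := hchain l' l h hl
        have hj1 : 1 ≤ j := by omega
        have h3 : x ≤ c (j - 1) :=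
          le_trans hx2 (cmono (by omega) (by omega))
        linarith [hA hj1]
      · exact h
      · exfalso
        have h1 : e l + 1 ≤ s l' := hchain l l' h hl'
        have hjM' : j < M := by
          have := hse l' hl'
          have := heleM l' hl'
          omega
        have h3 : c (j + 1) ≤ x :=
          le_trans (cmono (by omega) (hsleM l' hl')) hx1
        linarith [hB hjM']
    rw [hll] at hx1 hx2
    constructor
    · rcases le_or_gt j (s l) with h | h
      · have hm : max (j - 1) (s l) = s l := max_eq_right (by omega)
        rw [hm]; exact hx1
      · have hm : max (j - 1) (s l) = j - 1 := max_eq_left (by omega)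
        rw [hm]; exact le_of_lt (hA (by omega))
    · rcases le_or_gt (e l) j with h | h
      · have hm : min (j + 1) (e l) = e l := min_eq_right (by omega)
        rw [hm]; exact hx2
      · have hjM' : j < M := by have := heleM l hl; omega
        have hm : min (j + 1) (e l) = j + 1 := min_eq_left (by omega)
        rw [hm]; exact le_of_lt (hB hjM')
  -- ## The coupling construction
  have HXmu : ∀ᵐ x ∂μ, x ∈ X := by
    rw [MeasureTheory.ae_iff]; exact hμ
  have HXnu : ∀ᵐ x ∂ν, x ∈ X := by
    rw [MeasureTheory.ae_iff]; exact hν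
  set f : ℕ → ℝ → ℝ≥0∞ := fun j x => ENNReal.ofReal (g j x) with hfdef
  have fmeas : ∀ j ≤ M, Measurable (f j) := fun j hj => (gmeas j hj).ennreal_ofReal
  set μm : ℕ → Measure ℝ := fun j => μ.withDensity (f j) with hmmdef
  set νm : ℕ → Measure ℝ := fun j => ν.withDensity (f j) with hnmdef
  set a : ℕ → ℝ≥0∞ := fun j => ∫⁻ x, f j x ∂μ with hadef
  set b : ℕ → ℝ≥0∞ := fun j => ∫⁻ x, f j x ∂ν with hbdef
  have hsum1mu : ∀ᵐ x ∂μ, ∑ j ∈ Finset.range (M + 1), f j x = 1 := by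
    refine HXmu.mono fun x hx => ?_
    have h1 := hXsub hx
    simp only [hfdef]
    rw [← ENNReal.ofReal_sum_of_nonneg (fun j hj =>
      gnn j (Nat.lt_succ_iff.mp (Finset.mem_range.mp hj)) x),
      PoU x h1.1 h1.2, ENNReal.ofReal_one]
  have hsum1nu : ∀ᵐ x ∂ν, ∑ j ∈ Finset.range (M + 1), f j x = 1 := by
    refine HXnu.mono fun x hx => ?_
    have h1 := hXsub hx
    simp only [hfdef]
    rw [← ENNReal.ofReal_sum_of_nonneg (fun j hj =>
      gnn j (Nat.lt_succ_iff.mp (Finset.mem_range.mp hj)) x),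
      PoU x h1.1 h1.2, ENNReal.ofReal_one]
  have habound : ∀ j ≤ M, a j ≤ 1 := by
    intro j hj
    have h1 : a j ≤ ∫⁻ _, 1 ∂μ := by
      simp only [hadef]
      refine lintegral_mono_ae (HXmu.mono fun x hx => ?_)
      simp only [hfdef]
      exact ENNReal.ofReal_le_one.mpr (gle1 j hj x (hXsub hx).1 (hXsub hx).2)
    simpa using h1
  have hbbound : ∀ j ≤ M, b j ≤ 1 := by
    intro j hj
    have h1 : b j ≤ ∫⁻ _, 1 ∂ν := by
      simp only [hbdef]
      refine lintegral_mono_ae (HXnu.mono fun x hx => ?_)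
      simp only [hfdef]
      exact ENNReal.ofReal_le_one.mpr (gle1 j hj x (hXsub hx).1 (hXsub hx).2)
    simpa using h1
  have hatop : ∀ j ≤ M, a j ≠ ⊤ :=
    fun j hj => (lt_of_le_of_lt (habound j hj) ENNReal.one_lt_top).ne
  have hsuma : ∑ j ∈ Finset.range (M + 1), a j = 1 := by
    simp only [hadef]
    rw [← lintegral_finset_sum _ (fun j hj =>
      fmeas j (Nat.lt_succ_iff.mp (Finset.mem_range.mp hj)))]
    rw [lintegral_congr_ae hsum1mu]
    simp
  have hsumb : ∑ j ∈ Finset.range (M + 1), b j = 1 := by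
    simp only [hbdef]
    rw [← lintegral_finset_sum _ (fun j hj =>
      fmeas j (Nat.lt_succ_iff.mp (Finset.mem_range.mp hj)))]
    rw [lintegral_congr_ae hsum1nu]
    simp
  have hba : ∀ j ≤ M, b j = a j := by
    have hposba : ∀ j, 1 ≤ j → j ≤ M → b j = a j := by
      intro j h1 hj
      have hintmu : Integrable (g j) μ :=
        Integrable.mono' (integrable_const 1) (gmeas j hj).aestronglyMeasurable
          (HXmu.mono fun x hx => by
            rw [Real.norm_eq_abs, abs_of_nonneg (gnn j hj x)]
            exact gle1 j hj x (hXsub hx).1 (hXsub hx).2)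
      have hintnu : Integrable (g j) ν :=
        Integrable.mono' (integrable_const 1) (gmeas j hj).aestronglyMeasurable
          (HXnu.mono fun x hx => by
            rw [Real.norm_eq_abs, abs_of_nonneg (gnn j hj x)]
            exact gle1 j hj x (hXsub hx).1 (hXsub hx).2)
      have h2 : ENNReal.ofReal (∫ x, g j x ∂μ) = a j := by
        simp only [hadef, hfdef]
        exact ofReal_integral_eq_lintegral_ofReal hintmu
          (Filter.Eventually.of_forall (gnn j hj))
      have h3 : ENNReal.ofReal (∫ x, g j x ∂ν) = b j := by
        simp only [hbdef, hfdef]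
        exact ofReal_integral_eq_lintegral_ofReal hintnu
          (Filter.Eventually.of_forall (gnn j hj))
      rw [← h3, ← h2, hmom j h1 hj]
    intro j hj
    rcases Nat.eq_zero_or_pos j with h0 | h1
    · subst h0
      have hTa : a 0 + ∑ i ∈ Finset.range M, a (i + 1) = 1 := by
        rw [← hsuma, Finset.sum_range_succ']
        exact add_comm _ _
      have hTb : b 0 + ∑ i ∈ Finset.range M, b (i + 1) = 1 := by
        rw [← hsumb, Finset.sum_range_succ']
        exact add_comm _ _
      have hTT : ∑ i ∈ Finset.range M, b (i + 1) = ∑ i ∈ Finset.range M, a (i + 1) :=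
        Finset.sum_congr rfl fun i hi =>
          hposba (i + 1) (by omega) (by have := Finset.mem_range.mp hi; omega)
      have hTtop : (∑ i ∈ Finset.range M, a (i + 1)) ≠ ⊤ := by
        refine ne_top_of_le_ne_top (by norm_num : (1 : ℝ≥0∞) ≠ ⊤) ?_
        calc ∑ i ∈ Finset.range M, a (i + 1)
            ≤ a 0 + ∑ i ∈ Finset.range M, a (i + 1) := le_add_self
          _ = 1 := hTa
      rw [hTT] at hTb
      exact WithTop.add_right_cancel hTtop (hTb.trans hTa.symm)
    · exact hposba j h1 hj
  have hmmuniv : ∀ j, μm j univ = a j := by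
    intro j
    simp only [hmmdef, hadef]
    rw [withDensity_apply _ MeasurableSet.univ, Measure.restrict_univ]
  have hnmuniv : ∀ j, νm j univ = b j := by
    intro j
    simp only [hnmdef, hbdef]
    rw [withDensity_apply _ MeasurableSet.univ, Measure.restrict_univ]
  have hmm0 : ∀ j, a j = 0 → μm j = 0 := by
    intro j h
    rw [← Measure.measure_univ_eq_zero, hmmuniv, h]
  have hnm0 : ∀ j ≤ M, a j = 0 → νm j = 0 := by
    intro j hj h
    rw [← Measure.measure_univ_eq_zero, hnmuniv, hba j hj, h]
  have hmmfin : ∀ j ≤ M, IsFiniteMeasure (μm j) := fun j hj =>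
    ⟨by rw [hmmuniv]; exact lt_of_le_of_lt (habound j hj) ENNReal.one_lt_top⟩
  have hnmfin : ∀ j ≤ M, IsFiniteMeasure (νm j) := fun j hj =>
    ⟨by rw [hnmuniv]; exact lt_of_le_of_lt (hbbound j hj) ENNReal.one_lt_top⟩
  set pr : ℕ → Measure (ℝ × ℝ) := fun j => (μm j).prod (νm j) with hprdef
  set γ : Measure (ℝ × ℝ) := ∑ j ∈ Finset.range (M + 1), (a j)⁻¹ • pr j with hgamdef
  have hpruniv : ∀ j ≤ M, pr j univ = a j * a j := by
    intro j hj
    simp only [hprdef]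
    rw [← Set.univ_prod_univ, Measure.prod_prod, hmmuniv, hnmuniv, hba j hj]
  have hpr0 : ∀ j ≤ M, a j = 0 → pr j = 0 := by
    intro j hj h
    simp only [hprdef]
    rw [hmm0 j h, Measure.zero_prod]
  have hmargfst : ∀ j ≤ M, ((a j)⁻¹ • pr j).map Prod.fst = μm j := by
    intro j hj
    rw [Measure.map_smul]
    simp only [hprdef]
    rw [Measure.map_fst_prod, hnmuniv, hba j hj]
    rcases eq_or_ne (a j) 0 with h0 | h0
    · rw [h0, hmm0 j h0]; simp
    · rw [smul_smul, ENNReal.inv_mul_cancel h0 (hatop j hj), one_smul]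
  have hmargsnd : ∀ j ≤ M, ((a j)⁻¹ • pr j).map Prod.snd = νm j := by
    intro j hj
    rw [Measure.map_smul]
    simp only [hprdef]
    rw [Measure.map_snd_prod, hmmuniv]
    rcases eq_or_ne (a j) 0 with h0 | h0
    · rw [h0, hnm0 j hj h0]; simp
    · rw [smul_smul, ENNReal.inv_mul_cancel h0 (hatop j hj), one_smul]
  have hsummm : ∑ j ∈ Finset.range (M + 1), μm j = μ := by
    ext A hA
    rw [Measure.finset_sum_apply]
    simp only [hmmdef]
    rw [Finset.sum_congr rfl
      (fun j (hj : j ∈ Finset.range (M + 1)) => withDensity_apply (f j) hA),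
      ← lintegral_finset_sum _ (fun j hj =>
        fmeas j (Nat.lt_succ_iff.mp (Finset.mem_range.mp hj))),
      lintegral_congr_ae (ae_restrict_of_ae hsum1mu), setLIntegral_one]
  have hsumnm : ∑ j ∈ Finset.range (M + 1), νm j = ν := by
    ext A hA
    rw [Measure.finset_sum_apply]
    simp only [hnmdef]
    rw [Finset.sum_congr rfl
      (fun j (hj : j ∈ Finset.range (M + 1)) => withDensity_apply (f j) hA),
      ← lintegral_finset_sum _ (fun j hj =>
        fmeas j (Nat.lt_succ_iff.mp (Finset.mem_range.mp hj))),
      lintegral_congr_ae (ae_restrict_of_ae hsum1nu), setLIntegral_one]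
  have hmapfst : γ.map Prod.fst = μ := by
    simp only [hgamdef]
    rw [map_finset_sum_aux measurable_fst,
      Finset.sum_congr rfl (fun j hj =>
        hmargfst j (Nat.lt_succ_iff.mp (Finset.mem_range.mp hj)))]
    exact hsummm
  have hmapsnd : γ.map Prod.snd = ν := by
    simp only [hgamdef]
    rw [map_finset_sum_aux measurable_snd,
      Finset.sum_congr rfl (fun j hj =>
        hmargsnd j (Nat.lt_succ_iff.mp (Finset.mem_range.mp hj)))]
    exact hsumnm
  have hgamprob : IsProbabilityMeasure γ := by
    constructor
    simp only [hgamdef]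
    rw [Measure.finset_sum_apply]
    have h1 : ∀ j ∈ Finset.range (M + 1), ((a j)⁻¹ • pr j) univ = a j := by
      intro j hj
      have hj' := Nat.lt_succ_iff.mp (Finset.mem_range.mp hj)
      rw [Measure.smul_apply, hpruniv j hj', smul_eq_mul]
      rcases eq_or_ne (a j) 0 with h0 | h0
      · rw [h0]; simp
      · rw [← mul_assoc, ENNReal.inv_mul_cancel h0 (hatop j hj'), one_mul]
    rw [Finset.sum_congr rfl h1, hsuma]
  -- ## Cost estimate
  set F : ℝ × ℝ → ℝ := fun p => |p.1 - p.2| with hFdef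
  have Fmeas : Measurable F := (measurable_fst.sub measurable_snd).abs
  have hmmX : ∀ j, μm j Xᶜ = 0 := by
    intro j
    simp only [hmmdef]
    rw [withDensity_apply _ hXmeas.compl]
    exact setLIntegral_measure_zero _ _ hμ
  have hnmX : ∀ j, νm j Xᶜ = 0 := by
    intro j
    simp only [hnmdef]
    rw [withDensity_apply _ hXmeas.compl]
    exact setLIntegral_measure_zero _ _ hν
  have hprsupp : ∀ j, ∀ S : Set ℝ, μm j Sᶜ = 0 → νm j Sᶜ = 0 →
      pr j ((S ×ˢ S)ᶜ) = 0 := by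
    intro j S h1 h2
    have hsub : (S ×ˢ S)ᶜ ⊆ (Sᶜ ×ˢ univ) ∪ ((univ : Set ℝ) ×ˢ Sᶜ) := by
      intro p hp
      simp only [Set.mem_compl_iff, Set.mem_prod, Set.mem_union, Set.mem_univ,
        and_true, true_and, not_and_or] at *
      tauto
    refine le_antisymm (le_trans (measure_mono hsub) ?_) (zero_le)
    refine le_trans (measure_union_le _ _) ?_
    simp only [hprdef]
    rw [Measure.prod_prod, Measure.prod_prod, h1, h2]
    simp
  have haepr : ∀ j, ∀ S : Set ℝ, pr j ((S ×ˢ S)ᶜ) = 0 →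
      ∀ᵐ p ∂pr j, p.1 ∈ S ∧ p.2 ∈ S := by
    intro j S h
    have hset : {p : ℝ × ℝ | ¬(p.1 ∈ S ∧ p.2 ∈ S)} = (S ×ˢ S)ᶜ := by
      ext p; simp [Set.mem_prod]
    rw [MeasureTheory.ae_iff, hset]
    exact h
  have hFint : ∀ j ≤ M, Integrable F (pr j) := by
    intro j hj
    haveI := hmmfin j hj
    haveI := hnmfin j hj
    haveI : IsFiniteMeasure (pr j) := by simp only [hprdef]; infer_instance
    refine Integrable.mono' (integrable_const (c M - c 0))
      Fmeas.aestronglyMeasurable ?_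
    refine (haepr j X (hprsupp j X (hmmX j) (hnmX j))).mono fun p hp => ?_
    have h1 := hXsub hp.1
    have h2 := hXsub hp.2
    rw [Set.mem_Icc] at h1 h2
    simp only [hFdef]
    rw [Real.norm_eq_abs, abs_abs, abs_le]
    constructor <;> linarith [h1.1, h1.2, h2.1, h2.2]
  have hgamint : ∀ j ∈ Finset.range (M + 1), Integrable F ((a j)⁻¹ • pr j) := by
    intro j hj
    have hj' := Nat.lt_succ_iff.mp (Finset.mem_range.mp hj)
    rcases eq_or_ne (a j) 0 with h0 | h0
    · rw [hpr0 j hj' h0, smul_zero]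
      exact integrable_zero_measure
    · exact (hFint j hj').smul_measure (ENNReal.inv_ne_top.mpr h0)
  have hcost : ∫ p, F p ∂γ
      = ∑ j ∈ Finset.range (M + 1), ((a j)⁻¹).toReal * ∫ p, F p ∂pr j := by
    simp only [hgamdef]
    rw [integral_finset_sum_measure hgamint]
    exact Finset.sum_congr rfl fun j hj => by rw [integral_smul_measure, smul_eq_mul]
  -- ## Per-block bound
  have key : ∀ l < k,
      ∑ j ∈ Finset.Icc (s l) (e l), ((a j)⁻¹).toReal * ∫ p, F p ∂pr j
        ≤ (μ (Icc (c (s l)) (c (e l)))).toReal *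
            sSup {r | ∃ j, s l ≤ j ∧ j ≤ e l ∧
              r = c (min (j + 1) (e l)) - c (max (j - 1) (s l))} := by
    intro l hl
    have hTeq : {r | ∃ j, s l ≤ j ∧ j ≤ e l ∧
        r = c (min (j + 1) (e l)) - c (max (j - 1) (s l))}
        = (fun j => c (min (j + 1) (e l)) - c (max (j - 1) (s l))) ''
          (Set.Icc (s l) (e l)) := by
      ext r
      simp only [Set.mem_image, Set.mem_Icc, Set.mem_setOf_eq]
      constructor
      · rintro ⟨j, h1, h2, h3⟩; exact ⟨j, ⟨h1, h2⟩, h3.symm⟩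
      · rintro ⟨j, ⟨h1, h2⟩, h3⟩; exact ⟨j, h1, h2, h3.symm⟩
    have hTbdd : BddAbove {r | ∃ j, s l ≤ j ∧ j ≤ e l ∧
        r = c (min (j + 1) (e l)) - c (max (j - 1) (s l))} := by
      rw [hTeq]; exact ((Set.finite_Icc _ _).image _).bddAbove
    have hDle : ∀ j, s l ≤ j → j ≤ e l →
        c (min (j + 1) (e l)) - c (max (j - 1) (s l))
          ≤ sSup {r | ∃ j, s l ≤ j ∧ j ≤ e l ∧
              r = c (min (j + 1) (e l)) - c (max (j - 1) (s l))} :=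
      fun j h1 h2 => le_csSup hTbdd ⟨j, h1, h2, rfl⟩
    have hSnn : 0 ≤ sSup {r | ∃ j, s l ≤ j ∧ j ≤ e l ∧
        r = c (min (j + 1) (e l)) - c (max (j - 1) (s l))} := by
      refine le_trans ?_ (hDle (s l) le_rfl (hse l hl))
      have h1 : max (s l - 1) (s l) = s l := max_eq_right (by omega)
      rw [h1]
      have h2 : s l ≤ min (s l + 1) (e l) := by
        have := hse l hl; omega
      refine sub_nonneg.2 (cmono h2 ?_)
      have := heleM l hl; have := hse l hl; omega
    have hterm : ∀ j ∈ Finset.Icc (s l) (e l),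
        ((a j)⁻¹).toReal * ∫ p, F p ∂pr j
          ≤ (a j).toReal * sSup {r | ∃ j, s l ≤ j ∧ j ≤ e l ∧
              r = c (min (j + 1) (e l)) - c (max (j - 1) (s l))} := by
      intro j hj
      rw [Finset.mem_Icc] at hj
      obtain ⟨hsj, hje⟩ := hj
      have hjM : j ≤ M := le_trans hje (heleM l hl)
      rcases eq_or_ne (a j) 0 with h0 | h0
      · rw [hpr0 j hjM h0, integral_zero_measure, mul_zero, h0]
        simp
      · have hLR : max (j - 1) (s l) ≤ min (j + 1) (e l) := by
          have := hse l hl; omega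
        have hRM : min (j + 1) (e l) ≤ M := by
          have := heleM l hl; omega
        have hD0 : 0 ≤ c (min (j + 1) (e l)) - c (max (j - 1) (s l)) :=
          sub_nonneg.2 (cmono hLR hRM)
        have hmuS : μm j (Icc (c (max (j - 1) (s l))) (c (min (j + 1) (e l))))ᶜ = 0 := by
          simp only [hmmdef]
          rw [withDensity_apply _ measurableSet_Icc.compl]
          have hz : ∀ᵐ x ∂μ.restrict
              (Icc (c (max (j - 1) (s l))) (c (min (j + 1) (e l))))ᶜ, f j x = 0 := by
            rw [ae_restrict_iff' measurableSet_Icc.compl]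
            refine HXmu.mono fun x hx hxc => ?_
            simp only [hfdef]
            rw [ENNReal.ofReal_eq_zero]
            by_contra hcon
            push_neg at hcon
            exact hxc (Set.mem_Icc.mpr (supp l hl j hsj hje x hx hcon))
          calc ∫⁻ x in (Icc (c (max (j - 1) (s l))) (c (min (j + 1) (e l))))ᶜ,
                f j x ∂μ
              = ∫⁻ _ in (Icc (c (max (j - 1) (s l))) (c (min (j + 1) (e l))))ᶜ,
                0 ∂μ := lintegral_congr_ae hz
            _ = 0 := lintegral_zero
        have hnuS : νm j (Icc (c (max (j - 1) (s l))) (c (min (j + 1) (e l))))ᶜ = 0 := by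
          simp only [hnmdef]
          rw [withDensity_apply _ measurableSet_Icc.compl]
          have hz : ∀ᵐ x ∂ν.restrict
              (Icc (c (max (j - 1) (s l))) (c (min (j + 1) (e l))))ᶜ, f j x = 0 := by
            rw [ae_restrict_iff' measurableSet_Icc.compl]
            refine HXnu.mono fun x hx hxc => ?_
            simp only [hfdef]
            rw [ENNReal.ofReal_eq_zero]
            by_contra hcon
            push_neg at hcon
            exact hxc (Set.mem_Icc.mpr (supp l hl j hsj hje x hx hcon))
          calc ∫⁻ x in (Icc (c (max (j - 1) (s l))) (c (min (j + 1) (e l))))ᶜ,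
                f j x ∂ν
              = ∫⁻ _ in (Icc (c (max (j - 1) (s l))) (c (min (j + 1) (e l))))ᶜ,
                0 ∂ν := lintegral_congr_ae hz
            _ = 0 := lintegral_zero
        have hae : ∀ᵐ p ∂pr j, F p ≤ c (min (j + 1) (e l)) - c (max (j - 1) (s l)) := by
          refine (haepr j _ (hprsupp j _ hmuS hnuS)).mono fun p hp => ?_
          obtain ⟨hp1, hp2⟩ := hp
          rw [Set.mem_Icc] at hp1 hp2
          simp only [hFdef]
          rw [abs_le]
          constructor <;> linarith [hp1.1, hp1.2, hp2.1, hp2.2]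
        haveI := hmmfin j hjM
        haveI := hnmfin j hjM
        haveI : IsFiniteMeasure (pr j) := by simp only [hprdef]; infer_instance
        have hint1 : ∫ p, F p ∂pr j
            ≤ (c (min (j + 1) (e l)) - c (max (j - 1) (s l))) * ((pr j) univ).toReal := by
          refine le_trans (integral_mono_ae (hFint j hjM) (integrable_const _) hae) ?_
          rw [integral_const, smul_eq_mul, mul_comm]
          exact le_rfl
        have htR : (a j).toReal ≠ 0 :=
          ENNReal.toReal_ne_zero.mpr ⟨h0, hatop j hjM⟩
        calc ((a j)⁻¹).toReal * ∫ p, F p ∂pr j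
            ≤ ((a j)⁻¹).toReal *
              ((c (min (j + 1) (e l)) - c (max (j - 1) (s l))) * ((pr j) univ).toReal) :=
              mul_le_mul_of_nonneg_left hint1 ENNReal.toReal_nonneg
          _ = (a j).toReal * (c (min (j + 1) (e l)) - c (max (j - 1) (s l))) := by
              rw [hpruniv j hjM, ENNReal.toReal_mul, ENNReal.toReal_inv]
              field_simp
          _ ≤ (a j).toReal * sSup {r | ∃ j, s l ≤ j ∧ j ≤ e l ∧
              r = c (min (j + 1) (e l)) - c (max (j - 1) (s l))} :=
              mul_le_mul_of_nonneg_left (hDle j hsj hje) ENNReal.toReal_nonneg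
    have hablock : ∑ j ∈ Finset.Icc (s l) (e l), a j
        ≤ μ (Icc (c (s l)) (c (e l))) := by
      simp only [hadef]
      rw [← lintegral_finset_sum _ (fun j hj =>
        fmeas j (le_trans (Finset.mem_Icc.mp hj).2 (heleM l hl)))]
      have hb2 : ∀ᵐ x ∂μ, (∑ j ∈ Finset.Icc (s l) (e l), f j x)
          ≤ (Icc (c (s l)) (c (e l))).indicator 1 x := by
        refine (HXmu.and hsum1mu).mono fun x hx => ?_
        obtain ⟨hxX, hsx⟩ := hx
        by_cases hxI : x ∈ Icc (c (s l)) (c (e l))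
        · rw [Set.indicator_of_mem hxI, Pi.one_apply]
          calc ∑ j ∈ Finset.Icc (s l) (e l), f j x
              ≤ ∑ j ∈ Finset.range (M + 1), f j x :=
                Finset.sum_le_sum_of_subset (fun j hj => by
                  rw [Finset.mem_Icc] at hj
                  rw [Finset.mem_range]
                  have := heleM l hl
                  omega)
            _ = 1 := hsx
        · rw [Set.indicator_of_notMem hxI]
          refine le_of_eq (Finset.sum_eq_zero fun j hj => ?_)
          rw [Finset.mem_Icc] at hj
          simp only [hfdef]
          rw [ENNReal.ofReal_eq_zero]
          by_contra hcon
          push_neg at hcon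
          obtain ⟨hx1, hx2⟩ := supp l hl j hj.1 hj.2 x hxX hcon
          refine hxI (Set.mem_Icc.mpr ⟨?_, ?_⟩)
          · refine le_trans (cmono (le_max_right _ _) ?_) hx1
            have := heleM l hl; have := hse l hl; omega
          · refine le_trans hx2 (cmono ?_ (heleM l hl))
            omega
      calc ∫⁻ x, ∑ j ∈ Finset.Icc (s l) (e l), f j x ∂μ
          ≤ ∫⁻ x, (Icc (c (s l)) (c (e l))).indicator 1 x ∂μ := lintegral_mono_ae hb2
        _ = μ (Icc (c (s l)) (c (e l))) := lintegral_indicator_one measurableSet_Icc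
    calc ∑ j ∈ Finset.Icc (s l) (e l), ((a j)⁻¹).toReal * ∫ p, F p ∂pr j
        ≤ ∑ j ∈ Finset.Icc (s l) (e l), (a j).toReal *
            sSup {r | ∃ j, s l ≤ j ∧ j ≤ e l ∧
              r = c (min (j + 1) (e l)) - c (max (j - 1) (s l))} :=
          Finset.sum_le_sum hterm
      _ = (∑ j ∈ Finset.Icc (s l) (e l), (a j).toReal) *
            sSup {r | ∃ j, s l ≤ j ∧ j ≤ e l ∧
              r = c (min (j + 1) (e l)) - c (max (j - 1) (s l))} := by
          rw [Finset.sum_mul]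
      _ ≤ (μ (Icc (c (s l)) (c (e l)))).toReal *
            sSup {r | ∃ j, s l ≤ j ∧ j ≤ e l ∧
              r = c (min (j + 1) (e l)) - c (max (j - 1) (s l))} := by
          refine mul_le_mul_of_nonneg_right ?_ hSnn
          rw [← ENNReal.toReal_sum (fun j hj =>
            hatop j (le_trans (Finset.mem_Icc.mp hj).2 (heleM l hl)))]
          exact ENNReal.toReal_mono (measure_ne_top μ _) hablock
  have hrle : ∫ p, F p ∂γ
      ≤ ∑ l ∈ Finset.range k, (μ (Icc (c (s l)) (c (e l)))).toReal *
          sSup {r | ∃ j, s l ≤ j ∧ j ≤ e l ∧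
            r = c (min (j + 1) (e l)) - c (max (j - 1) (s l))} := by
    rw [hcost, aux_regroup hk hs0 heM hse hnext]
    exact Finset.sum_le_sum fun l hl => key l (Finset.mem_range.mp hl)
  have hbddb : BddBelow {r | ∃ γ : Measure (ℝ × ℝ), IsProbabilityMeasure γ ∧
      γ.map Prod.fst = μ ∧ γ.map Prod.snd = ν ∧ r = ∫ p, F p ∂γ} := by
    refine ⟨0, fun r hr => ?_⟩
    obtain ⟨γ', _, _, _, hr4⟩ := hr
    rw [hr4]
    simp only [hFdef]
    exact integral_nonneg fun p => abs_nonneg _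
  exact le_trans (csInf_le hbddb ⟨γ, hgamprob, hmapfst, hmapsnd, rfl⟩) hrle
end

section
/- Let X ⊆ ℝ be a finite union of compact intervals and μ a Borel probability measure on X. Then for every ε > 0 there exists a finite collection 𝒢 of CPWA hat functions on X (obtained from a sufficiently fine grid of knots containing all interval endpoints) such that sup_{ν ∈ [μ]_𝒢} W₁(μ, ν) ≤ ε, where [μ]_𝒢 := {ν ∈ P(X) : ∫ g dν = ∫ g dμ for all g ∈ 𝒢}. -/
open MeasureTheory Set ENNReal

namespace Stmt6Aux

/-- number of subdivision steps in interval `l` -/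
noncomputable def N (lo hi : ℕ → ℝ) (δ : ℝ) (l : ℕ) : ℕ := max 1 ⌈(hi l - lo l) / δ⌉₊

/-- step size in interval `l` -/
noncomputable def stp (lo hi : ℕ → ℝ) (δ : ℝ) (l : ℕ) : ℝ := (hi l - lo l) / (N lo hi δ l : ℝ)

/-- the knot set -/
noncomputable def knots (k : ℕ) (lo hi : ℕ → ℝ) (δ : ℝ) : Finset ℝ :=
  (Finset.range k).biUnion fun l =>
    (Finset.range (N lo hi δ l + 1)).image fun m : ℕ => lo l + (m : ℝ) * stp lo hi δ l

variable {k : ℕ} {lo hi : ℕ → ℝ} {δ : ℝ}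

lemma N_pos (l : ℕ) : 0 < N lo hi δ l := lt_of_lt_of_le Nat.zero_lt_one (le_max_left _ _)

lemma stp_nonneg (hδ : 0 < δ) (hl : lo l ≤ hi l) : 0 ≤ stp lo hi δ l :=
  div_nonneg (by linarith) (Nat.cast_nonneg _)

lemma stp_le (hδ : 0 < δ) (hl : lo l ≤ hi l) : stp lo hi δ l ≤ δ := by
  rw [stp, div_le_iff₀ (by exact_mod_cast N_pos l)]
  rcases le_or_gt (hi l - lo l) 0 with h | h
  · nlinarith [(Nat.cast_pos (α := ℝ)).2 (N_pos (lo := lo) (hi := hi) (δ := δ) l)]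
  · have h1 : (hi l - lo l) / δ ≤ (⌈(hi l - lo l) / δ⌉₊ : ℝ) := Nat.le_ceil _
    have h2 : (⌈(hi l - lo l) / δ⌉₊ : ℝ) ≤ (N lo hi δ l : ℝ) := by
      exact_mod_cast le_max_right _ _
    have := (div_le_iff₀ hδ).1 (h1.trans h2)
    linarith
    
lemma N_mul_stp (hl : lo l ≤ hi l) : (N lo hi δ l : ℝ) * stp lo hi δ l = hi l - lo l := by
  rw [stp, mul_div_cancel₀]
  exact_mod_cast (N_pos (lo := lo) (hi := hi) (δ := δ) l).ne'

lemma mem_knots {x : ℝ} :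
    x ∈ knots k lo hi δ ↔ ∃ l < k, ∃ m ≤ N lo hi δ l, x = lo l + (m : ℝ) * stp lo hi δ l := by
  simp only [knots, Finset.mem_biUnion, Finset.mem_image, Finset.mem_range]
  constructor
  · rintro ⟨l, hl, m, hm, rfl⟩; exact ⟨l, hl, m, by omega, rfl⟩
  · rintro ⟨l, hl, m, hm, rfl⟩; exact ⟨l, hl, m, by omega, rfl⟩

lemma lo_mem_knots (hl : l < k) : lo l ∈ knots k lo hi δ :=
  mem_knots.2 ⟨l, hl, 0, Nat.zero_le _, by simp⟩

lemma hi_mem_knots (hl : l < k) (hlh : lo l ≤ hi l) : hi l ∈ knots k lo hi δ :=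
  mem_knots.2 ⟨l, hl, N lo hi δ l, le_rfl, by rw [N_mul_stp hlh]; ring⟩

lemma knots_subset (hδ : 0 < δ) (hlohi : ∀ l < k, lo l ≤ hi l)
    {x : ℝ} (hx : x ∈ knots k lo hi δ) : ∃ l < k, x ∈ Icc (lo l) (hi l) := by
  obtain ⟨l, hl, m, hm, rfl⟩ := mem_knots.1 hx
  refine ⟨l, hl, ?_, ?_⟩
  · nlinarith [stp_nonneg (lo := lo) (hi := hi) (δ := δ) hδ (hlohi l hl), Nat.cast_nonneg (α := ℝ) m]
  · have h1 : (m : ℝ) * stp lo hi δ l ≤ (N lo hi δ l : ℝ) * stp lo hi δ l := by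
      have := stp_nonneg (lo := lo) (hi := hi) (δ := δ) hδ (hlohi l hl)
      have : (m : ℝ) ≤ (N lo hi δ l : ℝ) := by exact_mod_cast hm
      nlinarith [stp_nonneg (lo := lo) (hi := hi) (δ := δ) hδ (hlohi l hl)]
    rw [N_mul_stp (hlohi l hl)] at h1
    linarith

/-- key approximation: every point of the interval `l` is sandwiched between two knots
at distance at most `δ`. -/
lemma sandwich (hδ : 0 < δ) (hlohi : ∀ l < k, lo l ≤ hi l)
    {x : ℝ} {l : ℕ} (hl : l < k) (hx : x ∈ Icc (lo l) (hi l)) :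
    ∃ t ∈ knots k lo hi δ, ∃ t' ∈ knots k lo hi δ, t ≤ x ∧ x ≤ t' ∧ t' - t ≤ δ := by
  obtain ⟨hx1, hx2⟩ := hx
  set n := N lo hi δ l with hn
  set st := stp lo hi δ l with hst
  have hst0 : 0 ≤ st := stp_nonneg hδ (hlohi l hl)
  have hstδ : st ≤ δ := stp_le hδ (hlohi l hl)
  rcases eq_or_lt_of_le hst0 with h0 | h0
  · -- step zero: lo l = hi l = x
    have : hi l - lo l = 0 := by
      have := N_mul_stp (lo := lo) (hi := hi) (δ := δ) (hlohi l hl)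
      rw [← hst, ← h0] at this; linarith [this]
    refine ⟨lo l, lo_mem_knots hl, lo l, lo_mem_knots hl, hx1, by linarith, by linarith⟩
  · set m := min ⌊(x - lo l) / st⌋₊ (n - 1) with hm
    have hmn : m ≤ n - 1 := min_le_right _ _
    have hmn' : m < n := by have := N_pos (lo := lo) (hi := hi) (δ := δ) l; omega
    have hmem1 : lo l + (m : ℝ) * st ∈ knots k lo hi δ :=
      mem_knots.2 ⟨l, hl, m, by omega, rfl⟩
    have hmem2 : lo l + ((m : ℝ) + 1) * st ∈ knots k lo hi δ := by
      refine mem_knots.2 ⟨l, hl, m + 1, by omega, by push_cast; ring⟩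
    refine ⟨_, hmem1, _, hmem2, ?_, ?_, by linarith⟩
    · have h1 : (m : ℝ) ≤ ⌊(x - lo l) / st⌋₊ := by exact_mod_cast min_le_left _ _
      have h2 : (⌊(x - lo l) / st⌋₊ : ℝ) ≤ (x - lo l) / st := Nat.floor_le (div_nonneg (by linarith) h0.le)
      have := (le_div_iff₀ h0).1 (h1.trans h2)
      linarith
    · rcases le_or_gt (⌊(x - lo l) / st⌋₊) (n-1) with h | h
      · have hm' : m = ⌊(x - lo l) / st⌋₊ := min_eq_left h
        have h2 : (x - lo l) / st < (⌊(x - lo l) / st⌋₊ : ℝ) + 1 := Nat.lt_floor_add_one _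
        rw [hm']
        have := (div_lt_iff₀ h0).1 h2
        nlinarith
      · have hm' : m = n - 1 := min_eq_right (by omega)
        have : ((m : ℝ) + 1) = (n : ℝ) := by
          rw [hm']; have := N_pos (lo := lo) (hi := hi) (δ := δ) l
          push_cast [Nat.cast_sub (by omega : 1 ≤ n)]; ring
        rw [this, N_mul_stp (hlohi l hl)]
        linarith


/-- enumeration of a finset of reals, clamped at the top -/
noncomputable def enum (s : Finset ℝ) (i : ℕ) : ℝ :=
  if h : 0 < s.card then s.orderEmbOfFin rfl ⟨min i (s.card - 1), by omega⟩ else 0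

variable {s : Finset ℝ}

lemma enum_mem (h : 0 < s.card) (i : ℕ) : enum s i ∈ s := by
  rw [enum, dif_pos h]; exact Finset.orderEmbOfFin_mem _ _ _

lemma enum_mono (h : 0 < s.card) {i j : ℕ} (hij : i ≤ j) : enum s i ≤ enum s j := by
  rw [enum, dif_pos h, enum, dif_pos h]
  exact (s.orderEmbOfFin rfl).monotone (by simp [Fin.le_def]; omega)

lemma enum_strictMono (h : 0 < s.card) {i j : ℕ} (hij : i < j) (hj : j ≤ s.card - 1) :
    enum s i < enum s j := by
  rw [enum, dif_pos h, enum, dif_pos h]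
  exact (s.orderEmbOfFin rfl).strictMono (by simp [Fin.lt_def]; omega)

lemma enum_surj (h : 0 < s.card) {y : ℝ} (hy : y ∈ s) :
    ∃ i ≤ s.card - 1, enum s i = y := by
  have : y ∈ Set.range (s.orderEmbOfFin rfl) := by rw [Finset.range_orderEmbOfFin]; exact hy
  obtain ⟨⟨i, hi⟩, hiy⟩ := this
  exact ⟨i, by omega, by rw [enum, dif_pos h]; convert hiy using 3; simp; omega⟩

lemma enum_clamp (h : 0 < s.card) {i : ℕ} (hi : s.card - 1 ≤ i) :
    enum s i = enum s (s.card - 1) := by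
  rw [enum, dif_pos h, enum, dif_pos h]
  congr 2
  omega

lemma enum_le_iff (h : 0 < s.card) {i j : ℕ} (hi : i ≤ s.card - 1) (hj : j ≤ s.card - 1) :
    enum s i ≤ enum s j ↔ i ≤ j := by
  constructor
  · intro hle
    by_contra hc
    exact absurd (enum_strictMono h (by omega : j < i) hi) (not_lt.2 hle)
  · exact fun hij => enum_mono h hij


lemma sInf_le_of_coupling (μ ν : Measure ℝ) (ε : ℝ) (hε : 0 ≤ ε)
    (γ : Measure (ℝ × ℝ)) (hP : IsProbabilityMeasure γ)
    (h1 : γ.map Prod.fst = μ) (h2 : γ.map Prod.snd = ν)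
    (hae : ∀ᵐ p ∂γ, |p.1 - p.2| ≤ ε) :
    sInf {r | ∃ γ : Measure (ℝ × ℝ), IsProbabilityMeasure γ ∧
        γ.map Prod.fst = μ ∧ γ.map Prod.snd = ν ∧ r = ∫ p, |p.1 - p.2| ∂γ} ≤ ε := by
  have hbdd : BddBelow {r | ∃ γ : Measure (ℝ × ℝ), IsProbabilityMeasure γ ∧
      γ.map Prod.fst = μ ∧ γ.map Prod.snd = ν ∧ r = ∫ p, |p.1 - p.2| ∂γ} := by
    refine ⟨0, ?_⟩
    rintro r ⟨γ', _, _, _, rfl⟩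
    exact integral_nonneg fun p => abs_nonneg _
  have hmem : (∫ p, |p.1 - p.2| ∂γ) ∈ {r | ∃ γ : Measure (ℝ × ℝ), IsProbabilityMeasure γ ∧
      γ.map Prod.fst = μ ∧ γ.map Prod.snd = ν ∧ r = ∫ p, |p.1 - p.2| ∂γ} :=
    ⟨γ, hP, h1, h2, rfl⟩
  refine csInf_le_of_le hbdd hmem ?_
  have hmeas : AEStronglyMeasurable (fun p : ℝ × ℝ => |p.1 - p.2|) γ :=
    (continuous_abs.comp (continuous_fst.sub continuous_snd)).aestronglyMeasurable
  have hint : Integrable (fun p : ℝ × ℝ => |p.1 - p.2|) γ := by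
    refine Integrable.mono' (integrable_const ε) hmeas ?_
    filter_upwards [hae] with p hp
    simpa [abs_abs] using hp
  calc ∫ p, |p.1 - p.2| ∂γ ≤ ∫ _, ε ∂γ := integral_mono_ae hint (integrable_const ε) hae
    _ = ε := by simp

end Stmt6Aux


set_option maxHeartbeats 2000000 in
open Stmt6Aux in
/-- for any probability measure `μ` on a finite union of compact intervals `X`
and any `ε > 0`, there exists a finite family of CPWA hat functions `g 1, …, g M`
(built from a knot grid `c 0 < ⋯ < c M` contained in `X` and containing all interval
endpoints) such that every probability measure `ν` on `X` matching the moments of the hat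
functions is within Wasserstein-1 distance `ε` of `μ`. -/
theorem stmt_6
    (k : ℕ) (hk : 1 ≤ k) (lo hi : ℕ → ℝ)
    (hlohi : ∀ l < k, lo l ≤ hi l)
    (hdisj : ∀ l, l + 1 < k → hi l < lo (l + 1))
    (X : Set ℝ) (hXdef : X = ⋃ l ∈ Finset.range k, Icc (lo l) (hi l))
    (μ : Measure ℝ) [IsProbabilityMeasure μ] (hμ : μ Xᶜ = 0)
    (ε : ℝ) (hε : 0 < ε) :
    ∃ (M : ℕ) (c : ℕ → ℝ) (g : ℕ → ℝ → ℝ),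
      (∀ i < M, c i < c (i + 1)) ∧
      (∀ i ≤ M, c i ∈ X) ∧
      (∀ l < k, ∃ i ≤ M, c i = lo l) ∧
      (∀ l < k, ∃ i ≤ M, c i = hi l) ∧
      (∀ x, g 0 x = max (c 1 - x) 0 / (c 1 - c 0)) ∧
      (∀ j, 1 ≤ j → j < M → ∀ x,
        g j x = min (max (x - c (j - 1)) 0 / (c j - c (j - 1)))
          (max (c (j + 1) - x) 0 / (c (j + 1) - c j))) ∧
      (∀ x, g M x = max (x - c (M - 1)) 0 / (c M - c (M - 1))) ∧
      (∀ ν : Measure ℝ, IsProbabilityMeasure ν → ν Xᶜ = 0 →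
        (∀ j, 1 ≤ j → j ≤ M → ∫ x, g j x ∂ν = ∫ x, g j x ∂μ) →
        sInf {r | ∃ γ : Measure (ℝ × ℝ), IsProbabilityMeasure γ ∧
            γ.map Prod.fst = μ ∧ γ.map Prod.snd = ν ∧ r = ∫ p, |p.1 - p.2| ∂γ} ≤ ε) := by
  classical
  set δ : ℝ := ε / 2 with hδdef
  have hδ : 0 < δ := by positivity
  set s : Finset ℝ := knots k lo hi δ with hs
  have hcard : 0 < s.card := Finset.card_pos.2 ⟨lo 0, lo_mem_knots hk⟩
  set M : ℕ := s.card - 1 with hMdef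
  have hcardM : s.card = M + 1 := by omega
  set c : ℕ → ℝ := enum s with hc
  have hXmem : ∀ x, x ∈ X ↔ ∃ l < k, x ∈ Icc (lo l) (hi l) := by
    intro x; rw [hXdef]; simp only [Finset.mem_range, mem_iUnion, exists_prop, mem_Icc]
  have hXmeas : MeasurableSet X := by
    rw [hXdef]
    exact MeasurableSet.biUnion (Finset.range k).countable_toSet
      (fun l _ => measurableSet_Icc)
  have hsX : ∀ y ∈ s, y ∈ X := by
    intro y hy
    exact (hXmem y).2 (knots_subset hδ hlohi hy)
  have hcX : ∀ i, c i ∈ X := fun i => hsX _ (enum_mem hcard i)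
  have hcmono : ∀ i j : ℕ, i ≤ j → c i ≤ c j := fun i j h => enum_mono hcard h
  have hcstrict : ∀ i < M, c i < c (i + 1) := fun i h =>
    enum_strictMono hcard (Nat.lt_succ_self i) (by omega)
  have hsandX : ∀ x ∈ X, ∃ t ∈ s, ∃ t' ∈ s, t ≤ x ∧ x ≤ t' ∧ t' - t ≤ δ := by
    intro x hx
    obtain ⟨l, hl, hxl⟩ := (hXmem x).1 hx
    exact sandwich hδ hlohi hl hxl
  have hclow : ∀ x ∈ X, c 0 ≤ x := by
    intro x hx
    obtain ⟨t, ht, _, _, htx, _, _⟩ := hsandX x hx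
    obtain ⟨i, hi, rfl⟩ := enum_surj hcard ht
    exact le_trans (hcmono 0 i (Nat.zero_le _)) htx
  have hchigh : ∀ x ∈ X, x ≤ c M := by
    intro x hx
    obtain ⟨t, ht, t', ht', _, hxt, _⟩ := hsandX x hx
    obtain ⟨i, hi, rfl⟩ := enum_surj hcard ht'
    exact le_trans hxt (hcmono i M hi)
  -- no knot strictly between consecutive c's
  have hconsec : ∀ i < M, ∀ y ∈ s, y ≤ c i ∨ c (i + 1) ≤ y := by
    intro i hiM y hy
    obtain ⟨j, hj, rfl⟩ := enum_surj hcard hy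
    rcases le_or_gt j i with h | h
    · exact Or.inl (hcmono _ _ h)
    · exact Or.inr (hcmono _ _ h)
  -- cells meeting X in their interior are short
  have hcell : ∀ i < M, ∀ x ∈ X, c i < x → x < c (i + 1) → c (i + 1) - c i ≤ δ := by
    intro i hiM x hx h1 h2
    obtain ⟨t, ht, t', ht', htx, hxt, htt⟩ := hsandX x hx
    rcases hconsec i hiM t ht with h | h
    · rcases hconsec i hiM t' ht' with h' | h'
      · linarith
      · linarith
    · linarith
  -- main geometric fact
  have hnear : ∀ j ≤ M, ∀ x ∈ X, (0 < j → c (j - 1) < x) → (j < M → x < c (j + 1)) →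
      |x - c j| ≤ δ := by
    intro j hj x hx h1 h2
    rcases lt_trichotomy x (c j) with h | h | h
    · have hj0 : 0 < j := by
        by_contra h0
        have : j = 0 := by omega
        subst this
        exact absurd (hclow x hx) (not_le.2 h)
      have hcc : c j - c (j - 1) ≤ δ := by
        have := hcell (j - 1) (by omega) x hx (h1 hj0) (by
          have : j - 1 + 1 = j := by omega
          rw [this]; exact h)
        have hjj : j - 1 + 1 = j := by omega
        rwa [hjj] at this
      have := h1 hj0
      rw [abs_of_nonpos (by linarith)]
      linarith
    · simp [h, hδ.le]
    · have hjM : j < M := by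
        by_contra h0
        have : j = M := by omega
        subst this
        exact absurd (hchigh x hx) (not_le.2 h)
      have h2' := h2 hjM
      have hcc : c (j + 1) - c j ≤ δ := hcell j hjM x hx h h2'
      rw [abs_of_nonneg (by linarith)]
      linarith
  -- the hat functions
  set g : ℕ → ℝ → ℝ := fun j x =>
    if j = 0 then max (c 1 - x) 0 / (c 1 - c 0)
    else if j = M then max (x - c (M - 1)) 0 / (c M - c (M - 1))
    else if j < M then
      min (max (x - c (j - 1)) 0 / (c j - c (j - 1)))
        (max (c (j + 1) - x) 0 / (c (j + 1) - c j))
    else 0 with hg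
  refine ⟨M, c, g, hcstrict, fun i _ => hcX i, ?_, ?_, ?_, ?_, ?_, ?_⟩
  · intro l hl
    obtain ⟨i, hi, hic⟩ := enum_surj hcard (lo_mem_knots hl)
    exact ⟨i, hi, hic⟩
  · intro l hl
    obtain ⟨i, hi, hic⟩ := enum_surj hcard (hi_mem_knots hl (hlohi l hl))
    exact ⟨i, hi, hic⟩
  · intro x; rw [hg]; simp
  · intro j hj1 hjM x
    simp only [hg]
    rw [if_neg (by omega : ¬ j = 0), if_neg (by omega : ¬ j = M), if_pos hjM]
  · intro x
    simp only [hg]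
    by_cases hM0 : M = 0
    · have he : c 1 = c 0 := by
        rw [hc]
        rw [enum_clamp hcard (by omega : s.card - 1 ≤ 1), enum_clamp hcard (by omega : s.card - 1 ≤ 0)]
      simp [hM0, he]
    · simp [if_neg hM0, hM0]
  · -- main estimate
    intro ν hνP hνXc hmom
    have hlom : ∀ l < k, lo l ∈ s := fun l hl => lo_mem_knots hl
    have him : ∀ l < k, hi l ∈ s := fun l hl => hi_mem_knots hl (hlohi l hl)
    clear_value s c g M δ
    have hμae : ∀ᵐ x ∂μ, x ∈ X := by rw [ae_iff]; exact hμ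
    have hνae : ∀ᵐ x ∂ν, x ∈ X := by rw [ae_iff]; exact hνXc
    by_cases hM0 : M = 0
    · -- degenerate case : X is a single point
      have hXone : ∀ x ∈ X, x = c 0 := by
        intro x hx
        obtain ⟨l, hl, hxl⟩ := (hXmem x).1 hx
        have hk1 : k = 1 := by
          by_contra hk2
          obtain ⟨i, hi, hie⟩ := enum_surj hcard (him 0 (by omega))
          obtain ⟨i', hi', hie'⟩ := enum_surj hcard (hlom 1 (by omega))
          have h1 : i = 0 := by omega
          have h2 : i' = 0 := by omega
          rw [h1] at hie; rw [h2] at hie'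
          have h3 := hdisj 0 (by omega)
          rw [show (0:ℕ) + 1 = 1 from rfl, ← hie, ← hie'] at h3
          exact lt_irrefl _ h3
        have hl0 : l = 0 := by omega
        subst hl0
        obtain ⟨i, hi, hie⟩ := enum_surj hcard (hlom 0 (by omega))
        obtain ⟨i', hi', hie'⟩ := enum_surj hcard (him 0 (by omega))
        have h1 : i = 0 := by omega
        have h2 : i' = 0 := by omega
        rw [h1] at hie; rw [h2] at hie'
        obtain ⟨ha, hb⟩ := hxl
        rw [← hie] at ha; rw [← hie'] at hb
        rw [hc]
        linarith
      set γ : Measure (ℝ × ℝ) := μ.prod ν with hγ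
      haveI : IsProbabilityMeasure γ := by rw [hγ]; infer_instance
      have hfst : γ.map Prod.fst = μ := by
        refine Measure.ext fun A hA => ?_
        rw [Measure.map_apply measurable_fst hA, hγ, ← Set.prod_univ,
          Measure.prod_prod, measure_univ, mul_one]
      have hsnd : γ.map Prod.snd = ν := by
        refine Measure.ext fun B hB => ?_
        rw [Measure.map_apply measurable_snd hB, hγ, ← Set.univ_prod,
          Measure.prod_prod, measure_univ, one_mul]
      have hae : ∀ᵐ p ∂γ, |p.1 - p.2| ≤ ε := by
        rw [ae_iff]
        have hsub : {p : ℝ × ℝ | ¬ |p.1 - p.2| ≤ ε} ⊆ (Xᶜ ×ˢ univ) ∪ (univ ×ˢ Xᶜ) := by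
          intro p hp
          by_contra hcon
          simp only [mem_union, mem_prod, mem_univ, and_true, true_and, mem_compl_iff,
            not_or, not_not] at hcon
          obtain ⟨h1, h2⟩ := hcon
          apply hp
          rw [hXone p.1 h1, hXone p.2 h2, sub_self, abs_zero]
          linarith
        refine measure_mono_null hsub ?_
        refine le_antisymm (le_trans (measure_union_le _ _) ?_) (zero_le)
        rw [hγ, Measure.prod_prod, Measure.prod_prod, hμ, hνXc, zero_mul, mul_zero, add_zero]
      exact sInf_le_of_coupling μ ν ε hε.le γ inferInstance hfst hsnd hae
    -- main case : M ≥ 1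
    have hM1 : 1 ≤ M := by omega
    have hgmeas : ∀ j, Measurable (g j) := by
      intro j; simp only [hg]
      split_ifs <;> fun_prop
    have hgnn : ∀ j x, 0 ≤ g j x := by
      intro j x; simp only [hg]
      split_ifs with h1 h2 h3
      · exact div_nonneg (le_max_right _ _) (by have := hcmono 0 1 (by omega); linarith)
      · exact div_nonneg (le_max_right _ _) (by have := hcmono (M - 1) M (by omega); linarith)
      · exact le_min (div_nonneg (le_max_right _ _) (by have := hcmono (j - 1) j (by omega); linarith))
          (div_nonneg (le_max_right _ _) (by have := hcmono j (j + 1) (by omega); linarith))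
      · exact le_refl 0
    have hgle : ∀ j ≤ M, ∀ x ∈ X, g j x ≤ 1 := by
      intro j hj x hx
      simp only [hg]
      split_ifs with h1 h2 h3
      · have hd : 0 < c 1 - c 0 := by have := hcstrict 0 hM1; linarith
        rw [div_le_one hd]
        exact max_le (by have := hclow x hx; linarith) hd.le
      · have hM' : M - 1 + 1 = M := by omega
        have hd : 0 < c M - c (M - 1) := by have := hcstrict (M - 1) (by omega); rw [hM'] at this; linarith
        rw [div_le_one hd]
        exact max_le (by have := hchigh x hx; linarith) hd.le
      · rcases le_total x (c j) with hcx | hcx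
        · have hj' : j - 1 + 1 = j := by omega
          have hd : 0 < c j - c (j - 1) := by have := hcstrict (j - 1) (by omega); rw [hj'] at this; linarith
          refine le_trans (min_le_left _ _) ?_
          rw [div_le_one hd]
          exact max_le (by linarith) hd.le
        · have hd : 0 < c (j + 1) - c j := by have := hcstrict j h3; linarith
          refine le_trans (min_le_right _ _) ?_
          rw [div_le_one hd]
          exact max_le (by linarith) hd.le
      · linarith
    -- vanishing lemmas
    have gzero_right : ∀ j < M, ∀ x : ℝ, c (j + 1) ≤ x → g j x = 0 := by
      intro j hjM x hcx
      simp only [hg]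
      by_cases h0 : j = 0
      · subst h0
        rw [if_pos rfl, max_eq_right (by linarith : c 1 - x ≤ 0), zero_div]
      · rw [if_neg h0, if_neg (by omega), if_pos hjM]
        rw [max_eq_right (by linarith : c (j + 1) - x ≤ 0), zero_div]
        exact min_eq_right (div_nonneg (le_max_right _ _)
          (by have := hcmono (j - 1) j (by omega); linarith))
    have gzero_left : ∀ j, 1 ≤ j → j ≤ M → ∀ x : ℝ, x ≤ c (j - 1) → g j x = 0 := by
      intro j hj1 hjM x hcx
      simp only [hg]
      rw [if_neg (by omega)]
      by_cases hM' : j = M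
      · rw [if_pos hM']
        rw [max_eq_right (by rw [← hM']; linarith : x - c (M - 1) ≤ 0), zero_div]
      · rw [if_neg hM', if_pos (by omega)]
        rw [max_eq_right (by linarith : x - c (j - 1) ≤ 0), zero_div]
        exact min_eq_left (div_nonneg (le_max_right _ _)
          (by have := hcmono j (j + 1) (by omega); linarith))
    have hgsupp : ∀ j ≤ M, ∀ x ∈ X, δ < |x - c j| → g j x = 0 := by
      intro j hj x hx hfar
      have hca : (0 < j ∧ x ≤ c (j - 1)) ∨ (j < M ∧ c (j + 1) ≤ x) := by
        by_contra hcon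
        push_neg at hcon
        obtain ⟨h1, h2⟩ := hcon
        exact absurd (hnear j hj x hx h1 h2) (not_le.2 hfar)
      rcases hca with ⟨hj0, hxle⟩ | ⟨hjM, hxge⟩
      · exact gzero_left j hj0 hj x hxle
      · exact gzero_right j hjM x hxge
    -- values on a cell
    have gval1 : ∀ i < M, ∀ x : ℝ, c i ≤ x → x ≤ c (i + 1) →
        g i x = (c (i + 1) - x) / (c (i + 1) - c i) := by
      intro i hiM x h1 h2
      simp only [hg]
      have hd : 0 < c (i + 1) - c i := by have := hcstrict i hiM; linarith
      by_cases h0 : i = 0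
      · subst h0
        rw [if_pos rfl, max_eq_left (by linarith : (0:ℝ) ≤ c 1 - x)]
      · rw [if_neg h0, if_neg (by omega), if_pos hiM]
        have hi' : i - 1 + 1 = i := by omega
        have hd' : 0 < c i - c (i - 1) := by have := hcstrict (i - 1) (by omega); rw [hi'] at this; linarith
        rw [max_eq_left (by linarith : (0:ℝ) ≤ c (i + 1) - x)]
        refine min_eq_right ?_
        calc (c (i + 1) - x) / (c (i + 1) - c i) ≤ 1 := by rw [div_le_one hd]; linarith
          _ ≤ max (x - c (i - 1)) 0 / (c i - c (i - 1)) := by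
              rw [le_div_iff₀ hd', one_mul, max_eq_left (by have := hcmono (i-1) i (by omega); linarith)]
              have := hcmono (i - 1) i (by omega)
              linarith
    have gval2 : ∀ i < M, ∀ x : ℝ, c i ≤ x → x ≤ c (i + 1) →
        g (i + 1) x = (x - c i) / (c (i + 1) - c i) := by
      intro i hiM x h1 h2
      simp only [hg]
      have hd : 0 < c (i + 1) - c i := by have := hcstrict i hiM; linarith
      rw [if_neg (by omega : ¬ i + 1 = 0)]
      by_cases hM' : i + 1 = M
      · rw [if_pos hM', ← hM', Nat.add_sub_cancel, max_eq_left (by linarith : (0:ℝ) ≤ x - c i)]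
      · rw [if_neg hM', if_pos (by omega), Nat.add_sub_cancel,
          max_eq_left (by linarith : (0:ℝ) ≤ x - c i)]
        have hd2 : 0 < c (i + 1 + 1) - c (i + 1) := by have := hcstrict (i + 1) (by omega); linarith
        refine min_eq_left ?_
        calc (x - c i) / (c (i + 1) - c i) ≤ 1 := by rw [div_le_one hd]; linarith
          _ ≤ max (c (i + 1 + 1) - x) 0 / (c (i + 1 + 1) - c (i + 1)) := by
              rw [le_div_iff₀ hd2, one_mul,
                max_eq_left (by have := hcmono (i + 1) (i + 1 + 1) (by omega); linarith)]
              have := hcmono (i + 1) (i + 1 + 1) (by omega)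
              linarith
    -- locate a point of X in the grid
    have hloc : ∀ x ∈ X, ∃ i < M, c i ≤ x ∧ x ≤ c (i + 1) := by
      intro x hx
      have hP0 : (fun i => c i ≤ x) 0 := hclow x hx
      have hPi := Nat.findGreatest_spec (P := fun i => c i ≤ x) (Nat.zero_le (M - 1)) hP0
      have hiM : Nat.findGreatest (fun i => c i ≤ x) (M - 1) ≤ M - 1 := Nat.findGreatest_le _
      have hPi' : c (Nat.findGreatest (fun i => c i ≤ x) (M - 1)) ≤ x := hPi
      have hilt : Nat.findGreatest (fun i => c i ≤ x) (M - 1) < M := by omega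
      refine ⟨Nat.findGreatest (fun i => c i ≤ x) (M - 1), hilt, hPi', ?_⟩
      by_cases hiM' : Nat.findGreatest (fun i => c i ≤ x) (M - 1) = M - 1
      · rw [show Nat.findGreatest (fun i => c i ≤ x) (M - 1) + 1 = M by omega]
        exact hchigh x hx
      · have hng := Nat.findGreatest_is_greatest (P := fun i => c i ≤ x) (n := M - 1)
          (k := Nat.findGreatest (fun i => c i ≤ x) (M - 1) + 1) (by omega) (by omega)
        have hle : ¬ c (Nat.findGreatest (fun i => c i ≤ x) (M - 1) + 1) ≤ x := hng
        exact (not_le.1 hle).le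
    -- partition of unity
    have hgsum : ∀ x ∈ X, ∑ j ∈ Finset.range (M + 1), g j x = 1 := by
      intro x hx
      obtain ⟨i, hiM, h1, h2⟩ := hloc x hx
      have hsub : ({i, i + 1} : Finset ℕ) ⊆ Finset.range (M + 1) := by
        intro t ht
        simp only [Finset.mem_insert, Finset.mem_singleton] at ht
        rcases ht with rfl | rfl <;> simp <;> omega
      rw [← Finset.sum_subset hsub ?_]
      · rw [Finset.sum_pair (by omega : i ≠ i + 1), gval1 i hiM x h1 h2, gval2 i hiM x h1 h2,
          ← add_div, show c (i + 1) - x + (x - c i) = c (i + 1) - c i by ring]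
        exact div_self (by have := hcstrict i hiM; linarith)
      · intro j hjr hjn
        simp only [Finset.mem_range] at hjr
        simp only [Finset.mem_insert, Finset.mem_singleton, not_or] at hjn
        obtain ⟨hne1, hne2⟩ := hjn
        rcases (by omega : j < i ∨ i + 1 < j) with h | h
        · exact gzero_right j (by omega) x (le_trans (hcmono (j + 1) i (by omega)) h1)
        · exact gzero_left j (by omega) (by omega) x (le_trans h2 (hcmono (i + 1) (j - 1) (by omega)))
    -- integrability
    have hint : ∀ (ρ : Measure ℝ), IsProbabilityMeasure ρ → (∀ᵐ x ∂ρ, x ∈ X) →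
        ∀ j ≤ M, Integrable (g j) ρ := by
      intro ρ hρ hρae j hj
      refine Integrable.mono' (integrable_const (1:ℝ)) (hgmeas j).aestronglyMeasurable ?_
      filter_upwards [hρae] with x hxX
      rw [Real.norm_eq_abs, abs_of_nonneg (hgnn j x)]
      exact hgle j hj x hxX
    have hsum_int : ∀ (ρ : Measure ℝ), IsProbabilityMeasure ρ → (∀ᵐ x ∂ρ, x ∈ X) →
        ∑ j ∈ Finset.range (M + 1), ∫ x, g j x ∂ρ = 1 := by
      intro ρ hρ hρae
      rw [← integral_finset_sum _ (fun j hj => hint ρ hρ hρae j (by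
        simp only [Finset.mem_range] at hj; omega))]
      rw [integral_congr_ae (g := fun _ => (1:ℝ)) (by
        filter_upwards [hρae] with x hxX
        exact hgsum x hxX)]
      simp
    have h0mom : ∫ x, g 0 x ∂ν = ∫ x, g 0 x ∂μ := by
      have hA := hsum_int μ inferInstance hμae
      have hB := hsum_int ν hνP hνae
      rw [Finset.sum_range_succ'] at hA hB
      have htail : ∑ j ∈ Finset.range M, ∫ x, g (j + 1) x ∂ν
          = ∑ j ∈ Finset.range M, ∫ x, g (j + 1) x ∂μ := by
        refine Finset.sum_congr rfl fun j hj => ?_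
        simp only [Finset.mem_range] at hj
        exact hmom (j + 1) (by omega) (by omega)
      linarith
    -- ENNReal densities
    set G : ℕ → ℝ → ℝ≥0∞ := fun j x => ENNReal.ofReal (g j x) with hG
    clear_value G
    have hGmeas : ∀ j, Measurable (G j) := by
      intro j
      rw [hG]
      exact (hgmeas j).ennreal_ofReal
    have hofReal : ∀ (ρ : Measure ℝ), IsProbabilityMeasure ρ → (∀ᵐ x ∂ρ, x ∈ X) →
        ∀ j ≤ M, ∫⁻ x, G j x ∂ρ = ENNReal.ofReal (∫ x, g j x ∂ρ) := by
      intro ρ hρ hρae j hj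
      rw [hG]
      exact (ofReal_integral_eq_lintegral_ofReal (hint ρ hρ hρae j hj)
        (Filter.Eventually.of_forall fun x => hgnn j x)).symm
    set n : ℕ → ℝ≥0∞ := fun j => ∫⁻ x, G j x ∂ν with hn
    clear_value n
    have hmn : ∀ j ≤ M, ∫⁻ x, G j x ∂μ = n j := by
      intro j hj
      rw [hofReal μ inferInstance hμae j hj, hn]
      simp only []
      rw [hofReal ν hνP hνae j hj]
      congr 1
      by_cases h0 : j = 0
      · subst h0; exact h0mom.symm
      · exact (hmom j (by omega) hj).symm
    have hn_le : ∀ j ≤ M, n j ≤ 1 := by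
      intro j hj
      rw [hn]
      simp only []
      calc ∫⁻ x, G j x ∂ν ≤ ∫⁻ _, 1 ∂ν := by
            refine lintegral_mono_ae ?_
            filter_upwards [hνae] with x hxX
            rw [hG]
            calc ENNReal.ofReal (g j x) ≤ ENNReal.ofReal 1 :=
                ENNReal.ofReal_le_ofReal (hgle j hj x hxX)
              _ = 1 := ENNReal.ofReal_one
        _ = 1 := by simp
    have hn_ne_top : ∀ j ≤ M, n j ≠ ⊤ := fun j hj => ne_top_of_le_ne_top one_ne_top (hn_le j hj)
    -- the coupling
    have hwduniv : ∀ (ρ : Measure ℝ) j, ρ.withDensity (G j) univ = ∫⁻ x, G j x ∂ρ := by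
      intro ρ j
      rw [withDensity_apply _ MeasurableSet.univ, Measure.restrict_univ]
    have hprodapp : ∀ j, ∀ A B : Set ℝ, MeasurableSet A → MeasurableSet B →
        ((μ.withDensity (G j)).prod ((n j)⁻¹ • ν.withDensity (G j))) (A ×ˢ B)
          = μ.withDensity (G j) A * ((n j)⁻¹ * ν.withDensity (G j) B) := by
      intro j A B hA hB
      rw [Measure.prod_prod, Measure.smul_apply, smul_eq_mul]
    set γ : Measure (ℝ × ℝ) :=
      ∑ j ∈ Finset.range (M + 1), ((μ.withDensity (G j)).prod ((n j)⁻¹ • ν.withDensity (G j)))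
      with hγ
    clear_value γ
    have hdsum : ∀ (ρ : Measure ℝ), (∀ᵐ x ∂ρ, x ∈ X) → ∀ A : Set ℝ, MeasurableSet A →
        ∑ j ∈ Finset.range (M + 1), ρ.withDensity (G j) A = ρ A := by
      intro ρ hρae A hA
      have h1 : ∀ j ∈ Finset.range (M + 1), ρ.withDensity (G j) A = ∫⁻ x in A, G j x ∂ρ :=
        fun j _ => withDensity_apply _ hA
      rw [Finset.sum_congr rfl h1, ← lintegral_finset_sum _ (fun j _ => hGmeas j)]
      have h2 : ∀ᵐ x ∂(ρ.restrict A), ∑ j ∈ Finset.range (M + 1), G j x = 1 := by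
        filter_upwards [ae_restrict_of_ae hρae] with x hxX
        rw [hG]
        simp only []
        rw [← ENNReal.ofReal_sum_of_nonneg (fun i _ => hgnn i x), hgsum x hxX,
          ENNReal.ofReal_one]
      rw [lintegral_congr_ae h2, setLIntegral_one]
    have key1 : ∀ A : Set ℝ, MeasurableSet A → γ (Prod.fst ⁻¹' A) = μ A := by
      intro A hA
      rw [← Set.prod_univ, hγ, Measure.finset_sum_apply]
      have hterm : ∀ j ∈ Finset.range (M + 1),
          ((μ.withDensity (G j)).prod ((n j)⁻¹ • ν.withDensity (G j))) (A ×ˢ univ)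
            = μ.withDensity (G j) A := by
        intro j hj
        have hj' : j ≤ M := by simp only [Finset.mem_range] at hj; omega
        rw [hprodapp j A univ hA MeasurableSet.univ, hwduniv ν j]
        by_cases h0 : n j = 0
        · have hμ0 : μ.withDensity (G j) A = 0 := by
            refine le_antisymm (le_trans (measure_mono (subset_univ _)) ?_) (zero_le)
            rw [hwduniv μ j, hmn j hj', h0]
          rw [hμ0, zero_mul]
        · have hnj : ∫⁻ x, G j x ∂ν = n j := by rw [hn]
          rw [hnj, ENNReal.inv_mul_cancel h0 (hn_ne_top j hj'), mul_one]
      rw [Finset.sum_congr rfl hterm, hdsum μ hμae A hA]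
    have key2 : ∀ B : Set ℝ, MeasurableSet B → γ (Prod.snd ⁻¹' B) = ν B := by
      intro B hB
      rw [← Set.univ_prod, hγ, Measure.finset_sum_apply]
      have hterm : ∀ j ∈ Finset.range (M + 1),
          ((μ.withDensity (G j)).prod ((n j)⁻¹ • ν.withDensity (G j))) (univ ×ˢ B)
            = ν.withDensity (G j) B := by
        intro j hj
        have hj' : j ≤ M := by simp only [Finset.mem_range] at hj; omega
        rw [hprodapp j univ B MeasurableSet.univ hB, hwduniv μ j, hmn j hj']
        by_cases h0 : n j = 0
        · have hν0 : ν.withDensity (G j) B = 0 := by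
            refine le_antisymm (le_trans (measure_mono (subset_univ _)) ?_) (zero_le)
            have hnj : ∫⁻ x, G j x ∂ν = n j := by rw [hn]
            rw [hwduniv ν j, hnj, h0]
          rw [hν0, mul_zero, h0, zero_mul]
        · rw [← mul_assoc, ENNReal.mul_inv_cancel h0 (hn_ne_top j hj'), one_mul]
      rw [Finset.sum_congr rfl hterm, hdsum ν hνae B hB]
    have hγP : IsProbabilityMeasure γ := by
      constructor
      have := key1 univ MeasurableSet.univ
      rwa [Set.preimage_univ, measure_univ (μ := μ)] at this
    have hmapfst : γ.map Prod.fst = μ :=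
      Measure.ext fun A hA => by rw [Measure.map_apply measurable_fst hA, key1 A hA]
    have hmapsnd : γ.map Prod.snd = ν :=
      Measure.ext fun B hB => by rw [Measure.map_apply measurable_snd hB, key2 B hB]
    -- concentration of the densities
    have hwd0 : ∀ (ρ : Measure ℝ), (∀ᵐ x ∂ρ, x ∈ X) → ∀ j ≤ M,
        ρ.withDensity (G j) (Icc (c j - δ) (c j + δ))ᶜ = 0 := by
      intro ρ hρae j hj
      rw [withDensity_apply _ measurableSet_Icc.compl]
      have h2 : ∀ᵐ x ∂(ρ.restrict (Icc (c j - δ) (c j + δ))ᶜ), G j x = 0 := by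
        filter_upwards [ae_restrict_of_ae hρae, ae_restrict_mem measurableSet_Icc.compl]
          with x hxX hxK
        have hfar : δ < |x - c j| := by
          by_contra hle
          push_neg at hle
          apply hxK
          rw [mem_Icc]
          have := abs_le.1 hle
          constructor <;> linarith [this.1, this.2]
        rw [hG]
        simp only []
        rw [hgsupp j hj x hxX hfar, ENNReal.ofReal_zero]
      rw [lintegral_congr_ae h2, lintegral_zero]
    have hae_bound : ∀ᵐ p ∂γ, |p.1 - p.2| ≤ ε := by
      rw [ae_iff, hγ, Measure.finset_sum_apply]
      refine Finset.sum_eq_zero fun j hj => ?_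
      have hj' : j ≤ M := by simp only [Finset.mem_range] at hj; omega
      set K : Set ℝ := Icc (c j - δ) (c j + δ) with hK
      have hsub : {p : ℝ × ℝ | ¬ |p.1 - p.2| ≤ ε} ⊆ (Kᶜ ×ˢ univ) ∪ (univ ×ˢ Kᶜ) := by
        intro p hp
        by_contra hcon
        simp only [mem_union, mem_prod, mem_univ, and_true, true_and, mem_compl_iff,
          not_or, not_not] at hcon
        obtain ⟨h1, h2⟩ := hcon
        rw [hK, mem_Icc] at h1 h2
        apply hp
        rw [abs_le]
        rw [hδdef] at h1 h2
        constructor <;> linarith [h1.1, h1.2, h2.1, h2.2]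
      refine measure_mono_null hsub ?_
      refine le_antisymm (le_trans (measure_union_le _ _) ?_) (zero_le)
      rw [hprodapp j Kᶜ univ measurableSet_Icc.compl MeasurableSet.univ,
        hprodapp j univ Kᶜ MeasurableSet.univ measurableSet_Icc.compl,
        hwd0 μ hμae j hj', hwd0 ν hνae j hj', zero_mul, mul_zero, mul_zero, add_zero]
    exact sInf_le_of_coupling μ ν ε hε.le γ hγP hmapfst hmapsnd hae_bound
end

section
/- Let X₁,…,X_N ⊂ ℝ be compact, 𝒳 := X₁×⋯×X_N, S ⊂ ℝ^K a compact set, and W ∈ ℝ^{K×N}, b ∈ ℝ^K. Let μ̂ and μ̃ be Borel probability measures on 𝒳 × S, and suppose there is a probability measure γ on 𝒳 × 𝒳̄ × S (with 𝒳̄ a copy of 𝒳) whose marginal on 𝒳 × S is μ̂, whose marginal on 𝒳̄ × S is μ̃, and whose marginal γ_i on X_i × X̄_i satisfies ∫ |x − x̄| dγ_i = W₁(μ̂_i, μ_i) for each i, where μ̂_i and μ_i are the i-th one-dimensional marginals of μ̂ and μ̃ respectively. Then ∫ ⟨Wx + b, λ⟩ dμ̂(x,λ) − ∫ ⟨Wx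 + b, λ⟩ dμ̃(x,λ) ≤ (∑_{i=1}^N W₁(μ̂_i, μ_i)) · sup_{λ ∈ S} ‖Wᵀλ‖_∞. -/
open MeasureTheory Matrix

/-- Wasserstein-1 distance between Borel probability measures on `ℝ`, as the infimum of the
transport cost `∫ |x − y| dγ` over all couplings `γ`. -/
noncomputable def wass1 (μ ν : Measure ℝ) : ℝ :=
  sInf {r | ∃ γ : Measure (ℝ × ℝ), IsProbabilityMeasure γ ∧
    γ.map Prod.fst = μ ∧ γ.map Prod.snd = ν ∧ r = ∫ p, |p.1 - p.2| ∂γ}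

private lemma integrable_of_compact_ae {α : Type*} [MeasurableSpace α] [TopologicalSpace α]
    [OpensMeasurableSpace α] (γ : Measure α) [IsFiniteMeasure γ] {A : Set α}
    (hA : IsCompact A) (h0 : γ Aᶜ = 0) {f : α → ℝ} (hf : Continuous f) :
    Integrable f γ := by
  obtain ⟨C, hC⟩ := hA.exists_bound_of_continuousOn hf.continuousOn
  refine Integrable.mono' (integrable_const C) hf.aestronglyMeasurable ?_
  have hmem : ∀ᵐ p ∂γ, p ∈ A := by
    rw [ae_iff]
    simpa [Set.compl_def] using h0
  filter_upwards [hmem] with p hp using hC p hp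

/-- the partial-reassembly gap bound.  If `γ` glues `μ̂` and `μ̃` through
couplings of their one-dimensional marginals that attain the respective Wasserstein-1
distances, leaving the `S` component unchanged, then the difference of the integrals of
`⟨Wx + b, λ⟩` is bounded by `(∑ᵢ W₁(μ̂ᵢ, μᵢ)) · sup_{λ ∈ S} ‖Wᵀλ‖_∞`. -/
theorem stmt_8 (N K : ℕ)
    (X : Fin N → Set ℝ) (hXc : ∀ i, IsCompact (X i))
    (S : Set (Fin K → ℝ)) (hSc : IsCompact S) (hSne : S.Nonempty)
    (W : Matrix (Fin K) (Fin N) ℝ) (b : Fin K → ℝ)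
    (μhat μtil : Measure ((Fin N → ℝ) × (Fin K → ℝ)))
    [IsProbabilityMeasure μhat] [IsProbabilityMeasure μtil]
    (γ : Measure ((Fin N → ℝ) × (Fin N → ℝ) × (Fin K → ℝ))) [IsProbabilityMeasure γ]
    (hγhat : γ.map (fun p => (p.1, p.2.2)) = μhat)
    (hγtil : γ.map (fun p => (p.2.1, p.2.2)) = μtil)
    (hsupp : γ {p | (∀ i, p.1 i ∈ X i) ∧ (∀ i, p.2.1 i ∈ X i) ∧ p.2.2 ∈ S}ᶜ = 0)
    (hopt : ∀ i, ∫ p, |p.1 i - p.2.1 i| ∂γ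
      = wass1 (μhat.map (fun q => q.1 i)) (μtil.map (fun q => q.1 i))) :
    ∫ p, (W.mulVec p.1 + b) ⬝ᵥ p.2 ∂μhat - ∫ p, (W.mulVec p.1 + b) ⬝ᵥ p.2 ∂μtil
      ≤ (∑ i, wass1 (μhat.map (fun q => q.1 i)) (μtil.map (fun q => q.1 i))) *
          sSup {r | ∃ lam ∈ S, r = ‖W.transpose.mulVec lam‖} := by
  set M := sSup {r | ∃ lam ∈ S, r = ‖W.transpose.mulVec lam‖} with hMdef
  -- supremum bound
  have hset : {r | ∃ lam ∈ S, r = ‖W.transpose.mulVec lam‖}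
      = (fun lam => ‖W.transpose.mulVec lam‖) '' S := by
    ext r; simp [eq_comm, Set.mem_image]
  have hcont_n : Continuous fun lam : Fin K → ℝ => ‖W.transpose.mulVec lam‖ :=
    (continuous_const.matrix_mulVec continuous_id).norm
  have hbdd : BddAbove {r | ∃ lam ∈ S, r = ‖W.transpose.mulVec lam‖} := by
    rw [hset]; exact (hSc.image hcont_n).bddAbove
  have hM : ∀ lam ∈ S, ‖W.transpose.mulVec lam‖ ≤ M :=
    fun lam hl => le_csSup hbdd ⟨lam, hl, rfl⟩
  -- the compact support set
  set A : Set ((Fin N → ℝ) × (Fin N → ℝ) × (Fin K → ℝ)) :=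
    (Set.univ.pi X) ×ˢ ((Set.univ.pi X) ×ˢ S) with hAdef
  have hAc : IsCompact A :=
    (isCompact_univ_pi hXc).prod ((isCompact_univ_pi hXc).prod hSc)
  have h0 : γ Aᶜ = 0 := by
    have : A = {p | (∀ i, p.1 i ∈ X i) ∧ (∀ i, p.2.1 i ∈ X i) ∧ p.2.2 ∈ S} := by
      ext p; simp [hAdef, Set.mem_pi]
    rw [this]; exact hsupp
  have hmemA : ∀ᵐ p ∂γ, p ∈ A := by
    rw [ae_iff]; simpa [Set.compl_def] using h0
  -- the payoff function
  set f : (Fin N → ℝ) × (Fin K → ℝ) → ℝ := fun q => (W.mulVec q.1 + b) ⬝ᵥ q.2 with hfdef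
  have hfc : Continuous f := by
    apply Continuous.dotProduct
    · exact (continuous_const.matrix_mulVec continuous_fst).add continuous_const
    · exact continuous_snd
  set g1 : (Fin N → ℝ) × (Fin N → ℝ) × (Fin K → ℝ) → ℝ := fun p => f (p.1, p.2.2) with hg1
  set g2 : (Fin N → ℝ) × (Fin N → ℝ) × (Fin K → ℝ) → ℝ := fun p => f (p.2.1, p.2.2) with hg2
  have hg1c : Continuous g1 := hfc.comp (continuous_fst.prodMk continuous_snd.snd)
  have hg2c : Continuous g2 := hfc.comp (continuous_snd.fst.prodMk continuous_snd.snd)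
  have ig1 : Integrable g1 γ := integrable_of_compact_ae γ hAc h0 hg1c
  have ig2 : Integrable g2 γ := integrable_of_compact_ae γ hAc h0 hg2c
  have iabs : ∀ i, Integrable (fun p : (Fin N → ℝ) × (Fin N → ℝ) × (Fin K → ℝ) =>
      |p.1 i - p.2.1 i|) γ := fun i =>
    integrable_of_compact_ae γ hAc h0
      (((continuous_apply i).comp continuous_fst).sub
        ((continuous_apply i).comp continuous_snd.fst)).abs
  have iH : Integrable (fun p : (Fin N → ℝ) × (Fin N → ℝ) × (Fin K → ℝ) =>
      (∑ i, |p.1 i - p.2.1 i|) * M) γ :=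
    (integrable_finset_sum _ fun i _ => iabs i).mul_const M
  -- transfer the integrals through γ
  have h1 : ∫ p, f p ∂μhat = ∫ p, g1 p ∂γ := by
    rw [← hγhat, integral_map (by fun_prop) hfc.aestronglyMeasurable]
  have h2 : ∫ p, f p ∂μtil = ∫ p, g2 p ∂γ := by
    rw [← hγtil, integral_map (by fun_prop) hfc.aestronglyMeasurable]
  -- pointwise bound on A
  have hptwise : ∀ᵐ p ∂γ, g1 p - g2 p ≤ (∑ i, |p.1 i - p.2.1 i|) * M := by
    filter_upwards [hmemA] with p hp
    obtain ⟨hx, hxbar, hlam⟩ : p.1 ∈ Set.univ.pi X ∧ p.2.1 ∈ Set.univ.pi X ∧ p.2.2 ∈ S := hp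
    have key : g1 p - g2 p = ∑ i, (W.transpose.mulVec p.2.2) i * (p.1 i - p.2.1 i) := by
      have e1 : g1 p - g2 p = W.mulVec (p.1 - p.2.1) ⬝ᵥ p.2.2 := by
        simp only [hg1, hg2, hfdef, Matrix.mulVec_sub, add_dotProduct,
          sub_dotProduct]
        ring
      rw [e1, dotProduct_comm, Matrix.dotProduct_mulVec, ← Matrix.mulVec_transpose]
      rfl
    rw [key]
    have hM' : ‖W.transpose.mulVec p.2.2‖ ≤ M := hM _ hlam
    calc ∑ i, (W.transpose.mulVec p.2.2) i * (p.1 i - p.2.1 i)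
        ≤ ∑ i, |p.1 i - p.2.1 i| * M := by
          apply Finset.sum_le_sum
          intro i _
          calc (W.transpose.mulVec p.2.2) i * (p.1 i - p.2.1 i)
              ≤ |(W.transpose.mulVec p.2.2) i * (p.1 i - p.2.1 i)| := le_abs_self _
            _ = |(W.transpose.mulVec p.2.2) i| * |p.1 i - p.2.1 i| := abs_mul _ _
            _ ≤ M * |p.1 i - p.2.1 i| := by
                apply mul_le_mul_of_nonneg_right _ (abs_nonneg _)
                exact le_trans (by simpa using norm_le_pi_norm (W.transpose.mulVec p.2.2) i) hM'
            _ = |p.1 i - p.2.1 i| * M := mul_comm _ _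
      _ = (∑ i, |p.1 i - p.2.1 i|) * M := by rw [Finset.sum_mul]
  calc ∫ p, (W.mulVec p.1 + b) ⬝ᵥ p.2 ∂μhat - ∫ p, (W.mulVec p.1 + b) ⬝ᵥ p.2 ∂μtil
      = ∫ p, (g1 p - g2 p) ∂γ := by
        rw [integral_sub ig1 ig2, ← h1, ← h2]
    _ ≤ ∫ p, (∑ i, |p.1 i - p.2.1 i|) * M ∂γ :=
        integral_mono_ae (ig1.sub ig2) iH hptwise
    _ = (∑ i, ∫ p, |p.1 i - p.2.1 i| ∂γ) * M := by
        rw [integral_mul_const, integral_finset_sum _ fun i _ => iabs i]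
    _ = (∑ i, wass1 (μhat.map (fun q => q.1 i)) (μtil.map (fun q => q.1 i))) * M := by
        congr 1; exact Finset.sum_congr rfl fun i _ => hopt i
end

section
/- Let κ₀ < κ₁ < ⋯ < κ_m be real knots, X ⊆ [κ₀, κ_m] a finite union of compact intervals containing all κ_j, and let u : X → ℝ be continuous piecewise affine on the pieces X ∩ [κ_{j−1},κ_j] with u(κ₀) = 0. Let u** denote the convex bi-conjugate of u on X, i.e., u**(x) := sup_{η ∈ ℝ}(ηx − u*(η)) where u*(η) := sup_{x ∈ X}(ηx − u(x)). Then u** is itself continuous piecewise affine on the same pieces, satisfies u**(κ_j) ≤ u(κ_j) for all j, u**(κ₀) = u(κ₀) = 0, and u** ≤ u pointwise on X; moreover u** is determined by its values at the knots via the piecewise affine interpolation basis. -/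
open Set

lemma stmt12_kmono (m : ℕ) (κ : ℕ → ℝ) (hκ : ∀ i < m, κ i < κ (i + 1)) :
    ∀ b ≤ m, ∀ a ≤ b, κ a ≤ κ b := by
  intro b hb
  induction b with
  | zero => intro a ha; simp [Nat.le_zero.mp ha]
  | succ n ih =>
    intro a ha
    rcases Nat.lt_or_ge a (n + 1) with h | h
    · exact le_trans (ih (by omega) a (by omega)) (le_of_lt (hκ n (by omega)))
    · have : a = n + 1 := by omega
      simp [this]

lemma stmt12_kstrict (m : ℕ) (κ : ℕ → ℝ) (hκ : ∀ i < m, κ i < κ (i + 1)) :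
    ∀ b ≤ m, ∀ a < b, κ a < κ b := by
  intro b hb a hab
  have h1 : κ a ≤ κ (b - 1) := stmt12_kmono m κ hκ (b - 1) (by omega) a (by omega)
  have h2 : κ (b - 1) < κ (b - 1 + 1) := hκ (b - 1) (by omega)
  have : b - 1 + 1 = b := by omega
  rw [this] at h2
  exact lt_of_le_of_lt h1 h2

lemma stmt12_piece (m : ℕ) (κ : ℕ → ℝ) :
    ∀ n, 1 ≤ n → n ≤ m → ∀ x : ℝ, κ 0 ≤ x → x ≤ κ n →
      ∃ i, 1 ≤ i ∧ i ≤ n ∧ κ (i - 1) ≤ x ∧ x ≤ κ i := by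
  intro n
  induction n with
  | zero => omega
  | succ n ih =>
    intro _ hnm x hx0 hxn
    rcases Nat.eq_zero_or_pos n with rfl | hn
    · exact ⟨1, le_refl _, le_refl _, by simpa using hx0, hxn⟩
    · rcases le_or_gt x (κ n) with h | h
      · obtain ⟨i, h1, h2, h3, h4⟩ := ih hn (by omega) x hx0 h
        exact ⟨i, h1, by omega, h3, h4⟩
      · exact ⟨n + 1, by omega, le_refl _, by simpa using h.le, hxn⟩

set_option maxHeartbeats 1000000 in
/-- the convex bi-conjugate `u**` of a continuous piecewise affine function
`u` on a finite union of compact intervals `X` with knots `κ 0 < ⋯ < κ m` and `u(κ 0) = 0`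
is again continuous piecewise affine on the same pieces, satisfies `u**(κ_j) ≤ u(κ_j)`,
`u**(κ 0) = u(κ 0) = 0`, `u** ≤ u` on `X`, and it is determined by its values at the knots
via piecewise affine interpolation. -/
theorem stmt_12 (m : ℕ) (hm : 1 ≤ m) (κ : ℕ → ℝ)
    (hκ : ∀ i < m, κ i < κ (i + 1))
    (X : Set ℝ)
    (hknots : ∀ i ≤ m, κ i ∈ X)
    (hsub : X ⊆ Icc (κ 0) (κ m))
    (hpieces : ∀ i, 1 ≤ i → i ≤ m →
      X ∩ Icc (κ (i - 1)) (κ i) = Icc (κ (i - 1)) (κ i) ∨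
      X ∩ Icc (κ (i - 1)) (κ i) = {κ (i - 1), κ i})
    (u : ℝ → ℝ) (hucont : ContinuousOn u X)
    (huaff : ∀ i, 1 ≤ i → i ≤ m →
      ∃ p q : ℝ, ∀ x ∈ X ∩ Icc (κ (i - 1)) (κ i), u x = p * x + q)
    (hu0 : u (κ 0) = 0)
    (ustar : ℝ → ℝ) (hustar : ∀ η, ustar η = sSup {v | ∃ x ∈ X, v = η * x - u x})
    (ustst : ℝ → ℝ) (hustst : ∀ x, ustst x = sSup {v | ∃ η : ℝ, v = η * x - ustar η}) :
    (∀ i, 1 ≤ i → i ≤ m →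
      ∃ p q : ℝ, ∀ x ∈ X ∩ Icc (κ (i - 1)) (κ i), ustst x = p * x + q) ∧
    ContinuousOn ustst X ∧
    (∀ j ≤ m, ustst (κ j) ≤ u (κ j)) ∧
    ustst (κ 0) = u (κ 0) ∧ ustst (κ 0) = 0 ∧
    (∀ x ∈ X, ustst x ≤ u x) ∧
    (∀ h : ℝ → ℝ,
      (∀ i, 1 ≤ i → i ≤ m →
        ∃ p q : ℝ, ∀ x ∈ X ∩ Icc (κ (i - 1)) (κ i), h x = p * x + q) →
      (∀ j ≤ m, h (κ j) = ustst (κ j)) →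
      ∀ x ∈ X, h x = ustst x) := by
  have hKne : (Finset.range (m + 1)).Nonempty := ⟨0, by simp⟩
  set M : ℝ → ℝ := fun η => (Finset.range (m + 1)).sup' hKne (fun j => η * κ j - u (κ j))
    with hMdef
  have kmono := stmt12_kmono m κ hκ
  have kstrict := stmt12_kstrict m κ hκ
  -- knot membership in pieces
  have hknotmem : ∀ i, 1 ≤ i → i ≤ m →
      κ (i - 1) ∈ X ∩ Icc (κ (i - 1)) (κ i) ∧ κ i ∈ X ∩ Icc (κ (i - 1)) (κ i) := by
    intro i hi1 him
    have hle : κ (i - 1) ≤ κ i := kmono i him (i - 1) (by omega)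
    exact ⟨⟨hknots _ (by omega), le_refl _, hle⟩, ⟨hknots _ him, hle, le_refl _⟩⟩
  -- A1 : affine bound
  have hA1 : ∀ (η x : ℝ), x ∈ X → η * x - u x ≤ M η := by
    intro η x hx
    obtain ⟨hx0, hxm⟩ := hsub hx
    obtain ⟨i, hi1, him, hxl, hxr⟩ := stmt12_piece m κ m hm le_rfl x hx0 hxm
    obtain ⟨p, q, hpq⟩ := huaff i hi1 him
    obtain ⟨hml, hmr⟩ := hknotmem i hi1 him
    have hux : u x = p * x + q := hpq x ⟨hx, hxl, hxr⟩
    have hul : u (κ (i - 1)) = p * κ (i - 1) + q := hpq _ hml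
    have hur : u (κ i) = p * κ i + q := hpq _ hmr
    have hle_r : η * κ i - u (κ i) ≤ M η :=
      Finset.le_sup' (fun j => η * κ j - u (κ j)) (by simp; omega)
    have hle_l : η * κ (i - 1) - u (κ (i - 1)) ≤ M η :=
      Finset.le_sup' (fun j => η * κ j - u (κ j)) (by simp; omega)
    rcases le_total p η with h | h
    · have hmul : (η - p) * x ≤ (η - p) * κ i :=
        mul_le_mul_of_nonneg_left hxr (by linarith)
      nlinarith
    · have hmul : (η - p) * x ≤ (η - p) * κ (i - 1) :=
        mul_le_mul_of_nonpos_left hxl (by linarith)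
      nlinarith
  -- A2 : ustar = M
  have hA2 : ∀ η, ustar η = M η := by
    intro η
    rw [hustar]
    apply le_antisymm
    · refine csSup_le ⟨η * κ 0 - u (κ 0), ⟨κ 0, hknots 0 (by omega), rfl⟩⟩ ?_
      rintro v ⟨x, hx, rfl⟩
      exact hA1 η x hx
    · obtain ⟨j, hj, hjeq⟩ := Finset.exists_mem_eq_sup' hKne (fun j => η * κ j - u (κ j))
      have hjm : j ≤ m := by simpa [Nat.lt_succ_iff] using hj
      have : M η = η * κ j - u (κ j) := hjeq
      rw [this]
      exact le_csSup ⟨M η, by rintro v ⟨x, hx, rfl⟩; exact hA1 η x hx⟩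
        ⟨κ j, hknots j hjm, rfl⟩
  -- simultaneous maximizer slope for each piece
  have hEta : ∀ i : ℕ, ∃ e : ℝ, 1 ≤ i → i ≤ m →
      ∀ η : ℝ, ustar e + (η - e) * κ (i - 1) ≤ ustar η ∧
        ustar e + (η - e) * κ i ≤ ustar η := by
    intro i
    by_cases hi : 1 ≤ i ∧ i ≤ m
    · obtain ⟨hi1, him⟩ := hi
      have hAne : (Finset.range i).Nonempty := ⟨0, by simp; omega⟩
      have hBne : (Finset.Icc i m).Nonempty := ⟨i, by simp [him]⟩
      set f : ℝ → ℝ := fun η => (Finset.range i).sup' hAne (fun j => η * κ j - u (κ j))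
        with hfdef
      set g : ℝ → ℝ := fun η => (Finset.Icc i m).sup' hBne (fun j => η * κ j - u (κ j))
        with hgdef
      have hfM : ∀ η, f η ≤ M η := by
        intro η
        apply Finset.sup'_le
        intro j hj
        simp only [Finset.mem_range] at hj
        exact Finset.le_sup' (fun j => η * κ j - u (κ j)) (by simp; omega)
      have hMfg : ∀ η, M η ≤ max (f η) (g η) := by
        intro η
        apply Finset.sup'_le
        intro j hj
        simp only [Finset.mem_range] at hj
        rcases Nat.lt_or_ge j i with h | h
        · exact le_max_of_le_left
            (Finset.le_sup' (fun j => η * κ j - u (κ j)) (by simpa using h))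
        · exact le_max_of_le_right
            (Finset.le_sup' (fun j => η * κ j - u (κ j)) (by simp; omega))
      have hfc : Continuous f := by
        apply Continuous.finset_sup'_apply hAne
          (f := fun (j : ℕ) (η : ℝ) => η * κ j - u (κ j))
        intro j _
        exact (continuous_id.mul continuous_const).sub continuous_const
      have hgc : Continuous g := by
        apply Continuous.finset_sup'_apply hBne
          (f := fun (j : ℕ) (η : ℝ) => η * κ j - u (κ j))
        intro j _
        exact (continuous_id.mul continuous_const).sub continuous_const
      set C : ℝ := (Finset.range (m + 1)).sup' hKne (fun j => -u (κ j)) with hCdef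
      have hCge : ∀ j ≤ m, -u (κ j) ≤ C := fun j hj =>
        Finset.le_sup' (fun j => -u (κ j)) (by simp; omega)
      have hgapr : 0 < κ m - κ (i - 1) := by
        have := kstrict m le_rfl (i - 1) (by omega); linarith
      have hgapl : 0 < κ i - κ 0 := by
        have := kstrict i him 0 (by omega); linarith
      set η₂ : ℝ := max 0 ((u (κ m) + C) / (κ m - κ (i - 1))) with hn2def
      set η₁ : ℝ := min 0 ((-u (κ 0) - C) / (κ i - κ 0)) with hn1def
      have h12 : η₁ ≤ η₂ := le_trans (min_le_left _ _) (le_max_left _ _)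
      have hd2 : f η₂ ≤ g η₂ := by
        have h2a : u (κ m) + C ≤ η₂ * (κ m - κ (i - 1)) :=
          (div_le_iff₀ hgapr).mp (le_max_right _ _)
        have h2b : f η₂ ≤ η₂ * κ (i - 1) + C := by
          apply Finset.sup'_le
          intro j hj
          simp only [Finset.mem_range] at hj
          have hmono : κ j ≤ κ (i - 1) := kmono (i - 1) (by omega) j (by omega)
          have hmm : η₂ * κ j ≤ η₂ * κ (i - 1) :=
            mul_le_mul_of_nonneg_left hmono (le_max_left _ _)
          have hc := hCge j (by omega)
          linarith
        have h2c : η₂ * κ m - u (κ m) ≤ g η₂ :=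
          Finset.le_sup' (fun j => η₂ * κ j - u (κ j)) (by simp; omega)
        nlinarith
      have hd1 : g η₁ ≤ f η₁ := by
        have h1a : η₁ * (κ i - κ 0) ≤ -u (κ 0) - C :=
          (le_div_iff₀ hgapl).mp (min_le_right _ _)
        have h1b : g η₁ ≤ η₁ * κ i + C := by
          apply Finset.sup'_le
          intro j hj
          simp only [Finset.mem_Icc] at hj
          have hmono : κ i ≤ κ j := kmono j hj.2 i hj.1
          have hmm : η₁ * κ j ≤ η₁ * κ i :=
            mul_le_mul_of_nonpos_left hmono (min_le_left _ _)
          have hc := hCge j hj.2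
          linarith
        have h1c : η₁ * κ 0 - u (κ 0) ≤ f η₁ :=
          Finset.le_sup' (fun j => η₁ * κ j - u (κ j)) (by simp; omega)
        nlinarith
      have hIVT := intermediate_value_Icc h12 ((hgc.sub hfc).continuousOn)
      have h0mem : (0 : ℝ) ∈ Icc (g η₁ - f η₁) (g η₂ - f η₂) := ⟨by linarith, by linarith⟩
      obtain ⟨e, _, he⟩ := hIVT h0mem
      have hfg : f e = g e := by
        have he : g e - f e = 0 := he
        linarith
      have hMe : M e = f e := le_antisymm (by
        have h := hMfg e
        rw [← hfg, max_self] at h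
        exact h) (hfM e)
      obtain ⟨j₁, hj₁, hj₁eq⟩ :=
        Finset.exists_mem_eq_sup' hAne (fun j => e * κ j - u (κ j))
      obtain ⟨j₂, hj₂, hj₂eq⟩ :=
        Finset.exists_mem_eq_sup' hBne (fun j => e * κ j - u (κ j))
      have hfe1 : f e = e * κ j₁ - u (κ j₁) := hj₁eq
      have hge2 : g e = e * κ j₂ - u (κ j₂) := hj₂eq
      simp only [Finset.mem_range] at hj₁
      simp only [Finset.mem_Icc] at hj₂
      refine ⟨e, fun _ _ η => ?_⟩
      have hue : ustar e = M e := hA2 e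
      rw [hA2 η, hue]
      rcases le_total e η with hcase | hcase
      · have hki : κ i ≤ κ j₂ := kmono j₂ hj₂.2 i hj₂.1
        have hstar : η * κ j₂ - u (κ j₂) ≤ M η :=
          Finset.le_sup' (fun j => η * κ j - u (κ j)) (by simp; omega)
        have hid : η * κ j₂ - u (κ j₂) = (e * κ j₂ - u (κ j₂)) + (η - e) * κ j₂ := by ring
        have hmul2 : (η - e) * κ i ≤ (η - e) * κ j₂ :=
          mul_le_mul_of_nonneg_left hki (by linarith)
        have hmul1 : (η - e) * κ (i - 1) ≤ (η - e) * κ i :=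
          mul_le_mul_of_nonneg_left (kmono i him (i - 1) (by omega)) (by linarith)
        constructor <;> linarith
      · have hki : κ j₁ ≤ κ (i - 1) := kmono (i - 1) (by omega) j₁ (by omega)
        have hstar : η * κ j₁ - u (κ j₁) ≤ M η :=
          Finset.le_sup' (fun j => η * κ j - u (κ j)) (by simp; omega)
        have hid : η * κ j₁ - u (κ j₁) = (e * κ j₁ - u (κ j₁)) + (η - e) * κ j₁ := by ring
        have hmul2 : (η - e) * κ (i - 1) ≤ (η - e) * κ j₁ :=
          mul_le_mul_of_nonpos_left hki (by linarith)
        have hmul1 : (η - e) * κ i ≤ (η - e) * κ (i - 1) :=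
          mul_le_mul_of_nonpos_left (kmono i him (i - 1) (by omega)) (by linarith)
        constructor <;> linarith
    · exact ⟨0, fun h1 h2 => absurd ⟨h1, h2⟩ hi⟩
  choose eta hEta using hEta
  -- the affine formula for ustst on each piece
  have hC : ∀ i, 1 ≤ i → i ≤ m → ∀ x ∈ Icc (κ (i - 1)) (κ i),
      ustst x = eta i * x - ustar (eta i) := by
    intro i hi1 him x hx
    rw [hustst]
    apply IsGreatest.csSup_eq
    constructor
    · exact ⟨eta i, rfl⟩
    · rintro v ⟨η, rfl⟩
      obtain ⟨h1, h2⟩ := hEta i hi1 him η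
      rcases le_total (eta i) η with hc | hc
      · have hmm : (η - eta i) * x ≤ (η - eta i) * κ i :=
          mul_le_mul_of_nonneg_left hx.2 (by linarith)
        nlinarith
      · have hmm : (η - eta i) * x ≤ (η - eta i) * κ (i - 1) :=
          mul_le_mul_of_nonpos_left hx.1 (by linarith)
        nlinarith
  -- pointwise bound
  have hbdd : ∀ x : ℝ, x ∈ X → ∀ v ∈ {v | ∃ η : ℝ, v = η * x - ustar η}, v ≤ u x := by
    rintro x hx v ⟨η, rfl⟩
    have h1 := hA1 η x hx
    rw [← hA2 η] at h1
    linarith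
  have h6 : ∀ x ∈ X, ustst x ≤ u x := by
    intro x hx
    rw [hustst]
    exact csSup_le ⟨0 * x - ustar 0, ⟨0, rfl⟩⟩ (hbdd x hx)
  -- value at κ 0
  have hNe1 : (Finset.Icc 1 m).Nonempty := ⟨1, by simp [hm]⟩
  set η₀ : ℝ := (Finset.Icc 1 m).inf' hNe1 (fun j => u (κ j) / (κ j - κ 0)) with hn0def
  have hM0 : M η₀ ≤ η₀ * κ 0 := by
    apply Finset.sup'_le
    intro j hj
    simp only [Finset.mem_range] at hj
    rcases Nat.eq_zero_or_pos j with rfl | hj1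
    · simp [hu0]
    · have hpos : 0 < κ j - κ 0 := by
        have := kstrict j (by omega) 0 hj1; linarith
      have hle : η₀ ≤ u (κ j) / (κ j - κ 0) :=
        Finset.inf'_le (fun j => u (κ j) / (κ j - κ 0)) (by simp; omega)
      have hprod := (le_div_iff₀ hpos).mp hle
      nlinarith
  have h40 : ustst (κ 0) = 0 := by
    apply le_antisymm
    · have h := h6 (κ 0) (hknots 0 (by omega)); rw [hu0] at h; exact h
    · rw [hustst]
      have hbd : BddAbove {v | ∃ η : ℝ, v = η * κ 0 - ustar η} :=
        ⟨u (κ 0), fun v hv => hbdd (κ 0) (hknots 0 (by omega)) v hv⟩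
      have hmem : η₀ * κ 0 - ustar η₀ ∈ {v | ∃ η : ℝ, v = η * κ 0 - ustar η} := ⟨η₀, rfl⟩
      have hle := le_csSup hbd hmem
      have h0 : 0 ≤ η₀ * κ 0 - ustar η₀ := by rw [hA2]; linarith
      linarith
  -- continuity
  have haffc : ∀ i, 1 ≤ i → i ≤ m → ContinuousOn ustst (Icc (κ (i - 1)) (κ i)) := by
    intro i h1 h2
    exact ContinuousOn.congr
      (Continuous.continuousOn
        ((continuous_const.mul continuous_id).sub continuous_const :
          Continuous (fun x : ℝ => eta i * x - ustar (eta i))))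
      (fun x hx => hC i h1 h2 x hx)
  have hcont : ∀ n, 1 ≤ n → n ≤ m → ContinuousOn ustst (Icc (κ 0) (κ n)) := by
    intro n
    induction n with
    | zero => omega
    | succ n ih =>
      intro _ hnm
      rcases Nat.eq_zero_or_pos n with rfl | hn
      · have := haffc 1 le_rfl hm
        simpa using this
      · have h1 := ih hn (by omega)
        have h2 := haffc (n + 1) (by omega) hnm
        have hn1 : n + 1 - 1 = n := by omega
        rw [hn1] at h2
        have hun : Icc (κ 0) (κ n) ∪ Icc (κ n) (κ (n + 1)) = Icc (κ 0) (κ (n + 1)) :=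
          Icc_union_Icc_eq_Icc (kmono n (by omega) 0 (by omega)) (le_of_lt (hκ n (by omega)))
        rw [← hun]
        intro x hx
        have c1 : ContinuousWithinAt ustst (Icc (κ 0) (κ n)) x := by
          by_cases h : x ∈ Icc (κ 0) (κ n)
          · exact h1 x h
          · exact continuousWithinAt_of_notMem_closure (by rwa [isClosed_Icc.closure_eq])
        have c2 : ContinuousWithinAt ustst (Icc (κ n) (κ (n + 1))) x := by
          by_cases h : x ∈ Icc (κ n) (κ (n + 1))
          · exact h2 x h
          · exact continuousWithinAt_of_notMem_closure (by rwa [isClosed_Icc.closure_eq])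
        exact c1.union c2
  refine ⟨?_, ?_, ?_, ?_, ?_, h6, ?_⟩
  · intro i h1 h2
    exact ⟨eta i, -(ustar (eta i)), fun x hx => by rw [hC i h1 h2 x hx.2]; ring⟩
  · exact (hcont m hm le_rfl).mono hsub
  · intro j hj
    exact h6 (κ j) (hknots j hj)
  · rw [h40, hu0]
  · exact h40
  · intro h hhaff hhk x hx
    obtain ⟨hx0, hxm⟩ := hsub hx
    obtain ⟨i, hi1, him, hxl, hxr⟩ := stmt12_piece m κ m hm le_rfl x hx0 hxm
    obtain ⟨p, q, hpq⟩ := hhaff i hi1 him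
    obtain ⟨hml, hmr⟩ := hknotmem i hi1 him
    have hstl : ustst (κ (i - 1)) = eta i * κ (i - 1) - ustar (eta i) := hC i hi1 him _ hml.2
    have hstr : ustst (κ i) = eta i * κ i - ustar (eta i) := hC i hi1 him _ hmr.2
    have e1 : p * κ (i - 1) + q = eta i * κ (i - 1) - ustar (eta i) := by
      rw [← hpq _ hml, hhk (i - 1) (by omega), hstl]
    have e2 : p * κ i + q = eta i * κ i - ustar (eta i) := by
      rw [← hpq _ hmr, hhk i him, hstr]
    have hlt : κ (i - 1) < κ i := kstrict i him (i - 1) (by omega)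
    have h3 : (p - eta i) * (κ i - κ (i - 1)) = 0 := by ring_nf; linarith [e1, e2]
    have hp : p = eta i := by
      rcases mul_eq_zero.mp h3 with h4 | h4
      · linarith
      · exfalso; linarith
    have hq : q = -(ustar (eta i)) := by
      rw [hp] at e1; linarith
    rw [hpq x ⟨hx, hxl, hxr⟩, hC i hi1 him x ⟨hxl, hxr⟩, hp, hq]
    ring
end
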